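/- arXiv:1901.02323 — 6 statements merged into one kernel-verified Lean document; each statement's English description precedes it below -/
import Mathlib

section
/- Let (W,S) be a Coxeter system, r,t ∈ S with 3 ≤ m := order(rt) < ∞. The right star operation sending w = w̃·x̂k (the element of the right ⟨r,t⟩-string at position k, i.e. w̃ times the alternating word starting with x ∈ {r,t} of length k, for 1 ≤ k < m) to w̃·x̂(m−k), is a well-defined involution on the set D_R(r,t) = {w ∈ W : exactly one of r,t lies in the right descent set of w}. -/
/-- The alternating word `x y x y ⋯` of length `k`, starting with `x`. -/
def altWord {W : Type*} [Group W] : W → W → ℕ → W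
  | _, _, 0 => 1
  | x, y, k + 1 => x * altWord y x k

namespace AW
variable {W : Type*} [Group W]

theorem altWord_add_two (x y : W) (n : ℕ) :
    altWord x y (n + 2) = (x * y) * altWord x y n := by
  show x * altWord y x (n+1) = _
  show x * (y * altWord x y n) = _
  group

theorem altWord_two_mul (x y : W) (c : ℕ) : altWord x y (2 * c) = (x * y) ^ c := by
  induction c with
  | zero => simp [altWord]
  | succ c ih =>
    have : 2 * (c + 1) = (2 * c) + 2 := by ring
    rw [this, altWord_add_two, ih, pow_succ']

theorem altWord_two_mul_add_one (x y : W) (c : ℕ) :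
    altWord x y (2 * c + 1) = (x * y) ^ c * x := by
  induction c with
  | zero => simp [altWord]
  | succ c ih =>
    have : 2 * (c + 1) + 1 = (2 * c + 1) + 2 := by ring
    rw [this, altWord_add_two, ih, pow_succ', mul_assoc]
    group

theorem altWord_succ_right (x y : W) (n : ℕ) :
    altWord x y (n + 1) = altWord x y n * (if Even n then x else y) := by
  rcases Nat.even_or_odd n with ⟨c, hc⟩ | ⟨c, hc⟩
  · subst hc
    rw [if_pos (by exact ⟨c, by ring⟩)]
    rw [show c + c = 2 * c by ring, altWord_two_mul, altWord_two_mul_add_one]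
  · subst hc
    rw [if_neg (by simp [Nat.even_add_one, parity_simps])]
    rw [show 2 * c + 1 + 1 = 2 * (c + 1) by ring, altWord_two_mul, altWord_two_mul_add_one,
      pow_succ]
    group

section Dihedral
set_option linter.unusedSectionVars false

variable {x y : W} (hx : x * x = 1) (hy : y * y = 1)

include hx in
theorem inv_invol : x⁻¹ = x := inv_eq_of_mul_eq_one_right hx

include hx hy in
theorem yx_eq_inv : y * x = (x * y)⁻¹ := by
  rw [mul_inv_rev, inv_invol hx, inv_invol hy]

include hx hy in
theorem conj_pow_invol (n : ℕ) : x * (x * y) ^ n * x = ((x * y) ^ n)⁻¹ := by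
  have h1 : x * (x * y) * x⁻¹ = (x * y)⁻¹ := by
    rw [inv_invol hx]
    calc x * (x * y) * x = (x * x) * (y * x) := by group
      _ = y * x := by rw [hx, one_mul]
      _ = (x * y)⁻¹ := yx_eq_inv hx hy
  calc x * (x * y) ^ n * x = x * (x * y) ^ n * x⁻¹ := by rw [inv_invol hx]
    _ = (x * (x * y) * x⁻¹) ^ n := by rw [conj_pow]
    _ = ((x * y) ^ n)⁻¹ := by rw [h1, inv_pow]

include hx hy in
private theorem case_ee {c d : ℕ}
    (h : (x * y) ^ (c + d + 1) = (x * y) ^ c * ((x * y) ^ d)⁻¹) :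
    (x * y) ^ (2 * d + 1) = 1 := by
  have e1 : (x * y) ^ c * (x * y) ^ (2 * d + 1) = (x * y) ^ (c + d + 1) * (x * y) ^ d := by
    group
  rw [h] at e1
  have e2 : (x * y) ^ c * ((x * y) ^ d)⁻¹ * (x * y) ^ d = (x * y) ^ c * 1 := by group
  exact mul_left_cancel (e1.trans e2)

include hx hy in
private theorem case_eo {c d : ℕ}
    (h : (x * y) ^ (c + d + 1) * x = (x * y) ^ c * (((x * y) ^ d)⁻¹ * y)) :
    (x * y) ^ (2 * d + 2) = 1 := by
  have e1 : (x * y) ^ d * (((x * y) ^ c)⁻¹ * ((x * y) ^ (c + d + 1) * x))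
      = (x * y) ^ (2 * d + 1) * x := by group
  have e2 : (x * y) ^ d * (((x * y) ^ c)⁻¹ * ((x * y) ^ c * (((x * y) ^ d)⁻¹ * y))) = y := by
    group
  have h1 : (x * y) ^ (2 * d + 1) * x = y := by rw [← e1, h, e2]
  have h3 : (x * y) ^ (2 * d + 1) = y * x := by
    have h4 := congrArg (fun z => z * x) h1
    rw [mul_assoc, hx, mul_one] at h4
    exact h4
  rw [show 2 * d + 2 = (2 * d + 1) + 1 by ring, pow_succ, h3, yx_eq_inv hx hy, inv_mul_cancel]

include hx hy in
private theorem case_oe {c d : ℕ}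
    (h : (x * y) ^ (c + d + 1) * x = ((x * y) ^ c * x) * (x * y) ^ d) :
    (x * y) ^ (2 * d + 1) = 1 := by
  have e1 : ((x * y) ^ c)⁻¹ * ((x * y) ^ (c + d + 1) * x) = (x * y) ^ (d + 1) * x := by group
  have e2 : ((x * y) ^ c)⁻¹ * (((x * y) ^ c * x) * (x * y) ^ d) = x * (x * y) ^ d := by group
  have h1 : (x * y) ^ (d + 1) * x = x * (x * y) ^ d := by rw [← e1, h, e2]
  have h2 : (x * y) ^ (d + 1) * x * x = x * (x * y) ^ d * x := by rw [h1]
  rw [mul_assoc, hx, mul_one, conj_pow_invol hx hy] at h2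
  rw [show 2 * d + 1 = (d + 1) + d by ring, pow_add, h2, inv_mul_cancel]

include hx hy in
private theorem case_oo {c d : ℕ}
    (h : (x * y) ^ (c + d + 2) = ((x * y) ^ c * x) * ((x * y) ^ d * x)) :
    (x * y) ^ (2 * d + 2) = 1 := by
  have e0 : ((x * y) ^ c * x) * ((x * y) ^ d * x) = (x * y) ^ c * (x * (x * y) ^ d * x) := by
    group
  rw [e0, conj_pow_invol hx hy] at h
  have e1 : (x * y) ^ c * (x * y) ^ (2 * d + 2) = (x * y) ^ (c + d + 2) * (x * y) ^ d := by
    group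
  rw [h] at e1
  have e2 : (x * y) ^ c * ((x * y) ^ d)⁻¹ * (x * y) ^ d = (x * y) ^ c * 1 := by group
  exact mul_left_cancel (e1.trans e2)

include hx hy in
theorem dihedral_del {m : ℕ} (hm3 : 3 ≤ m) (hord : orderOf (x * y) = m)
    (p n : ℕ) (hK : p + n + 2 ≤ m)
    (h : altWord x y (p + n + 2) =
      altWord x y p * (if Even p then altWord y x n else altWord x y n)) : False := by
  have key : ∃ e, e = n + 1 ∧ (x * y) ^ e = 1 := by
    rcases Nat.even_or_odd p with ⟨c, hc⟩ | ⟨c, hc⟩ <;>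
      rcases Nat.even_or_odd n with ⟨d, hd⟩ | ⟨d, hd⟩
    · rw [if_pos (by exact ⟨c, hc⟩)] at h
      rw [show p + n + 2 = 2 * (c + d + 1) by omega, show p = 2 * c by omega,
        show n = 2 * d by omega, altWord_two_mul, altWord_two_mul, altWord_two_mul,
        yx_eq_inv hx hy, inv_pow] at h
      exact ⟨2 * d + 1, by omega, case_ee hx hy h⟩
    · rw [if_pos (by exact ⟨c, hc⟩)] at h
      rw [show p + n + 2 = 2 * (c + d + 1) + 1 by omega, show p = 2 * c by omega,
        show n = 2 * d + 1 by omega, altWord_two_mul, altWord_two_mul_add_one,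
        altWord_two_mul_add_one, yx_eq_inv hx hy, inv_pow] at h
      exact ⟨2 * d + 2, by omega, case_eo hx hy h⟩
    · rw [if_neg (by rw [hc]; exact Nat.not_even_iff_odd.mpr ⟨c, by omega⟩)] at h
      rw [show p + n + 2 = 2 * (c + d + 1) + 1 by omega, show p = 2 * c + 1 by omega,
        show n = 2 * d by omega, altWord_two_mul, altWord_two_mul_add_one,
        altWord_two_mul_add_one] at h
      exact ⟨2 * d + 1, by omega, case_oe hx hy h⟩
    · rw [if_neg (by rw [hc]; exact Nat.not_even_iff_odd.mpr ⟨c, by omega⟩)] at h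
      rw [show p + n + 2 = 2 * (c + d + 2) by omega, show p = 2 * c + 1 by omega,
        show n = 2 * d + 1 by omega, altWord_two_mul, altWord_two_mul_add_one,
        altWord_two_mul_add_one] at h
      exact ⟨2 * d + 2, by omega, case_oo hx hy h⟩
  obtain ⟨e, he, hkey⟩ := key
  have hdvd : m ∣ e := hord ▸ orderOf_dvd_of_pow_eq_one hkey
  have := Nat.le_of_dvd (by omega) hdvd
  omega

include hx hy in
theorem alt_ne {m k : ℕ} (hm3 : 3 ≤ m) (hord : orderOf (x * y) = m)
    (h1 : 1 ≤ k) (h2 : k < m) : altWord x y k ≠ altWord y x k := by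
  intro h
  have key : (x * y) ^ k = 1 := by
    rcases Nat.even_or_odd k with ⟨c, hc⟩ | ⟨c, hc⟩
    · rw [show k = 2 * c by omega, altWord_two_mul, altWord_two_mul, yx_eq_inv hx hy,
        inv_pow] at h
      rw [show k = c + c by omega, pow_add]
      nth_rewrite 2 [h]
      exact mul_inv_cancel _
    · rw [show k = 2 * c + 1 by omega, altWord_two_mul_add_one, altWord_two_mul_add_one,
        yx_eq_inv hx hy, inv_pow] at h
      have e1 : (x * y) ^ c * ((x * y) ^ c * x) = (x * y) ^ (2 * c) * x := by group
      have e2 : (x * y) ^ c * (((x * y) ^ c)⁻¹ * y) = y := by group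
      have h1' : (x * y) ^ (2 * c) * x = y := by rw [← e1, h, e2]
      have h3 : (x * y) ^ (2 * c) = y * x := by
        have h4 := congrArg (fun z => z * x) h1'
        rw [mul_assoc, hx, mul_one] at h4
        exact h4
      rw [show k = 2 * c + 1 by omega, pow_succ, h3, yx_eq_inv hx hy, inv_mul_cancel]
  have hdvd : m ∣ k := hord ▸ orderOf_dvd_of_pow_eq_one key
  have := Nat.le_of_dvd (by omega) hdvd
  omega

end Dihedral

section Exchange
open CoxeterSystem List Multiplicative

variable {W : Type*} [Group W] [DecidableEq W]

private def conjAut (w : W) : Multiplicative (W → ZMod 2) ≃* Multiplicative (W → ZMod 2) :=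
  AddEquiv.toMultiplicative
    { toFun := fun f t => f (w⁻¹ * t * w)
      invFun := fun f t => f (w * t * w⁻¹)
      left_inv := fun f => funext fun t => congrArg f (by group)
      right_inv := fun f => funext fun t => congrArg f (by group)
      map_add' := fun f g => rfl }

private theorem conjAut_apply (w : W) (F : W → ZMod 2) :
    conjAut w (ofAdd F) = ofAdd (fun t => F (w⁻¹ * t * w)) := rfl

private def phiHom : W →* MulAut (Multiplicative (W → ZMod 2)) where
  toFun w := conjAut w
  map_one' := by
    apply MulEquiv.ext; intro f
    show ofAdd (fun t => toAdd f (1⁻¹ * t * 1)) = f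
    simp
  map_mul' u v := by
    apply MulEquiv.ext; intro f
    show ofAdd (fun t => toAdd f ((u * v)⁻¹ * t * (u * v)))
      = ofAdd (fun t => toAdd f (v⁻¹ * (u⁻¹ * t * u) * v))
    congr 1
    funext t
    congr 1
    group

private theorem phiHom_apply (w : W) : (phiHom w : MulAut (Multiplicative (W → ZMod 2)))
    = conjAut w := rfl

private def ind (u : W) : Multiplicative (W → ZMod 2) :=
  ofAdd (fun t => if t = u then (1 : ZMod 2) else 0)

private theorem conjAut_ind (w u : W) : (conjAut w) (ind u) = ind (w * u * w⁻¹) := by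
  unfold ind
  rw [conjAut_apply]
  congr 1
  funext t
  have h : (w⁻¹ * t * w = u) ↔ (t = w * u * w⁻¹) := by
    constructor
    · intro h; rw [← h]; group
    · intro h; rw [h]; group
  rw [if_congr h rfl rfl]

variable {B : Type*} {M : CoxeterMatrix B} (cs : CoxeterSystem M W)

private def fG (b : B) : (Multiplicative (W → ZMod 2)) ⋊[phiHom] W :=
  ⟨ind (cs.simple b), cs.simple b⟩

private theorem simple_mul_inv_p (a b : B) :
    cs.simple a * (cs.simple a * cs.simple b)⁻¹
      = (cs.simple a * cs.simple b) * cs.simple a := by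
  rw [mul_inv_rev, cs.inv_simple, cs.inv_simple, ← mul_assoc]

private theorem conj_p_pow {p x' : W} (hpx : x' * p⁻¹ = p * x') (c : ℕ) :
    p * (p ^ c * x') * p⁻¹ = p ^ (c + 2) * x' := by
  rw [show p * (p ^ c * x') * p⁻¹ = p ^ (c + 1) * (x' * p⁻¹) by group, hpx]
  group

private theorem conj_mem_iff {p x' t : W} (hpx : x' * p⁻¹ = p * x') (c : ℕ) :
    (p⁻¹ * t * p = p ^ c * x') ↔ (t = p ^ (c + 2) * x') := by
  have E := conj_p_pow hpx c
  constructor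
  · intro h; rw [← E, ← h]; group
  · intro h; rw [h, ← E]; group

private theorem fG_pow (a b : B) (n : ℕ) :
    ((fG cs a * fG cs b) ^ n).left =
      ofAdd (fun t => ∑ c ∈ Finset.range (2 * n),
        if t = (cs.simple a * cs.simple b) ^ c * cs.simple a then (1 : ZMod 2) else 0) ∧
    ((fG cs a * fG cs b) ^ n).right = (cs.simple a * cs.simple b) ^ n := by
  induction n with
  | zero =>
    constructor
    · show (1 : Multiplicative (W → ZMod 2)) = _
      simp
      rfl
    · rw [pow_zero, SemidirectProduct.one_right, pow_zero]
  | succ n ih =>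
    obtain ⟨ihl, ihr⟩ := ih
    have E : ∀ c : ℕ, (cs.simple a * cs.simple b) * ((cs.simple a * cs.simple b) ^ c
        * cs.simple a) * (cs.simple a * cs.simple b)⁻¹
        = (cs.simple a * cs.simple b) ^ (c + 2) * cs.simple a :=
      fun c => conj_p_pow (simple_mul_inv_p cs a b) c
    constructor
    · rw [pow_succ', SemidirectProduct.mul_left, SemidirectProduct.mul_left, ihl,
        SemidirectProduct.mul_right]
      show ind (cs.simple a) * (phiHom (cs.simple a)) (ind (cs.simple b))
          * (phiHom (cs.simple a * cs.simple b))
            (ofAdd (fun t => ∑ c ∈ Finset.range (2 * n),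
              if t = (cs.simple a * cs.simple b) ^ c * cs.simple a then (1 : ZMod 2) else 0))
          = _
      rw [phiHom_apply, phiHom_apply, conjAut_ind, conjAut_apply]
      have key : (fun t => ∑ c ∈ Finset.range (2 * n),
          if (cs.simple a * cs.simple b)⁻¹ * t * (cs.simple a * cs.simple b)
            = (cs.simple a * cs.simple b) ^ c * cs.simple a then (1:ZMod 2) else 0)
          = fun t => ∑ c ∈ Finset.range (2 * n),
            if t = (cs.simple a * cs.simple b) ^ (c + 2) * cs.simple a then (1:ZMod 2)
              else 0 := by
        funext t
        apply Finset.sum_congr rfl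
        intro c _
        rw [if_congr (conj_mem_iff (simple_mul_inv_p cs a b) c) rfl rfl]
      rw [key]
      unfold ind
      rw [← ofAdd_add, ← ofAdd_add]
      congr 1
      funext t
      show (if t = cs.simple a then (1:ZMod 2) else 0)
          + (if t = cs.simple a * cs.simple b * (cs.simple a)⁻¹ then (1:ZMod 2) else 0)
          + (∑ c ∈ Finset.range (2 * n),
            if t = (cs.simple a * cs.simple b) ^ (c + 2) * cs.simple a then (1:ZMod 2) else 0)
          = ∑ c ∈ Finset.range (2 * (n + 1)),
            if t = (cs.simple a * cs.simple b) ^ c * cs.simple a then (1:ZMod 2) else 0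
      rw [show 2 * (n + 1) = (2 * n + 1) + 1 by ring, Finset.sum_range_succ',
        Finset.sum_range_succ']
      have e0 : (if t = (cs.simple a * cs.simple b) ^ 0 * cs.simple a then (1:ZMod 2) else 0)
          = (if t = cs.simple a then (1:ZMod 2) else 0) := by
        rw [pow_zero, one_mul]
      have e1 : (if t = (cs.simple a * cs.simple b) ^ (0+1) * cs.simple a then (1:ZMod 2) else 0)
          = (if t = cs.simple a * cs.simple b * (cs.simple a)⁻¹ then (1:ZMod 2) else 0) := by
        rw [pow_one, cs.inv_simple, mul_assoc]
      rw [e0, e1]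
      ring
    · rw [pow_succ', SemidirectProduct.mul_right, SemidirectProduct.mul_right, ihr, pow_succ']
      rfl

private theorem fG_liftable : M.IsLiftable (fG cs) := by
  intro a b
  apply SemidirectProduct.ext
  · rw [(fG_pow cs a b (M a b)).1, SemidirectProduct.one_left]
    have hp : (cs.simple a * cs.simple b) ^ (M a b) = 1 := cs.simple_mul_simple_pow a b
    rw [show (1 : Multiplicative (W → ZMod 2)) = ofAdd 0 from rfl]
    congr 1
    funext t
    rw [two_mul, Finset.sum_range_add]
    have he : ∀ c : ℕ, (if t = (cs.simple a * cs.simple b) ^ (M a b + c) * cs.simple a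
        then (1:ZMod 2) else 0)
        = if t = (cs.simple a * cs.simple b) ^ c * cs.simple a then (1:ZMod 2) else 0 := by
      intro c
      rw [pow_add, hp, one_mul]
    rw [Finset.sum_congr rfl (fun c _ => he c)]
    show _ = (0 : W → ZMod 2) t
    show (∑ c ∈ Finset.range (M a b),
        if t = (cs.simple a * cs.simple b) ^ c * cs.simple a then (1:ZMod 2) else 0)
      + (∑ c ∈ Finset.range (M a b),
        if t = (cs.simple a * cs.simple b) ^ c * cs.simple a then (1:ZMod 2) else 0)
      = (0 : W → ZMod 2) t
    have hz : ∀ z : ZMod 2, z + z = 0 := by decide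
    rw [hz]
    rfl
  · rw [(fG_pow cs a b (M a b)).2, SemidirectProduct.one_right, cs.simple_mul_simple_pow]

private noncomputable def bigPhi :
    W →* (Multiplicative (W → ZMod 2)) ⋊[phiHom] W :=
  cs.lift ⟨fG cs, fG_liftable cs⟩

private theorem bigPhi_left (ω : List B) :
    (bigPhi cs (cs.wordProd ω)).left
      = ofAdd (fun t => (((cs.leftInvSeq ω).count t : ℕ) : ZMod 2)) := by
  induction ω with
  | nil =>
    rw [cs.wordProd_nil, map_one]
    have h0 : (fun t : W => (((List.count t ([] : List W)) : ℕ) : ZMod 2)) = 0 := by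
      funext t; simp
    rw [show cs.leftInvSeq ([] : List B) = [] from rfl, h0]
    rfl
  | cons b ω ih =>
    rw [cs.wordProd_cons, map_mul]
    have hb : bigPhi cs (cs.simple b) = fG cs b := cs.lift_apply_simple (fG_liftable cs) b
    rw [hb, SemidirectProduct.mul_left, ih]
    show ind (cs.simple b) * (phiHom (cs.simple b))
        (ofAdd fun t => (((cs.leftInvSeq ω).count t : ℕ) : ZMod 2)) = _
    rw [phiHom_apply, conjAut_apply]
    unfold ind
    rw [← ofAdd_add]
    congr 1
    funext t
    show (if t = cs.simple b then (1:ZMod 2) else 0)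
        + (((cs.leftInvSeq ω).count ((cs.simple b)⁻¹ * t * cs.simple b) : ℕ) : ZMod 2)
      = ((cs.leftInvSeq (b :: ω)).count t : ℕ)
    have hinj : Function.Injective (⇑(MulAut.conj (cs.simple b))) :=
      (MulAut.conj (cs.simple b)).injective
    have hc := List.count_map_of_injective (cs.leftInvSeq ω) (⇑(MulAut.conj (cs.simple b)))
      hinj ((cs.simple b)⁻¹ * t * cs.simple b)
    have heq : (MulAut.conj (cs.simple b)) ((cs.simple b)⁻¹ * t * cs.simple b) = t := by
      show cs.simple b * ((cs.simple b)⁻¹ * t * cs.simple b) * (cs.simple b)⁻¹ = t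
      group
    rw [heq] at hc
    have hlis : cs.leftInvSeq (b :: ω)
        = cs.simple b :: (cs.leftInvSeq ω).map (⇑(MulAut.conj (cs.simple b))) := rfl
    rw [hlis, List.count_cons, ← hc]
    push_cast
    rcases eq_or_ne t (cs.simple b) with h | h
    · simp [h, add_comm]
    · simp [h, Ne.symm h]

theorem mem_leftInvSeq_of_isLeftDescent {ω : List B} (hred : cs.IsReduced ω) {i : B}
    (hd : cs.IsLeftDescent (cs.wordProd ω) i) : cs.simple i ∈ cs.leftInvSeq ω := by
  obtain ⟨ω', hred', hw'⟩ := cs.exists_reduced_word' (cs.simple i * cs.wordProd ω)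
  have hπ : cs.wordProd (i :: ω') = cs.wordProd ω := by
    rw [cs.wordProd_cons, ← hw', ← mul_assoc, cs.simple_mul_simple_self, one_mul]
  have hlen : cs.length (cs.simple i * cs.wordProd ω) + 1 = cs.length (cs.wordProd ω) :=
    cs.isLeftDescent_iff.mp hd
  have hred2 : cs.IsReduced (i :: ω') := by
    show cs.length (cs.wordProd (i :: ω')) = (i :: ω').length
    rw [hπ, List.length_cons, ← hred', ← hw', hlen]
  have hmem1 : cs.simple i ∈ cs.leftInvSeq (i :: ω') := by
    rw [show cs.leftInvSeq (i :: ω')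
      = cs.simple i :: (cs.leftInvSeq ω').map (⇑(MulAut.conj (cs.simple i))) from rfl]
    exact List.mem_cons_self
  have hcount1 : (cs.leftInvSeq (i :: ω')).count (cs.simple i) = 1 :=
    List.count_eq_one_of_mem (hred2.nodup_leftInvSeq) hmem1
  have hΦ : (bigPhi cs (cs.wordProd (i :: ω'))).left = (bigPhi cs (cs.wordProd ω)).left := by
    rw [hπ]
  rw [bigPhi_left, bigPhi_left] at hΦ
  have hfun := congrFun (congrArg Multiplicative.toAdd hΦ) (cs.simple i)
  simp only [toAdd_ofAdd] at hfun
  rw [hcount1] at hfun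
  by_contra hmem
  rw [List.count_eq_zero_of_not_mem hmem] at hfun
  simp at hfun

theorem right_exchange {ω : List B} (hred : cs.IsReduced ω) {i : B}
    (hd : cs.IsRightDescent (cs.wordProd ω) i) :
    ∃ l, l < ω.length ∧ cs.wordProd ω * cs.simple i = cs.wordProd (ω.eraseIdx l) := by
  have hinv : cs.IsLeftDescent (cs.wordProd ω.reverse) i := by
    show cs.length (cs.simple i * cs.wordProd ω.reverse) < cs.length (cs.wordProd ω.reverse)
    rw [cs.wordProd_reverse]
    have h2 : cs.simple i * (cs.wordProd ω)⁻¹ = (cs.wordProd ω * cs.simple i)⁻¹ := by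
      rw [mul_inv_rev, cs.inv_simple]
    rw [h2, cs.length_inv, cs.length_inv]
    exact hd
  have hredrev : cs.IsReduced ω.reverse := (cs.isReduced_reverse_iff ω).mpr hred
  have hmem : cs.simple i ∈ cs.leftInvSeq ω.reverse :=
    mem_leftInvSeq_of_isLeftDescent cs hredrev hinv
  rw [cs.leftInvSeq_reverse] at hmem
  have hmem2 : cs.simple i ∈ cs.rightInvSeq ω := List.mem_reverse.mp hmem
  obtain ⟨l, hl, hval⟩ := List.mem_iff_getElem.mp hmem2
  have hlen : l < ω.length := by
    rw [← cs.length_rightInvSeq ω]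
    exact hl
  refine ⟨l, hlen, ?_⟩
  have hw := cs.wordProd_mul_getD_rightInvSeq ω l
  rw [List.getD_eq_getElem _ _ hl, hval] at hw
  exact hw

end Exchange

section Lists
open CoxeterSystem List

variable {B : Type*}

def altList (a b : B) : ℕ → List B
  | 0 => []
  | k + 1 => a :: altList b a k

theorem length_altList (a b : B) (k : ℕ) : (altList a b k).length = k := by
  induction k generalizing a b with
  | zero => rfl
  | succ k ih => simpa [altList] using ih b a

theorem take_altList (a b : B) (p k : ℕ) (h : p ≤ k) :
    (altList a b k).take p = altList a b p := by
  induction p generalizing a b k with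
  | zero => rfl
  | succ p ih =>
    cases k with
    | zero => omega
    | succ k =>
      show (a :: altList b a k).take (p + 1) = a :: altList b a p
      rw [List.take_succ_cons, ih b a k (by omega)]

theorem drop_altList (a b : B) (p k : ℕ) :
    (altList a b k).drop p = if Even p then altList a b (k - p) else altList b a (k - p) := by
  induction p generalizing a b k with
  | zero => simp
  | succ p ih =>
    cases k with
    | zero =>
      show (([] : List B)).drop (p+1) = _
      simp [altList]
    | succ k =>
      show (altList b a k).drop p = _
      rw [ih b a k, Nat.succ_sub_succ]
      rcases Nat.even_or_odd p with he | ho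
      · rw [if_pos he, if_neg (by simp [Nat.even_add_one, he])]
      · rw [if_neg (by simpa using ho), if_pos (by simp [Nat.even_add_one]; simpa using ho)]

theorem eraseIdx_append_left (l₁ l₂ : List B) (n : ℕ) (h : n < l₁.length) :
    (l₁ ++ l₂).eraseIdx n = l₁.eraseIdx n ++ l₂ := by
  induction l₁ generalizing n with
  | nil => simp at h
  | cons a l₁ ih =>
    cases n with
    | zero => rfl
    | succ n =>
      show ((a :: (l₁ ++ l₂)).eraseIdx (n+1)) = _
      rw [List.eraseIdx_cons_succ, ih n (by simpa using h)]
      rfl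

theorem eraseIdx_append_right (l₁ l₂ : List B) (n : ℕ) (h : l₁.length ≤ n) :
    (l₁ ++ l₂).eraseIdx n = l₁ ++ l₂.eraseIdx (n - l₁.length) := by
  induction l₁ generalizing n with
  | nil => simp
  | cons a l₁ ih =>
    cases n with
    | zero => simp at h
    | succ n =>
      show ((a :: (l₁ ++ l₂)).eraseIdx (n+1)) = _
      rw [List.eraseIdx_cons_succ, ih n (by simpa using h)]
      simp

variable {W : Type*} [Group W] {M : CoxeterMatrix B} (cs : CoxeterSystem M W)

theorem wordProd_altList (a b : B) (k : ℕ) :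
    cs.wordProd (altList a b k) = altWord (cs.simple a) (cs.simple b) k := by
  induction k generalizing a b with
  | zero => exact cs.wordProd_nil
  | succ k ih =>
    show cs.wordProd (a :: altList b a k) = cs.simple a * altWord (cs.simple b) (cs.simple a) k
    rw [cs.wordProd_cons, ih b a]

theorem altWord_mem_closure {H : Subgroup W} {x y : W} (hx : x ∈ H) (hy : y ∈ H) (k : ℕ) :
    altWord x y k ∈ H := by
  induction k generalizing x y with
  | zero => exact H.one_mem
  | succ k ih => exact H.mul_mem hx (ih hy hx)

end Lists

section LemmaL
open CoxeterSystem List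

variable {B W : Type*} [Group W] {M : CoxeterMatrix B} (cs : CoxeterSystem M W)
variable (i j : B)

/-- convenient abbreviations -/
private def pairIdx (a b : B) : Prop := (a, b) = (i, j) ∨ (a, b) = (j, i)

private theorem orderOf_pair {a b : B} (hab : pairIdx i j a b) :
    orderOf (cs.simple a * cs.simple b) = orderOf (cs.simple i * cs.simple j) := by
  rcases hab with h | h <;> rw [Prod.mk.injEq] at h <;> obtain ⟨h1, h2⟩ := h <;> rw [h1, h2]
  · rw [show cs.simple j * cs.simple i = (cs.simple i * cs.simple j)⁻¹ from
      yx_eq_inv (cs.simple_mul_simple_self i) (cs.simple_mul_simple_self j), orderOf_inv]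

private theorem simple_pair_mem_closure {a b : B} (hab : pairIdx i j a b) :
    cs.simple a ∈ Subgroup.closure {cs.simple i, cs.simple j}
    ∧ cs.simple b ∈ Subgroup.closure {cs.simple i, cs.simple j} := by
  constructor <;> (apply Subgroup.subset_closure) <;>
    rcases hab with h | h <;> rw [Prod.mk.injEq] at h <;> obtain ⟨h1, h2⟩ := h <;>
      simp [h1, h2]

theorem lemL (hm3 : 3 ≤ orderOf (cs.simple i * cs.simple j)) (k : ℕ)
    (hk : k ≤ orderOf (cs.simple i * cs.simple j)) (wt : W) (a b : B)
    (hab : pairIdx i j a b)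
    (hmin : ∀ d ∈ Subgroup.closure {cs.simple i, cs.simple j},
      cs.length wt ≤ cs.length (wt * d)) :
    cs.length (wt * altWord (cs.simple a) (cs.simple b) k) = cs.length wt + k := by
  classical
  induction k with
  | zero => simp [altWord]
  | succ k ih =>
    have hk' : k ≤ orderOf (cs.simple i * cs.simple j) := by omega
    have ihl := ih hk'
    set u := altWord (cs.simple a) (cs.simple b) k with hu
    -- the letter to append
    set c : B := if Even k then a else b with hc
    have hsc : cs.simple c = if Even k then cs.simple a else cs.simple b := by
      rw [hc]; split <;> rfl
    have hnext : wt * u * cs.simple c = wt * altWord (cs.simple a) (cs.simple b) (k + 1) := by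
      rw [mul_assoc, hu, hsc, ← altWord_succ_right (cs.simple a) (cs.simple b) k]
    by_contra hne
    have hne2 := cs.length_mul_simple_ne (wt * u) c
    rcases cs.length_mul_simple (wt * u) c with hgt | hlt
    · apply hne
      rw [← hnext, hgt, ihl]
      omega
    -- descent case: derive contradiction via exchange
    have hdesc : cs.IsRightDescent (wt * u) c := by
      show cs.length (wt * u * cs.simple c) < cs.length (wt * u)
      omega
    obtain ⟨ωt, hlen_t, hwt⟩ := cs.exists_reduced_word wt
    set ω : List B := ωt ++ altList a b k with hω
    have hπ : cs.wordProd ω = wt * u := by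
      rw [hω, cs.wordProd_append, wordProd_altList, ← hwt, hu]
    have hred : cs.IsReduced ω := by
      show cs.length (cs.wordProd ω) = ω.length
      rw [hπ, ihl, List.length_append, length_altList, hwt,
        show cs.length (cs.wordProd ωt) = ωt.length from hlen_t]
    have hdesc' : cs.IsRightDescent (cs.wordProd ω) c := by rw [hπ]; exact hdesc
    obtain ⟨l, hl, hexch⟩ := right_exchange cs hred hdesc'
    rw [hπ] at hexch
    by_cases hcase : l < ωt.length
    · -- erase in the wt part
      rw [hω, eraseIdx_append_left ωt _ l hcase, cs.wordProd_append, wordProd_altList,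
        ← hu] at hexch
      -- wt * d = π (ωt.eraseIdx l) with d ∈ H
      have hd : u * cs.simple c * u⁻¹ ∈ Subgroup.closure {cs.simple i, cs.simple j} := by
        have hmem := simple_pair_mem_closure cs i j hab
        have hcmem : cs.simple c ∈ Subgroup.closure {cs.simple i, cs.simple j} := by
          rw [hc]; split
          · exact hmem.1
          · exact hmem.2
        have humem : u ∈ Subgroup.closure {cs.simple i, cs.simple j} :=
          altWord_mem_closure hmem.1 hmem.2 k
        exact Subgroup.mul_mem _ (Subgroup.mul_mem _ humem hcmem) (Subgroup.inv_mem _ humem)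
      have hwd : wt * (u * cs.simple c * u⁻¹) = cs.wordProd (ωt.eraseIdx l) := by
        rw [show wt * (u * cs.simple c * u⁻¹) = (wt * u * cs.simple c) * u⁻¹ by group, hexch]
        rw [mul_inv_eq_iff_eq_mul]
      have h1 := hmin _ hd
      rw [hwd] at h1
      have h2 := cs.length_wordProd_le (ωt.eraseIdx l)
      have h3 := List.length_eraseIdx_add_one hcase
      have h4 : cs.length wt = ωt.length := by rw [hwt]; exact hlen_t
      omega
    · -- erase in the alternating part
      push_neg at hcase
      set p : ℕ := l - ωt.length with hp
      have hpk : p < k := by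
        have : ω.length = ωt.length + k := by
          rw [hω, List.length_append, length_altList]
        omega
      rw [hω, eraseIdx_append_right ωt _ l hcase, cs.wordProd_append, ← hwt, ← hp] at hexch
      have hcancel : u * cs.simple c = cs.wordProd ((altList a b k).eraseIdx p) := by
        apply mul_left_cancel (a := wt)
        rw [← mul_assoc, hexch]
      rw [List.eraseIdx_eq_take_drop_succ, cs.wordProd_append,
        take_altList a b p k (by omega), drop_altList, wordProd_altList,
        apply_ite cs.wordProd, wordProd_altList, wordProd_altList] at hcancel
      have hEodd : ∀ (X Y : W), (if Even (p + 1) then X else Y)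
          = if Even p then Y else X := by
        intro X Y
        rcases Nat.even_or_odd p with he | ho
        · rw [if_neg (by simp [Nat.even_add_one, he]), if_pos he]
        · rw [if_pos (by simp [Nat.even_add_one, Nat.not_even_iff_odd.mpr ho]),
            if_neg (Nat.not_even_iff_odd.mpr ho)]
      rw [hEodd] at hcancel
      -- convert to altWord equation and apply dihedral_del
      set n : ℕ := k - 1 - p with hn
      have hkn : k - (p + 1) = n := by omega
      have hfinal : altWord (cs.simple a) (cs.simple b) (p + n + 2)
          = altWord (cs.simple a) (cs.simple b) p *
            (if Even p then altWord (cs.simple b) (cs.simple a) n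
              else altWord (cs.simple a) (cs.simple b) n) := by
        rw [show p + n + 2 = k + 1 by omega]
        rw [hu, hsc, ← altWord_succ_right, hkn] at hcancel
        exact hcancel
      exact dihedral_del (cs.simple_mul_simple_self a) (cs.simple_mul_simple_self b)
        (m := orderOf (cs.simple i * cs.simple j)) hm3
        (orderOf_pair cs i j hab)
        p n (by omega) hfinal

end LemmaL

section Closure

variable {W : Type*} [Group W]

theorem conj_zpow_invol {x y : W} (hx : x * x = 1) (hy : y * y = 1) (a : ℤ) :
    x * (x * y) ^ a * x = (x * y) ^ (-a) := by
  have h1 : x * (x * y) * x⁻¹ = (x * y)⁻¹ := by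
    rw [inv_invol hx]
    calc x * (x * y) * x = (x * x) * (y * x) := by group
      _ = y * x := by rw [hx, one_mul]
      _ = (x * y)⁻¹ := yx_eq_inv hx hy
  calc x * (x * y) ^ a * x = x * (x * y) ^ a * x⁻¹ := by rw [inv_invol hx]
    _ = (x * (x * y) * x⁻¹) ^ a := by rw [conj_zpow]
    _ = ((x * y)⁻¹) ^ a := by rw [h1]
    _ = (x * y) ^ (-a) := by rw [inv_zpow, zpow_neg]

theorem invol_mul_zpow {x y : W} (hx : x * x = 1) (hy : y * y = 1) (a : ℤ) :
    x * (x * y) ^ a = (x * y) ^ (-a) * x := by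
  have h := conj_zpow_invol hx hy a
  have h2 := congrArg (fun z => z * x) h
  rw [mul_assoc, mul_assoc, hx, mul_one] at h2
  exact h2

theorem closure_dihedral {r t : W} (hr : r * r = 1) (ht : t * t = 1) {d : W}
    (hd : d ∈ Subgroup.closure {r, t}) :
    ∃ a : ℤ, d = (r * t) ^ a ∨ d = (r * t) ^ a * r := by
  induction hd using Subgroup.closure_induction with
  | mem z hz =>
    rcases hz with hz | hz
    · exact ⟨0, Or.inr (by rw [hz, zpow_zero, one_mul])⟩
    · refine ⟨-1, Or.inr ?_⟩
      rw [hz, zpow_neg_one, mul_inv_rev, inv_invol hr, inv_invol ht, mul_assoc, hr, mul_one]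
  | one => exact ⟨0, Or.inl (zpow_zero _).symm⟩
  | mul x y hx' hy' ihx ihy =>
    obtain ⟨α, hα⟩ := ihx
    obtain ⟨β, hβ⟩ := ihy
    rcases hα with hα | hα <;> rcases hβ with hβ | hβ
    · exact ⟨α + β, Or.inl (by rw [hα, hβ, zpow_add])⟩
    · exact ⟨α + β, Or.inr (by rw [hα, hβ, ← mul_assoc, ← zpow_add])⟩
    · refine ⟨α - β, Or.inr ?_⟩
      rw [hα, hβ, mul_assoc, invol_mul_zpow hr ht, ← mul_assoc, ← zpow_add]
      rw [sub_eq_add_neg]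
    · refine ⟨α - β, Or.inl ?_⟩
      rw [hα, hβ, show (r * t) ^ α * r * ((r * t) ^ β * r)
          = (r * t) ^ α * (r * (r * t) ^ β) * r by group, invol_mul_zpow hr ht,
        show (r * t) ^ α * ((r * t) ^ (-β) * r) * r = (r * t) ^ α * (r * t) ^ (-β) * (r * r)
          by group, hr, mul_one, ← zpow_add]
      rw [sub_eq_add_neg]
  | inv x hx' ihx =>
    obtain ⟨α, hα⟩ := ihx
    rcases hα with hα | hα
    · exact ⟨-α, Or.inl (by rw [hα, ← zpow_neg])⟩
    · refine ⟨α, Or.inr ?_⟩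
      rw [hα, mul_inv_rev, inv_invol hr, ← zpow_neg, invol_mul_zpow hr ht, neg_neg]

end Closure

section ElemH
open CoxeterSystem

variable {B W : Type*} [Group W] {M : CoxeterMatrix B} (cs : CoxeterSystem M W) (i j : B)

private theorem zpow_reduce {q : W} {m : ℕ} (hm : 0 < m) (hord : orderOf q = m) (z : ℤ) :
    q ^ z = q ^ ((z % (m : ℤ)).toNat) ∧ (z % (m : ℤ)).toNat < m := by
  have h0 : (m : ℤ) ≠ 0 := by exact_mod_cast hm.ne'
  have hnonneg : 0 ≤ z % (m : ℤ) := Int.emod_nonneg z h0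
  have hlt : z % (m : ℤ) < m := Int.emod_lt_of_pos z (by exact_mod_cast hm)
  constructor
  · have hsplit : z = (m : ℤ) * (z / m) + z % m := (Int.mul_ediv_add_emod z m).symm
    calc q ^ z = q ^ ((m : ℤ) * (z / m) + z % m) := by rw [← hsplit]
      _ = (q ^ (m : ℤ)) ^ (z / m) * q ^ (z % (m : ℤ)) := by rw [zpow_add, zpow_mul]
      _ = q ^ (z % (m : ℤ)) := by
          have hqm : q ^ m = 1 := by rw [← hord]; exact pow_orderOf_eq_one q
          rw [show q ^ (m : ℤ) = q ^ m from zpow_natCast q m, hqm, one_zpow, one_mul]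
      _ = q ^ ((z % (m : ℤ)).toNat) := by
          rw [← zpow_natCast, Int.toNat_of_nonneg hnonneg]
  · omega

theorem elemH (hm3 : 3 ≤ orderOf (cs.simple i * cs.simple j)) (d : W)
    (hd : d ∈ Subgroup.closure {cs.simple i, cs.simple j}) :
    ∃ (a b : B) (n : ℕ), pairIdx i j a b ∧ n ≤ orderOf (cs.simple i * cs.simple j)
      ∧ d = altWord (cs.simple a) (cs.simple b) n := by
  set r := cs.simple i with hri
  set t := cs.simple j with htj
  have hr : r * r = 1 := cs.simple_mul_simple_self i
  have ht : t * t = 1 := cs.simple_mul_simple_self j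
  set m := orderOf (r * t) with hm
  have hm0 : 0 < m := by omega
  have hqm : (r * t) ^ m = 1 := pow_orderOf_eq_one (r * t)
  obtain ⟨z, hz⟩ := closure_dihedral hr ht hd
  set n₀ := ((z % (m : ℤ)).toNat) with hn₀
  obtain ⟨hzred, hn₀lt⟩ := zpow_reduce hm0 rfl z
  have hzn : (r * t) ^ z = (r * t) ^ n₀ := hzred
  rcases hz with hz | hz
  · -- d = (r t)^z
    by_cases h2 : 2 * n₀ ≤ m
    · exact ⟨i, j, 2 * n₀, Or.inl rfl, h2,
        by rw [altWord_two_mul, hz, hzn]⟩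
    · refine ⟨j, i, 2 * (m - n₀), Or.inr rfl, by omega, ?_⟩
      rw [altWord_two_mul, yx_eq_inv hr ht, inv_pow, hz, hzn]
      rw [eq_inv_iff_mul_eq_one, ← pow_add, show n₀ + (m - n₀) = m by omega, hqm]
  · -- d = (r t)^z * r
    by_cases h2 : 2 * n₀ + 1 ≤ m
    · exact ⟨i, j, 2 * n₀ + 1, Or.inl rfl, h2,
        by rw [altWord_two_mul_add_one, hz, hzn]⟩
    · refine ⟨j, i, 2 * (m - n₀ - 1) + 1, Or.inr rfl, by omega, ?_⟩
      rw [altWord_two_mul_add_one, yx_eq_inv hr ht, inv_pow, hz, hzn]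
      set c := m - n₀ - 1 with hc
      have e1 : (r * t) ^ c * (((r * t) ^ c)⁻¹ * t) = t := by group
      have e2 : (r * t) ^ c * ((r * t) ^ n₀ * r) = t := by
        rw [← mul_assoc, ← pow_add, show c + n₀ = m - 1 by omega]
        have hq1 : (r * t) ^ (m - 1) = t * r := by
          have hstep : (r * t) ^ (m - 1) * (r * t) = 1 := by
            rw [← pow_succ, show m - 1 + 1 = m by omega, hqm]
          rw [eq_inv_of_mul_eq_one_left hstep, yx_eq_inv hr ht]
        rw [hq1, mul_assoc, hr, mul_one]
      exact (mul_left_cancel (e1.trans e2.symm)).symm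

end ElemH

section Final
open CoxeterSystem

variable {B W : Type*} [Group W] {M : CoxeterMatrix B} (cs : CoxeterSystem M W) (i j : B)

theorem descentD (hij : cs.simple i ≠ cs.simple j)
    (hm3 : 3 ≤ orderOf (cs.simple i * cs.simple j)) (wt : W) (a b : B) (k : ℕ)
    (hab : pairIdx i j a b) (hk1 : 1 ≤ k) (hk2 : k < orderOf (cs.simple i * cs.simple j))
    (hmin : ∀ d ∈ Subgroup.closure {cs.simple i, cs.simple j},
      cs.length wt ≤ cs.length (wt * d)) :
    Xor' (cs.IsRightDescent (wt * altWord (cs.simple a) (cs.simple b) k) i)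
      (cs.IsRightDescent (wt * altWord (cs.simple a) (cs.simple b) k) j) := by
  obtain ⟨k', rfl⟩ : ∃ k'', k = k'' + 1 := ⟨k - 1, by omega⟩
  have hw := lemL cs i j hm3 (k' + 1) (by omega) wt a b hab hmin
  have hwm := lemL cs i j hm3 k' (by omega) wt a b hab hmin
  have hwp := lemL cs i j hm3 (k' + 2) (by omega) wt a b hab hmin
  have haa : cs.simple a * cs.simple a = 1 := cs.simple_mul_simple_self a
  have hbb : cs.simple b * cs.simple b = 1 := cs.simple_mul_simple_self b
  -- descent letter and ascent letter
  have hsucc1 := altWord_succ_right (cs.simple a) (cs.simple b) k'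
  have hsucc2 := altWord_succ_right (cs.simple a) (cs.simple b) (k' + 1)
  by_cases hE : Even k'
  · -- descent at a, ascent at b
    rw [if_pos hE] at hsucc1
    rw [if_neg (by simp [Nat.even_add_one, hE])] at hsucc2
    have hdesc : cs.IsRightDescent (wt * altWord (cs.simple a) (cs.simple b) (k' + 1)) a := by
      show cs.length _ < cs.length _
      rw [hsucc1, show wt * (altWord (cs.simple a) (cs.simple b) k' * cs.simple a)
          * cs.simple a = wt * altWord (cs.simple a) (cs.simple b) k'
          * (cs.simple a * cs.simple a) by group, haa, mul_one, ← hsucc1, hw, hwm]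
      omega
    have hasc : ¬ cs.IsRightDescent (wt * altWord (cs.simple a) (cs.simple b) (k' + 1)) b := by
      show ¬ (cs.length _ < cs.length _)
      rw [show wt * altWord (cs.simple a) (cs.simple b) (k' + 1) * cs.simple b
          = wt * (altWord (cs.simple a) (cs.simple b) (k' + 1) * cs.simple b) by group,
        ← hsucc2, hw, hwp]
      omega
    rcases hab with h | h <;> rw [Prod.mk.injEq] at h <;> obtain ⟨h1, h2⟩ := h
    · exact Or.inl ⟨h1 ▸ hdesc, h2 ▸ hasc⟩
    · exact Or.inr ⟨h1 ▸ hdesc, h2 ▸ hasc⟩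
  · -- descent at b, ascent at a
    rw [if_neg hE] at hsucc1
    rw [if_pos (by simp [Nat.even_add_one, hE])] at hsucc2
    have hdesc : cs.IsRightDescent (wt * altWord (cs.simple a) (cs.simple b) (k' + 1)) b := by
      show cs.length _ < cs.length _
      rw [hsucc1, show wt * (altWord (cs.simple a) (cs.simple b) k' * cs.simple b)
          * cs.simple b = wt * altWord (cs.simple a) (cs.simple b) k'
          * (cs.simple b * cs.simple b) by group, hbb, mul_one, ← hsucc1, hw, hwm]
      omega
    have hasc : ¬ cs.IsRightDescent (wt * altWord (cs.simple a) (cs.simple b) (k' + 1)) a := by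
      show ¬ (cs.length _ < cs.length _)
      rw [show wt * altWord (cs.simple a) (cs.simple b) (k' + 1) * cs.simple a
          = wt * (altWord (cs.simple a) (cs.simple b) (k' + 1) * cs.simple a) by group,
        ← hsucc2, hw, hwp]
      omega
    rcases hab with h | h <;> rw [Prod.mk.injEq] at h <;> obtain ⟨h1, h2⟩ := h
    · exact Or.inr ⟨h2 ▸ hdesc, h1 ▸ hasc⟩
    · exact Or.inl ⟨h2 ▸ hdesc, h1 ▸ hasc⟩

theorem uniqD (hij : cs.simple i ≠ cs.simple j)
    (hm3 : 3 ≤ orderOf (cs.simple i * cs.simple j)) (wt wt' : W) (a b a' b' : B) (k k' : ℕ)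
    (hab : pairIdx i j a b) (hab' : pairIdx i j a' b')
    (hk1 : 1 ≤ k) (hk2 : k < orderOf (cs.simple i * cs.simple j))
    (hk1' : 1 ≤ k') (hk2' : k' < orderOf (cs.simple i * cs.simple j))
    (hmin : ∀ d ∈ Subgroup.closure {cs.simple i, cs.simple j},
      cs.length wt ≤ cs.length (wt * d))
    (hmin' : ∀ d ∈ Subgroup.closure {cs.simple i, cs.simple j},
      cs.length wt' ≤ cs.length (wt' * d))
    (heq : wt * altWord (cs.simple a) (cs.simple b) k
      = wt' * altWord (cs.simple a') (cs.simple b') k') :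
    wt = wt' ∧ a = a' ∧ b = b' ∧ k = k' := by
  have hmem := simple_pair_mem_closure cs i j hab
  have hmem' := simple_pair_mem_closure cs i j hab'
  have hu : altWord (cs.simple a) (cs.simple b) k ∈ Subgroup.closure {cs.simple i, cs.simple j} :=
    altWord_mem_closure hmem.1 hmem.2 k
  have hu' : altWord (cs.simple a') (cs.simple b') k'
      ∈ Subgroup.closure {cs.simple i, cs.simple j} :=
    altWord_mem_closure hmem'.1 hmem'.2 k'
  have hdmem : altWord (cs.simple a) (cs.simple b) k
      * (altWord (cs.simple a') (cs.simple b') k')⁻¹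
      ∈ Subgroup.closure {cs.simple i, cs.simple j} :=
    Subgroup.mul_mem _ hu (Subgroup.inv_mem _ hu')
  have hdmem' : altWord (cs.simple a') (cs.simple b') k'
      * (altWord (cs.simple a) (cs.simple b) k)⁻¹
      ∈ Subgroup.closure {cs.simple i, cs.simple j} :=
    Subgroup.mul_mem _ hu' (Subgroup.inv_mem _ hu)
  have hwt' : wt' = wt * (altWord (cs.simple a) (cs.simple b) k
      * (altWord (cs.simple a') (cs.simple b') k')⁻¹) := by
    rw [← mul_assoc, heq]; group
  have hwt2 : wt = wt' * (altWord (cs.simple a') (cs.simple b') k'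
      * (altWord (cs.simple a) (cs.simple b) k)⁻¹) := by
    rw [← mul_assoc, ← heq]; group
  obtain ⟨a₃, b₃, n, hp3, hn3, hd3⟩ := elemH cs i j hm3 _ hdmem
  obtain ⟨a₄, b₄, n', hp4, hn4, hd4⟩ := elemH cs i j hm3 _ hdmem'
  have l1 : cs.length wt' = cs.length wt + n := by
    calc cs.length wt' = cs.length (wt * altWord (cs.simple a₃) (cs.simple b₃) n) := by
          rw [← hd3, ← hwt']
      _ = cs.length wt + n := lemL cs i j hm3 n hn3 wt a₃ b₃ hp3 hmin
  have l2 : cs.length wt = cs.length wt' + n' := by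
    calc cs.length wt = cs.length (wt' * altWord (cs.simple a₄) (cs.simple b₄) n') := by
          rw [← hd4, ← hwt2]
      _ = cs.length wt' + n' := lemL cs i j hm3 n' hn4 wt' a₄ b₄ hp4 hmin'
  have hn0 : n = 0 := by omega
  rw [hn0, show altWord (cs.simple a₃) (cs.simple b₃) 0 = 1 from rfl] at hd3
  have hwteq : wt = wt' := by rw [hwt', hd3, mul_one]
  have hueq : altWord (cs.simple a) (cs.simple b) k
      = altWord (cs.simple a') (cs.simple b') k' := by
    apply mul_left_cancel (a := wt)
    rw [heq, hwteq]
  have min1 : ∀ d ∈ Subgroup.closure {cs.simple i, cs.simple j},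
      cs.length (1 : W) ≤ cs.length (1 * d) := by
    intro d _
    simp
  have lk : cs.length (altWord (cs.simple a) (cs.simple b) k) = k := by
    have := lemL cs i j hm3 k (by omega) 1 a b hab min1
    simpa using this
  have lk' : cs.length (altWord (cs.simple a') (cs.simple b') k') = k' := by
    have := lemL cs i j hm3 k' (by omega) 1 a' b' hab' min1
    simpa using this
  have hkk : k = k' := by rw [← lk, ← lk', hueq]
  refine ⟨hwteq, ?_, ?_, hkk⟩ <;>
  · rcases hab with h | h <;> rcases hab' with h' | h' <;>
      rw [Prod.mk.injEq] at h h' <;> obtain ⟨h1, h2⟩ := h <;> obtain ⟨h1', h2'⟩ := h'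
    · simp [h1, h2, h1', h2']
    · exfalso
      rw [h1, h2, h1', h2', ← hkk] at hueq
      exact alt_ne (cs.simple_mul_simple_self i) (cs.simple_mul_simple_self j) hm3 rfl
        hk1 hk2 hueq
    · exfalso
      rw [h1, h2, h1', h2', ← hkk] at hueq
      exact alt_ne (cs.simple_mul_simple_self j) (cs.simple_mul_simple_self i) hm3
        (orderOf_pair cs i j (Or.inr rfl)) hk1 hk2 hueq
    · simp [h1, h2, h1', h2']

end Final

end AW


/-- For distinct simple reflections `r = s i`, `t = s j` with
`3 ≤ m := order(rt) < ∞`, the right star operation sending `w̃ ⬝ x̂k ↦ w̃ ⬝ x̂(m-k)`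
(for `1 ≤ k < m`) is a well-defined involution on
`D_R(r,t) = {w : exactly one of r, t is a right descent of w}`. -/
theorem stmt_3 {B W : Type*} [Group W] {M : CoxeterMatrix B} (cs : CoxeterSystem M W)
    (i j : B) (hij : cs.simple i ≠ cs.simple j)
    (hm : 3 ≤ orderOf (cs.simple i * cs.simple j)) :
    ∃ star : W → W,
      (∀ w : W, Xor' (cs.IsRightDescent w i) (cs.IsRightDescent w j) →
        Xor' (cs.IsRightDescent (star w) i) (cs.IsRightDescent (star w) j)) ∧
      (∀ w : W, Xor' (cs.IsRightDescent w i) (cs.IsRightDescent w j) →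
        star (star w) = w) ∧
      (∀ (wt x y : W) (k : ℕ),
        ((x, y) = (cs.simple i, cs.simple j) ∨ (x, y) = (cs.simple j, cs.simple i)) →
        1 ≤ k → k < orderOf (cs.simple i * cs.simple j) →
        (∀ d ∈ Subgroup.closure {cs.simple i, cs.simple j},
          cs.length wt ≤ cs.length (wt * d)) →
        star (wt * altWord x y k) =
          wt * altWord x y (orderOf (cs.simple i * cs.simple j) - k)) := by
  classical
  let Q : W → B → B → ℕ → Prop := fun wt a b k =>
    AW.pairIdx i j a b ∧ 1 ≤ k ∧ k < orderOf (cs.simple i * cs.simple j) ∧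
      (∀ d ∈ Subgroup.closure {cs.simple i, cs.simple j}, cs.length wt ≤ cs.length (wt * d))
  let Dec : W → Prop := fun w => ∃ q : W × B × B × ℕ, Q q.1 q.2.1 q.2.2.1 q.2.2.2 ∧
      w = q.1 * altWord (cs.simple q.2.1) (cs.simple q.2.2.1) q.2.2.2
  have hU : ∀ {wt wt' : W} {a b a' b' : B} {k k' : ℕ}, Q wt a b k → Q wt' a' b' k' →
      wt * altWord (cs.simple a) (cs.simple b) k
        = wt' * altWord (cs.simple a') (cs.simple b') k' →
      wt = wt' ∧ a = a' ∧ b = b' ∧ k = k' := by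
    intro wt wt' a b a' b' k k' hQ hQ' heq
    exact AW.uniqD cs i j hij hm wt wt' a b a' b' k k' hQ.1 hQ'.1 hQ.2.1 hQ.2.2.1
      hQ'.2.1 hQ'.2.2.1 hQ.2.2.2 hQ'.2.2.2 heq
  refine ⟨fun w => if h : Dec w then h.choose.1 *
      altWord (cs.simple h.choose.2.1) (cs.simple h.choose.2.2.1) (orderOf (cs.simple i * cs.simple j) - h.choose.2.2.2)
    else w, ?_, ?_, ?_⟩
  · -- preserves D_R
    intro w hw
    dsimp only
    by_cases h : Dec w
    · rw [dif_pos h]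
      obtain ⟨⟨hp, hk1, hk2, hmin⟩, hweq⟩ := h.choose_spec
      exact AW.descentD cs i j hij hm _ _ _ _ hp (by omega) (by omega) hmin
    · rw [dif_neg h]
      exact hw
  · -- involution
    intro w _
    dsimp only
    by_cases h : Dec w
    · rw [dif_pos h]
      obtain ⟨⟨hp, hk1, hk2, hmin⟩, hweq⟩ := h.choose_spec
      have hDecv : Dec (h.choose.1 * altWord (cs.simple h.choose.2.1)
          (cs.simple h.choose.2.2.1) (orderOf (cs.simple i * cs.simple j) - h.choose.2.2.2)) :=
        ⟨⟨h.choose.1, h.choose.2.1, h.choose.2.2.1, orderOf (cs.simple i * cs.simple j) - h.choose.2.2.2⟩,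
          ⟨hp, by show 1 ≤ orderOf (cs.simple i * cs.simple j) - h.choose.2.2.2; omega,
            by show orderOf (cs.simple i * cs.simple j) - h.choose.2.2.2
                < orderOf (cs.simple i * cs.simple j); omega, hmin⟩, rfl⟩
      rw [dif_pos hDecv]
      obtain ⟨hQ2, hveq⟩ := hDecv.choose_spec
      obtain ⟨e1, e2, e3, e4⟩ := hU hQ2 ⟨hp, by omega, by omega, hmin⟩ hveq.symm
      rw [e1, e2, e3, e4, show orderOf (cs.simple i * cs.simple j) - (orderOf (cs.simple i * cs.simple j) - h.choose.2.2.2) = h.choose.2.2.2 by omega, ← hweq]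
    · rw [dif_neg h, dif_neg h]
  · -- the star formula
    intro wt x y k hpair hk1 hk2 hmin
    dsimp only
    rcases hpair with hp | hp <;> rw [Prod.mk.injEq] at hp <;> obtain ⟨rfl, rfl⟩ := hp
    · have hQ : Q wt i j k := ⟨Or.inl rfl, hk1, hk2, hmin⟩
      have hDec : Dec (wt * altWord (cs.simple i) (cs.simple j) k) := ⟨⟨wt, i, j, k⟩, hQ, rfl⟩
      rw [dif_pos hDec]
      obtain ⟨hQ2, heq2⟩ := hDec.choose_spec
      obtain ⟨e1, e2, e3, e4⟩ := hU hQ2 hQ heq2.symm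
      rw [e1, e2, e3, e4]
    · have hQ : Q wt j i k := ⟨Or.inr rfl, hk1, hk2, hmin⟩
      have hDec : Dec (wt * altWord (cs.simple j) (cs.simple i) k) := ⟨⟨wt, j, i, k⟩, hQ, rfl⟩
      rw [dif_pos hDec]
      obtain ⟨hQ2, heq2⟩ := hDec.choose_spec
      obtain ⟨e1, e2, e3, e4⟩ := hU hQ2 hQ heq2.symm
      rw [e1, e2, e3, e4]
end

section
/- Let (W,S) be a Coxeter system, I ⊆ S, x ∈ W^I a minimal coset representative and y ∈ W_I with fixed reduced expressions x̲ of x and y̲ of y. Then prepending l(x) ones gives a bijection between subexpressions (01-sequences) of y̲ expressing an element z ∈ W_I and subexpressions of the concatenation x̲y̲ expressing xz, and this bijection preserves the defect. -/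
open List CoxeterSystem
open scoped Classical

noncomputable section

variable {B W : Type*} [Group W] {M : CoxeterMatrix B} (cs : CoxeterSystem M W)

local prefix:100 "s" => cs.simple
local prefix:100 "π" => cs.wordProd
local prefix:100 "ℓ" => cs.length
local prefix:100 "ris" => cs.rightInvSeq

/-- The building block of the parity representation. -/
def mu (i : B) : Function.End (W × ZMod 2) :=
  fun p => (s i * p.1 * s i, p.2 + if p.1 = s i then 1 else 0)

theorem mu_prod_apply (ω : List B) (t : W) (ε : ZMod 2) :
    ((ω.map (mu cs)).prod) (t, ε) =
      (π ω * t * (π ω)⁻¹, ε + (((ris ω).count t : ℕ) : ZMod 2)) := by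
  induction ω with
  | nil => simp [rightInvSeq]; rfl
  | cons a ω ih =>
    rw [map_cons, prod_cons]
    show (mu cs a) ((ω.map (mu cs)).prod (t, ε)) = _
    rw [ih]
    have hcond : (π ω * t * (π ω)⁻¹ = s a) ↔ ((π ω)⁻¹ * s a * π ω = t) := by
      constructor <;> intro h <;> rw [← h] <;> group
    rw [Prod.ext_iff]
    simp only [mu, rightInvSeq, wordProd_cons, count_cons]
    constructor
    · rw [mul_inv_rev, cs.inv_simple]; group
    · by_cases h : π ω * t * (π ω)⁻¹ = s a
      · have h2 : (π ω)⁻¹ * s a * π ω = t := hcond.mp h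
        simp only [h, h2, if_true, beq_self_eq_true, if_pos rfl]
        push_cast
        ring
      · have h2 : ¬((π ω)⁻¹ * s a * π ω = t) := fun hh => h (hcond.mpr hh)
        simp [h, h2]

theorem simple_mul_pow (i i' : B) (k : ℕ) :
    s i' * (s i * s i') ^ k = ((s i * s i')⁻¹) ^ k * s i' := by
  induction k with
  | zero => simp
  | succ k ih =>
    have key : s i' * (s i * s i') = (s i * s i')⁻¹ * s i' := by
      rw [mul_inv_rev, cs.inv_simple, cs.inv_simple]; group
    calc s i' * (s i * s i') ^ (k+1)
        = (s i' * (s i * s i') ^ k) * (s i * s i') := by rw [pow_succ, mul_assoc]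
      _ = ((s i * s i')⁻¹) ^ k * (s i' * (s i * s i')) := by rw [ih, mul_assoc]
      _ = ((s i * s i')⁻¹) ^ (k+1) * s i' := by rw [key, ← mul_assoc, ← pow_succ]

/-- The `n`-th entry (from the right) of the right inversion sequence of an alternating word. -/
def ee (i i' : B) (n : ℕ) : W :=
  (π (alternatingWord i i' n))⁻¹ * s (if Even n then i' else i) * π (alternatingWord i i' n)

theorem ee_eq (i i' : B) (n : ℕ) :
    ee cs i i' n = ((s i * s i')⁻¹) ^ n * s i' := by
  unfold ee
  rw [cs.prod_alternatingWord_eq_mul_pow]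
  rcases Nat.even_or_odd n with he | ho
  · obtain ⟨k, hk⟩ := he
    have hn : n = 2 * k := by omega
    subst hn
    have h2 : (2 * k) / 2 = k := by omega
    rw [if_pos (by exact ⟨k, by omega⟩), if_pos (by exact ⟨k, by omega⟩), h2, one_mul]
    calc ((s i * s i') ^ k)⁻¹ * s i' * (s i * s i') ^ k
        = ((s i * s i')⁻¹) ^ k * (s i' * (s i * s i') ^ k) := by
          rw [inv_pow, mul_assoc]
      _ = ((s i * s i')⁻¹) ^ k * (((s i * s i')⁻¹) ^ k * s i') := by
          rw [simple_mul_pow cs i i' k]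
      _ = ((s i * s i')⁻¹) ^ (2 * k) * s i' := by
          rw [← mul_assoc, ← pow_add, show k + k = 2 * k by omega]
  · obtain ⟨k, hk⟩ := ho
    subst hk
    have h2 : (2 * k + 1) / 2 = k := by omega
    have hne : ¬ Even (2 * k + 1) := by simp [Nat.even_add_one, Nat.even_mul]
    rw [if_neg hne, if_neg hne, h2]
    have key : s i' * s i * s i' = (s i * s i')⁻¹ * s i' := by
      rw [mul_inv_rev, cs.inv_simple, cs.inv_simple]
    calc (s i' * (s i * s i') ^ k)⁻¹ * s i * (s i' * (s i * s i') ^ k)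
        = ((s i * s i')⁻¹) ^ k * ((s i' * s i * s i') * (s i * s i') ^ k) := by
          rw [mul_inv_rev, cs.inv_simple, inv_pow]; group
      _ = ((s i * s i')⁻¹) ^ k * ((s i * s i')⁻¹ * (s i' * (s i * s i') ^ k)) := by
          rw [key]; group
      _ = ((s i * s i')⁻¹) ^ k * ((s i * s i')⁻¹ * (((s i * s i')⁻¹) ^ k * s i')) := by
          rw [simple_mul_pow cs i i' k]
      _ = ((s i * s i')⁻¹) ^ (2 * k + 1) * s i' := by
          rw [show 2 * k + 1 = k + 1 + k by omega, pow_add, pow_succ]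
          simp [mul_assoc]

theorem rightInvSeq_cons' (a : B) (ω : List B) :
    ris (a :: ω) = ((π ω)⁻¹ * s a * π ω) :: ris ω := rfl

theorem ris_alternatingWord (i i' : B) (N : ℕ) :
    ris (alternatingWord i i' N) = ((List.range N).reverse).map (ee cs i i') := by
  induction N with
  | zero => simp [alternatingWord]
  | succ N ih =>
    rw [alternatingWord_succ', rightInvSeq_cons', ih, List.range_succ]
    simp [ee]

theorem count_ris_alternatingWord_even (i i' : B) (t : W) :
    ∃ c : ℕ, (ris (alternatingWord i i' (2 * M i i'))).count t = 2 * c := by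
  rw [ris_alternatingWord]
  set m := M i i'
  set f : ℕ → W := ee cs i i' with hf
  have hper : ∀ n : ℕ, f (m + n) = f n := by
    intro n
    rw [hf, ee_eq, ee_eq, pow_add, inv_pow, cs.simple_mul_simple_pow i i']
    simp
  refine ⟨(List.count t ((List.range m).map f)), ?_⟩
  rw [List.map_reverse, List.count_reverse]
  rw [show 2 * m = m + m by omega, List.range_add, List.map_append, List.count_append]
  rw [List.map_map]
  have hfg : (f ∘ fun x => m + x) = f := funext fun n => hper n
  rw [hfg]
  omega

theorem prod_mu_alternating (i i' : B) (m : ℕ) :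
    ((alternatingWord i i' (2 * m)).map (mu cs)).prod = (mu cs i * mu cs i') ^ m := by
  induction m with
  | zero => simp [alternatingWord]
  | succ m ih =>
    have h1 : alternatingWord i i' (2 * (m + 1)) = i :: i' :: alternatingWord i i' (2 * m) := by
      rw [show 2 * (m + 1) = (2 * m + 1) + 1 by omega, alternatingWord_succ',
        alternatingWord_succ']
      have : ¬ Even (2 * m + 1) := by simp [Nat.even_add_one, Nat.even_mul]
      rw [if_neg this, if_pos (by exact ⟨m, by omega⟩)]
    rw [h1, List.map_cons, List.map_cons, List.prod_cons, List.prod_cons, ih,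
      pow_succ']
    rw [← mul_assoc]

theorem mu_liftable : CoxeterMatrix.IsLiftable M (mu cs) := by
  intro i i'
  rw [← prod_mu_alternating]
  funext p
  obtain ⟨t, ε⟩ := p
  rw [mu_prod_apply]
  have h1 : π (alternatingWord i i' (2 * M i i')) = 1 := by
    rw [cs.prod_alternatingWord_eq_mul_pow, if_pos (by exact ⟨M i i', by omega⟩)]
    rw [show 2 * M i i' / 2 = M i i' by omega, one_mul, cs.simple_mul_simple_pow]
  obtain ⟨c, hc⟩ := count_ris_alternatingWord_even cs i i' t
  rw [h1, hc]
  have h2 : ((2 * c : ℕ) : ZMod 2) = 0 := by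
    push_cast
    rw [show (2 : ZMod 2) = 0 from rfl]
    ring
  rw [h2, add_zero]
  simp only [one_mul, inv_one, mul_one]
  rfl

/-- The parity representation of the Coxeter group. -/
def Phi : W →* Function.End (W × ZMod 2) := cs.lift ⟨mu cs, mu_liftable cs⟩

theorem Phi_wordProd (ω : List B) : Phi cs (π ω) = ((ω.map (mu cs)).prod) := by
  unfold CoxeterSystem.wordProd
  rw [map_list_prod, List.map_map]
  congr 1
  apply List.map_congr_left
  intro b _
  exact cs.lift_apply_simple (mu_liftable cs) b

/-- The count of a given element in the right inversion sequence, mod 2, only depends on the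
product of the word. -/
theorem count_ris_parity {ω₁ ω₂ : List B} (h : π ω₁ = π ω₂) (t : W) :
    (((ris ω₁).count t : ℕ) : ZMod 2) = ((ris ω₂).count t : ℕ) := by
  have h0 := congrArg (fun f : Function.End (W × ZMod 2) => f (t, 0))
    ((Phi_wordProd cs ω₁).symm.trans (h ▸ Phi_wordProd cs ω₂))
  simp only [mu_prod_apply] at h0
  have h1 := congrArg Prod.snd h0
  simpa using h1

theorem ris_append (α β : List B) :
    ris (α ++ β) = (ris α).map (fun x => (π β)⁻¹ * x * π β) ++ ris β := by
  induction α with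
  | nil => simp
  | cons a α ih =>
    rw [List.cons_append, rightInvSeq_cons', rightInvSeq_cons', ih, List.map_cons,
      List.cons_append]
    congr 1
    rw [wordProd_append, mul_inv_rev]
    group

theorem lis_eq_map (ω : List B) :
    cs.leftInvSeq ω = (ris ω).map (fun x => π ω * x * (π ω)⁻¹) := by
  induction ω with
  | nil => simp
  | cons a ω ih =>
    rw [rightInvSeq_cons', List.map_cons]
    show CoxeterSystem.leftInvSeq cs (a :: ω) = _
    rw [CoxeterSystem.leftInvSeq, ih, List.map_map]
    congr 1
    · rw [wordProd_cons, mul_inv_rev, cs.inv_simple]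
      group
      rw [cs.simple_mul_simple_self, one_mul]
    · apply List.map_congr_left
      intro x _
      simp only [Function.comp_apply, MulAut.conj_apply, wordProd_cons, mul_inv_rev,
        cs.inv_simple]
      group

theorem count_map_conj (g t : W) (l : List W) :
    (l.map (fun x => g * x * g⁻¹)).count t = l.count (g⁻¹ * t * g) := by
  have hinj : Function.Injective (fun x : W => g * x * g⁻¹) := by
    intro a b hab
    simpa using mul_left_cancel (mul_right_cancel hab)
  have : t = (fun x : W => g * x * g⁻¹) (g⁻¹ * t * g) := by group
  rw [this, List.count_map_of_injective _ _ hinj]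
  congr 1
  group

theorem count_ris_self_odd {t : W} (ht : cs.IsReflection t) (ω : List B) (hω : π ω = t) :
    (((ris ω).count t : ℕ) : ZMod 2) = 1 := by
  obtain ⟨v, i, hvi⟩ := ht
  obtain ⟨ωv, hωv⟩ := cs.wordProd_surjective v
  have hγ : π (ωv ++ ([i] ++ ωv.reverse)) = t := by
    rw [wordProd_append, wordProd_append, wordProd_reverse, wordProd_singleton, hωv, hvi,
      mul_assoc]
  rw [count_ris_parity cs (hω.trans hγ.symm) t]
  rw [ris_append, ris_append, List.count_append, List.count_append]
  have hβ : π ([i] ++ ωv.reverse) = s i * v⁻¹ := by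
    rw [wordProd_append, wordProd_reverse, wordProd_singleton, hωv]
  have c1 : ((ris ωv).map (fun x => (π ([i] ++ ωv.reverse))⁻¹ * x * π ([i] ++ ωv.reverse))).count t
      = (ris ωv).count (s i) := by
    rw [hβ]
    have : (fun x => (s i * v⁻¹)⁻¹ * x * (s i * v⁻¹)) =
        (fun x => (v * s i) * x * (v * s i)⁻¹) := by
      funext x
      rw [mul_inv_rev, mul_inv_rev, cs.inv_simple, inv_inv]
    rw [this, count_map_conj]
    congr 1
    rw [hvi, mul_inv_rev, cs.inv_simple]
    group
    rw [cs.simple_mul_simple_self, one_mul]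
  have c2 : (ris [i]).map (fun x => (π ωv.reverse)⁻¹ * x * π ωv.reverse) = [t] := by
    rw [cs.rightInvSeq_singleton, List.map_singleton, wordProd_reverse, hωv, inv_inv, hvi]
  have c3 : (ris ωv.reverse).count t = (ris ωv).count (s i) := by
    rw [cs.rightInvSeq_reverse, List.count_reverse, lis_eq_map, hωv, count_map_conj]
    congr 1
    rw [hvi]
    group
  rw [c1, c2, c3]
  have : ([t].count t) = 1 := by simp
  rw [this]
  push_cast
  have hca : ∀ a : ZMod 2, a + (1 + a) = 1 := by decide
  exact hca _

theorem count_ris_inversion_odd {w t : W} (ht : cs.IsReflection t)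
    (hlt : ℓ (w * t) < ℓ w) (ω : List B) (hω : π ω = w) :
    (((ris ω).count t : ℕ) : ZMod 2) = 1 := by
  obtain ⟨γ, hγred, hγ⟩ := cs.exists_reduced_word' (w * t)
  obtain ⟨ρ, hρ⟩ := cs.wordProd_surjective t
  have hδ : π (γ ++ ρ) = w := by
    rw [wordProd_append, ← hγ, hρ, mul_assoc, ht.mul_self, mul_one]
  rw [count_ris_parity cs (hω.trans hδ.symm) t]
  rw [ris_append, List.count_append]
  have c1 : ((ris γ).map (fun x => (π ρ)⁻¹ * x * π ρ)).count t = (ris γ).count t := by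
    rw [hρ]
    have : (fun x => t⁻¹ * x * t) = (fun x => t⁻¹ * x * (t⁻¹)⁻¹) := by
      funext x; rw [inv_inv]
    rw [this, count_map_conj]
    congr 1
    group
  rw [c1]
  push_cast
  rw [count_ris_self_odd cs ht ρ hρ]
  have hne : (((ris γ).count t : ℕ) : ZMod 2) = 0 := by
    by_contra hcon
    have h01 : ∀ a : ZMod 2, a = 0 ∨ a = 1 := by decide
    rcases h01 (((ris γ).count t : ℕ) : ZMod 2) with h | h
    · exact hcon h
    · have hpos : (ris γ).count t ≠ 0 := by
        intro h0
        rw [h0] at h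
        simp at h
      have hmem : t ∈ ris γ := by
        rw [← List.count_pos_iff]
        omega
      have := cs.isRightInversion_of_mem_rightInvSeq hγred hmem
      have h2 : ℓ (π γ * t) < ℓ (π γ) := this.2
      rw [← hγ] at h2
      rw [mul_assoc, ht.mul_self, mul_one] at h2
      omega
  rw [hne]
  ring

/-- The strong exchange property. -/
theorem exchange_erase {ω : List B} (hred : cs.IsReduced ω) {t : W} (ht : cs.IsReflection t)
    (hlt : ℓ (π ω * t) < ℓ (π ω)) : ∃ j < ω.length, π ω * t = π (ω.eraseIdx j) := by
  have hodd := count_ris_inversion_odd cs ht hlt ω rfl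
  have hmem : t ∈ ris ω := by
    rw [← List.count_pos_iff]
    by_contra hcon
    have : (ris ω).count t = 0 := by omega
    rw [this] at hodd
    simp at hodd
  obtain ⟨j, hjlen, hget⟩ := List.mem_iff_getElem.mp hmem
  rw [cs.length_rightInvSeq] at hjlen
  refine ⟨j, hjlen, ?_⟩
  have := cs.wordProd_mul_getD_rightInvSeq ω j
  rwa [List.getD_eq_getElem _ 1 (by rw [cs.length_rightInvSeq]; exact hjlen), hget] at this

section Parabolic

variable (I : Set B)

theorem wordProd_mem_of_simples (H : Subgroup W) (ω : List B)
    (h : ∀ b ∈ ω, s b ∈ H) : π ω ∈ H := by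
  induction ω with
  | nil => simp [one_mem]
  | cons a ω ih =>
    rw [wordProd_cons]
    exact mul_mem (h a (by simp)) (ih fun b hb => h b (by simp [hb]))

theorem mem_closure_iff_word (u : W) :
    u ∈ Subgroup.closure (cs.simple '' I) ↔
      ∃ ω : List B, (∀ b ∈ ω, b ∈ I) ∧ π ω = u := by
  constructor
  · intro hu
    induction hu using Subgroup.closure_induction with
    | mem x hx =>
      obtain ⟨b, hb, rfl⟩ := hx
      exact ⟨[b], by simpa using hb, by simp⟩
    | one => exact ⟨[], by simp, by simp⟩
    | mul x y _ _ hx hy =>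
      obtain ⟨ω₁, h₁, rfl⟩ := hx
      obtain ⟨ω₂, h₂, rfl⟩ := hy
      exact ⟨ω₁ ++ ω₂, fun b hb => by
        rcases List.mem_append.mp hb with h | h
        exacts [h₁ b h, h₂ b h], by rw [wordProd_append]⟩
    | inv x _ hx =>
      obtain ⟨ω, h₁, rfl⟩ := hx
      exact ⟨ω.reverse, fun b hb => h₁ b (List.mem_reverse.mp hb), by
        rw [cs.wordProd_reverse]⟩
  · rintro ⟨ω, hω, rfl⟩
    exact wordProd_mem_of_simples cs _ ω fun b hb =>
      Subgroup.subset_closure ⟨b, hω b hb, rfl⟩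

/-- Key lemma: appending a minimal-length `I`-word to a reduced word of a minimal coset
representative yields a reduced word. -/
theorem isReduced_append_min {x : W}
    (hx : ∀ d ∈ Subgroup.closure (cs.simple '' I), ℓ x ≤ ℓ (x * d))
    {xw : List B} (hxw : π xw = x) (hxwred : cs.IsReduced xw) :
    ∀ (ω : List B), (∀ b ∈ ω, b ∈ I) →
      (∀ ω' : List B, (∀ b ∈ ω', b ∈ I) → π ω' = π ω → ω.length ≤ ω'.length) →
      cs.IsReduced (xw ++ ω) := by
  intro ω
  induction ω using List.reverseRecOn with
  | nil => intro _ _; simpa [CoxeterSystem.IsReduced] using hxwred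
  | append_singleton ω₀ b ih =>
    intro hlet hmin
    have hlet₀ : ∀ c ∈ ω₀, c ∈ I := fun c hc => hlet c (by simp [hc])
    have hbI : b ∈ I := hlet b (by simp)
    have hmin₀ : ∀ ω' : List B, (∀ c ∈ ω', c ∈ I) → π ω' = π ω₀ → ω₀.length ≤ ω'.length := by
      intro ω' hω' hprod
      have := hmin (ω' ++ [b]) (fun c hc => by
        rcases List.mem_append.mp hc with h | h
        exacts [hω' c h, by simpa using (List.mem_singleton.mp h) ▸ hbI])
        (by rw [wordProd_append, wordProd_append, hprod])
      simpa using this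
    have red₀ : cs.IsReduced (xw ++ ω₀) := ih hlet₀ hmin₀
    have hlen₀ : ℓ (π (xw ++ ω₀)) = xw.length + ω₀.length := by
      have := red₀
      rwa [CoxeterSystem.IsReduced, List.length_append] at this
    rcases cs.length_mul_simple (π (xw ++ ω₀)) b with h | h
    · -- going up: reduced
      show ℓ (π (xw ++ (ω₀ ++ [b]))) = _
      rw [show xw ++ (ω₀ ++ [b]) = (xw ++ ω₀) ++ [b] by simp, wordProd_append,
        wordProd_singleton, h, hlen₀]
      simp
      omega
    · -- going down: contradiction
      exfalso
      have hlt : ℓ (π (xw ++ ω₀) * s b) < ℓ (π (xw ++ ω₀)) := by omega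
      obtain ⟨j, hj, hej⟩ := exchange_erase cs red₀ (cs.isReflection_simple b) hlt
      rcases Nat.lt_or_ge j xw.length with hjx | hjx
      · -- letter erased from xw : contradicts minimality of x in its coset
        rw [List.eraseIdx_append_of_lt_length hjx] at hej
        rw [wordProd_append, wordProd_append, hxw] at hej
        have hd : π (xw.eraseIdx j) = x * (π ω₀ * s b * (π ω₀)⁻¹) := by
          have h2 : π (xw.eraseIdx j) * π ω₀ = x * (π ω₀ * s b * (π ω₀)⁻¹) * π ω₀ := by
            rw [← hej]; group
          exact mul_right_cancel h2
        have hdP : π ω₀ * s b * (π ω₀)⁻¹ ∈ Subgroup.closure (cs.simple '' I) := by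
          have h1 : π ω₀ ∈ _ := (mem_closure_iff_word cs I (π ω₀)).mpr ⟨ω₀, hlet₀, rfl⟩
          have h2 : s b ∈ Subgroup.closure (cs.simple '' I) :=
            Subgroup.subset_closure ⟨b, hbI, rfl⟩
          exact mul_mem (mul_mem h1 h2) (inv_mem h1)
        have hxle := hx _ hdP
        rw [← hd] at hxle
        have hle2 : ℓ (π (xw.eraseIdx j)) ≤ xw.length - 1 := by
          have := cs.length_wordProd_le (xw.eraseIdx j)
          rw [List.length_eraseIdx_of_lt hjx] at this
          exact this
        have hlx : ℓ x = xw.length := by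
          rw [← hxw]; exact hxwred
        omega
      · -- letter erased from ω₀ : contradicts minimality of the I-word
        rw [List.eraseIdx_append_of_length_le hjx] at hej
        rw [wordProd_append, wordProd_append, hxw] at hej
        have hcan : π (ω₀.eraseIdx (j - xw.length)) = π ω₀ * s b := by
          rw [mul_assoc] at hej
          rw [← mul_left_cancel hej]
        have hm : j - xw.length < ω₀.length := by
          rw [List.length_append] at hj; omega
        have := hmin₀
        have hc := hmin (ω₀.eraseIdx (j - xw.length))
          (fun c hc => hlet₀ c ((List.eraseIdx_sublist ω₀ (j - xw.length)).mem hc))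
          (by rw [hcan, wordProd_append, wordProd_singleton])
        rw [List.length_eraseIdx_of_lt hm] at hc
        simp at hc
        omega

/-- Minimal-length `I`-words exist; they are reduced, and `ℓ(xu) = ℓ(x) + ℓ(u)`. -/
theorem exists_min_word {u : W} (hu : u ∈ Subgroup.closure (cs.simple '' I)) :
    ∃ ω : List B, (∀ b ∈ ω, b ∈ I) ∧ π ω = u ∧
      (∀ ω' : List B, (∀ b ∈ ω', b ∈ I) → π ω' = π ω → ω.length ≤ ω'.length) := by
  obtain ⟨ω₁, hω₁, hprod₁⟩ := (mem_closure_iff_word cs I u).mp hu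
  have hex : ∃ n, ∃ ω : List B, ω.length = n ∧ (∀ b ∈ ω, b ∈ I) ∧ π ω = u :=
    ⟨ω₁.length, ω₁, rfl, hω₁, hprod₁⟩
  classical
  obtain ⟨ω, hlen, hlet, hprod⟩ := Nat.find_spec hex
  refine ⟨ω, hlet, hprod, ?_⟩
  intro ω' hω' hprod'
  have : Nat.find hex ≤ ω'.length :=
    Nat.find_le ⟨ω', rfl, hω', by rw [hprod']; exact hprod⟩
  omega

theorem length_one_le_mul {d : W} (hd : d ∈ Subgroup.closure (cs.simple '' I)) :
    ℓ (1 : W) ≤ ℓ (1 * d) := by simp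

/-- Lemma A: for `x` minimal in `x W_I` and `u ∈ W_I`, `ℓ(xu) = ℓ(x) + ℓ(u)`. -/
theorem length_mul_of_min {x : W}
    (hx : ∀ d ∈ Subgroup.closure (cs.simple '' I), ℓ x ≤ ℓ (x * d))
    {xw : List B} (hxw : π xw = x) (hxwred : cs.IsReduced xw)
    {u : W} (hu : u ∈ Subgroup.closure (cs.simple '' I)) :
    ℓ (x * u) = ℓ x + ℓ u := by
  obtain ⟨ω, hlet, hprod, hmin⟩ := exists_min_word cs I hu
  have h1 : cs.IsReduced (xw ++ ω) := isReduced_append_min cs I hx hxw hxwred ω hlet hmin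
  have h2 : cs.IsReduced (([] : List B) ++ ω) :=
    isReduced_append_min cs I (x := (1 : W)) (fun d _ => by simp) (by simp)
      (by simp [CoxeterSystem.IsReduced]) ω hlet hmin
  have e1 : ℓ (x * u) = xw.length + ω.length := by
    have := h1
    rwa [CoxeterSystem.IsReduced, wordProd_append, hxw, hprod, List.length_append] at this
  have e2 : ℓ u = ω.length := by
    have := h2
    rwa [CoxeterSystem.IsReduced, List.nil_append, hprod] at this
  have e3 : ℓ x = xw.length := by rw [← hxw]; exact hxwred
  omega

/-- There is a reduced word with letters in `I` for each element of `W_I`. -/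
theorem exists_reduced_word_subset {u : W} (hu : u ∈ Subgroup.closure (cs.simple '' I)) :
    ∃ ω : List B, (∀ b ∈ ω, b ∈ I) ∧ cs.IsReduced ω ∧ π ω = u := by
  obtain ⟨ω, hlet, hprod, hmin⟩ := exists_min_word cs I hu
  refine ⟨ω, hlet, ?_, hprod⟩
  have h2 : cs.IsReduced (([] : List B) ++ ω) :=
    isReduced_append_min cs I (x := (1 : W)) (fun d _ => by simp) (by simp)
      (by simp [CoxeterSystem.IsReduced]) ω hlet hmin
  simpa using h2

/-- Lemma B: the simple reflections appearing in a reduced word for an element of `W_I` all lie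
in `W_I`. -/
theorem simple_mem_of_reduced : ∀ (ω : List B), cs.IsReduced ω →
    π ω ∈ Subgroup.closure (cs.simple '' I) →
    ∀ b ∈ ω, s b ∈ Subgroup.closure (cs.simple '' I) := by
  intro ω
  induction ω with
  | nil => simp
  | cons a rest ih =>
    intro hred hmem b hb
    set y := π (a :: rest) with hy
    have hylen : ℓ y = rest.length + 1 := by simpa [CoxeterSystem.IsReduced] using hred
    have hrest : π rest = s a * y := by
      rw [hy, wordProd_cons, ← mul_assoc, cs.simple_mul_simple_self, one_mul]
    have hinv : y⁻¹ ∈ Subgroup.closure (cs.simple '' I) := inv_mem hmem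
    have hlt : ℓ (y⁻¹ * s a) < ℓ y⁻¹ := by
      have h1 : y⁻¹ * s a = (π rest)⁻¹ := by
        rw [hrest, mul_inv_rev, cs.inv_simple]
      rw [h1, cs.length_inv, cs.length_inv]
      have := cs.length_wordProd_le rest
      omega
    have hsaP : s a ∈ Subgroup.closure (cs.simple '' I) := by
      obtain ⟨ρ, hρlet, hρred, hρprod⟩ := exists_reduced_word_subset cs I hinv
      obtain ⟨j, hj, hej⟩ := exchange_erase cs hρred (cs.isReflection_simple a)
        (by rw [hρprod]; exact hlt)
      have hP : π ρ * s a ∈ Subgroup.closure (cs.simple '' I) := by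
        rw [hej]
        exact (mem_closure_iff_word cs I _).mpr ⟨ρ.eraseIdx j,
          fun c hc => hρlet c ((List.eraseIdx_sublist ρ j).mem hc), rfl⟩
      rw [hρprod] at hP
      have : s a = y * (y⁻¹ * s a) := by group
      rw [this]
      exact mul_mem hmem hP
    rcases List.mem_cons.mp hb with rfl | hbrest
    · exact hsaP
    · have hrestred : cs.IsReduced rest := by
        have hle := cs.length_wordProd_le rest
        have hge : rest.length ≤ ℓ (π rest) := by
          rw [hrest]
          have h2 := cs.length_simple_mul y a
          omega
        exact le_antisymm hle hge
      have hrestmem : π rest ∈ Subgroup.closure (cs.simple '' I) := by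
        rw [hrest]; exact mul_mem hsaP hmem
      exact ih hrestred hrestmem b hbrest

end Parabolic

end



variable {B W : Type*} [Group W] {M : CoxeterMatrix B}

/-- The element of `W` expressed by a subexpression: the product of the chosen letters. -/
def subProd (cs : CoxeterSystem M W) (l : List (B × Bool)) : W :=
  cs.wordProd (l.filterMap fun p => if p.2 then some p.1 else none)

/-- Auxiliary defect computation: `w` is the product of the chosen letters so far;
a position decorated `U0` contributes `+1`, a position decorated `D0` contributes `-1`. -/
noncomputable def defectAux (cs : CoxeterSystem M W) : W → List (B × Bool) → ℤ
  | _, [] => 0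
  | w, p :: rest =>
    (if p.2 then 0
     else if cs.length w < cs.length (w * cs.simple p.1) then 1 else -1)
      + defectAux cs (if p.2 then w * cs.simple p.1 else w) rest

/-- The defect of a 01-sequence `e` on the word `ω`. -/
noncomputable def defect (cs : CoxeterSystem M W) (ω : List B) (e : List Bool) : ℤ :=
  defectAux cs 1 (ω.zip e)

section Assemble

variable (cs : CoxeterSystem M W)

theorem filterMap_zip_replicate_true (l : List B) :
    ((l.zip (List.replicate l.length true)).filterMap
      fun p => if p.2 then some p.1 else none) = l := by
  induction l with
  | nil => simp
  | cons a l ih => simp [List.replicate_succ, ih]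

theorem mem_of_mem_filterMap_zip {l : List B} {e : List Bool} {b : B}
    (hb : b ∈ (l.zip e).filterMap fun p => if p.2 then some p.1 else none) : b ∈ l := by
  obtain ⟨p, hp, hpb⟩ := List.mem_filterMap.mp hb
  have : b = p.1 := by
    by_cases h : p.2 <;> simp [h] at hpb
    exact hpb.symm
  exact this ▸ (List.of_mem_zip hp).1

theorem eq_replicate_of_filterMap_length {l : List B} :
    ∀ {e : List Bool}, e.length = l.length →
      ((l.zip e).filterMap fun p => if p.2 then some p.1 else none).length = l.length →
      e = List.replicate l.length true := by
  induction l with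
  | nil =>
    intro e he _
    simpa using List.length_eq_zero_iff.mp (by simpa using he)
  | cons a l ih =>
    intro e he hfl
    match e with
    | eb :: e' =>
      have he' : e'.length = l.length := by simpa using he
      by_cases hb : eb
      · subst hb
        have : ((l.zip e').filterMap fun p => if p.2 then some p.1 else none).length
            = l.length := by
          simpa using hfl
        rw [List.length_cons, List.replicate_succ, ih he' this]
      · have hb' : eb = false := by simpa using hb
        subst hb'
        exfalso
        have h1 : ((l.zip e').filterMap fun p => if p.2 then some p.1 else none).length
            ≤ l.length := by
          calc _ ≤ (l.zip e').length := List.length_filterMap_le _ _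
            _ ≤ l.length := by rw [List.length_zip]; omega
        simp at hfl
        omega

theorem defectAux_replicate_prefix (rest : List (B × Bool)) :
    ∀ (l : List B) (w : W),
      defectAux cs w ((l.zip (List.replicate l.length true)) ++ rest) =
        defectAux cs (w * cs.wordProd l) rest := by
  intro l
  induction l with
  | nil => intro w; simp
  | cons a l ih =>
    intro w
    show defectAux cs w ((a, true) :: (l.zip (List.replicate l.length true) ++ rest)) = _
    rw [show defectAux cs w ((a, true) :: (l.zip (List.replicate l.length true) ++ rest)) =
      (if true then 0
        else if cs.length w < cs.length (w * cs.simple a) then 1 else -1)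
        + defectAux cs (if true then w * cs.simple a else w)
            (l.zip (List.replicate l.length true) ++ rest) from rfl]
    simp only [if_true]
    rw [ih (w * cs.simple a), cs.wordProd_cons, zero_add, mul_assoc]

theorem defectAux_cancel (I : Set B) {x : W}
    (hx : ∀ d ∈ Subgroup.closure (cs.simple '' I), cs.length x ≤ cs.length (x * d))
    {xw : List B} (hxw : cs.wordProd xw = x) (hxwred : cs.IsReduced xw) :
    ∀ (pl : List (B × Bool)) (u : W), u ∈ Subgroup.closure (cs.simple '' I) →
      (∀ p ∈ pl, cs.simple p.1 ∈ Subgroup.closure (cs.simple '' I)) →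
      defectAux cs (x * u) pl = defectAux cs u pl := by
  intro pl
  induction pl with
  | nil => intro u _ _; rfl
  | cons p rest ih =>
    intro u hu hsimp
    have hsp := hsimp p (by simp)
    have hus : u * cs.simple p.1 ∈ Subgroup.closure (cs.simple '' I) := mul_mem hu hsp
    have h1 : cs.length (x * u) = cs.length x + cs.length u :=
      length_mul_of_min cs I hx hxw hxwred hu
    have h2 : cs.length (x * (u * cs.simple p.1))
        = cs.length x + cs.length (u * cs.simple p.1) :=
      length_mul_of_min cs I hx hxw hxwred hus
    have hrest : ∀ q ∈ rest, cs.simple q.1 ∈ Subgroup.closure (cs.simple '' I) :=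
      fun q hq => hsimp q (by simp [hq])
    show (if p.2 then 0
        else if cs.length (x * u) < cs.length (x * u * cs.simple p.1) then 1 else -1)
        + defectAux cs (if p.2 then x * u * cs.simple p.1 else x * u) rest =
      (if p.2 then 0
        else if cs.length u < cs.length (u * cs.simple p.1) then 1 else -1)
        + defectAux cs (if p.2 then u * cs.simple p.1 else u) rest
    have hiff : (cs.length (x * u) < cs.length (x * u * cs.simple p.1)) ↔
        (cs.length u < cs.length (u * cs.simple p.1)) := by
      rw [mul_assoc, h1, h2]
      omega
    by_cases hp : p.2
    · simp only [hp, if_true, zero_add]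
      rw [mul_assoc]
      exact ih (u * cs.simple p.1) hus hrest
    · simp only [Bool.not_eq_true] at hp
      simp only [hp, Bool.false_eq_true, if_false]
      rw [ih u hu hrest]
      congr 1
      by_cases hc : cs.length u < cs.length (u * cs.simple p.1)
      · rw [if_pos (hiff.mpr hc), if_pos hc]
      · rw [if_neg (fun hh => hc (hiff.mp hh)), if_neg hc]

end Assemble

/-- Prepending `ℓ(x)` ones gives a defect-preserving bijection between the
subexpressions of `y̲` expressing `z ∈ W_I` and the subexpressions of `x̲y̲` expressing
`x z`, for `x ∈ W^I` with reduced word `x̲` and `y ∈ W_I` with reduced word `y̲`. -/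
theorem stmt_5 (cs : CoxeterSystem M W) (I : Set B) (x y z : W)
    (hx : ∀ d ∈ Subgroup.closure (cs.simple '' I), cs.length x ≤ cs.length (x * d))
    (hy : y ∈ Subgroup.closure (cs.simple '' I))
    (hz : z ∈ Subgroup.closure (cs.simple '' I))
    (xw yw : List B)
    (hxw : cs.wordProd xw = x) (hxwred : cs.IsReduced xw)
    (hyw : cs.wordProd yw = y) (hywred : cs.IsReduced yw) :
    Set.BijOn (fun e : List Bool => List.replicate xw.length true ++ e)
      {e | e.length = yw.length ∧ subProd cs (yw.zip e) = z}
      {e' | e'.length = (xw ++ yw).length ∧ subProd cs ((xw ++ yw).zip e') = x * z} ∧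
    ∀ e : List Bool, e.length = yw.length → subProd cs (yw.zip e) = z →
      defect cs (xw ++ yw) (List.replicate xw.length true ++ e) = defect cs yw e := by
  have hsimples : ∀ b ∈ yw, cs.simple b ∈ Subgroup.closure (cs.simple '' I) :=
    simple_mem_of_reduced cs I yw hywred (by rw [hyw]; exact hy)
  have hrepl : (List.replicate xw.length true).length = xw.length := List.length_replicate
  have hzipsplit : ∀ e : List Bool,
      (xw ++ yw).zip (List.replicate xw.length true ++ e) =
        xw.zip (List.replicate xw.length true) ++ yw.zip e :=
    fun e => List.zip_append (by rw [hrepl])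
  have hsubsplit : ∀ e : List Bool, subProd cs ((xw ++ yw).zip
      (List.replicate xw.length true ++ e)) = x * subProd cs (yw.zip e) := by
    intro e
    rw [hzipsplit e]
    unfold subProd
    rw [List.filterMap_append, cs.wordProd_append, filterMap_zip_replicate_true, hxw]
  have hlenx : cs.length x = xw.length := by rw [← hxw]; exact hxwred
  constructor
  · refine ⟨?_, ?_, ?_⟩
    · -- MapsTo
      rintro e ⟨he1, he2⟩
      refine ⟨?_, ?_⟩
      · simp [he1]
      · rw [hsubsplit e, he2]
    · -- InjOn
      intro e₁ _ e₂ _ h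
      exact List.append_cancel_left h
    · -- SurjOn
      rintro e' ⟨hlen', hprod'⟩
      set e1 := e'.take xw.length with he1def
      set e2 := e'.drop xw.length with he2def
      have hlen'' : e'.length = xw.length + yw.length := by simpa using hlen'
      have he1len : e1.length = xw.length := by
        rw [he1def, List.length_take]
        omega
      have hsplit : e1 ++ e2 = e' := List.take_append_drop _ e'
      have hzs : (xw ++ yw).zip e' = xw.zip e1 ++ yw.zip e2 := by
        rw [← hsplit]
        exact List.zip_append he1len.symm
      set f : B × Bool → Option B := fun p => if p.2 then some p.1 else none with hf
      set u := (xw.zip e1).filterMap f with hu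
      set v := (yw.zip e2).filterMap f with hv
      have hproduv : cs.wordProd u * cs.wordProd v = x * z := by
        rw [← cs.wordProd_append, ← List.filterMap_append, ← hzs]
        exact hprod'
      have hvP : cs.wordProd v ∈ Subgroup.closure (cs.simple '' I) :=
        wordProd_mem_of_simples cs _ v fun b hb =>
          hsimples b (mem_of_mem_filterMap_zip hb)
      have hdP : z * (cs.wordProd v)⁻¹ ∈ Subgroup.closure (cs.simple '' I) :=
        mul_mem hz (inv_mem hvP)
      have hπu : cs.wordProd u = x * (z * (cs.wordProd v)⁻¹) := by
        have h2 : cs.wordProd u * cs.wordProd v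
            = x * (z * (cs.wordProd v)⁻¹) * cs.wordProd v := by
          rw [hproduv]; group
        exact mul_right_cancel h2
      have hxle : cs.length x ≤ cs.length (cs.wordProd u) := by
        rw [hπu]; exact hx _ hdP
      have hule : u.length ≤ xw.length := by
        calc u.length ≤ (xw.zip e1).length := List.length_filterMap_le _ _
          _ ≤ xw.length := by rw [List.length_zip]; omega
      have huple : cs.length (cs.wordProd u) ≤ u.length := cs.length_wordProd_le u
      have hueq : u.length = xw.length := by omega
      have he1rep : e1 = List.replicate xw.length true :=
        eq_replicate_of_filterMap_length he1len hueq
      have huxw : u = xw := by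
        rw [hu, he1rep, filterMap_zip_replicate_true]
      have hπueq : cs.wordProd u = x := by rw [huxw, hxw]
      have hπv : cs.wordProd v = z := by
        rw [hπueq] at hproduv
        exact mul_left_cancel hproduv
      refine ⟨e2, ⟨?_, ?_⟩, ?_⟩
      · rw [he2def, List.length_drop]
        omega
      · show subProd cs (yw.zip e2) = z
        rw [subProd, ← hv, hπv]
      · show List.replicate xw.length true ++ e2 = e'
        rw [← he1rep, hsplit]
  · -- defect
    intro e he1 he2
    unfold defect
    rw [hzipsplit e]
    rw [defectAux_replicate_prefix cs (yw.zip e) xw 1, one_mul, hxw]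
    have := defectAux_cancel cs I hx hxw hxwred (yw.zip e) 1 (one_mem _)
      (fun p hp => hsimples p.1 (List.of_mem_zip (by exact hp)).1)
    rw [mul_one] at this
    exact this
end

section
/- Let (W,S) be a Coxeter system with z < w in Bruhat order and r ∈ S a simple reflection lying in the right descent set of w but not of z. If μ(z,w) ≠ 0 then w = zr, and in that case μ(z,w) = 1. Here μ(z,w) denotes the coefficient of v in the Kazhdan–Lusztig polynomial h_{z,w}. -/
open LaurentPolynomial

variable {B W : Type*} [Group W] {M : CoxeterMatrix B}

/-- The Bruhat order on a Coxeter group: generated by `a → a*t` for reflections `t`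
increasing the length. -/
def bruhatLE (cs : CoxeterSystem M W) : W → W → Prop :=
  Relation.ReflTransGen
    (fun a b => ∃ t, cs.IsReflection t ∧ b = a * t ∧ cs.length a < cs.length b)

/-- Strict Bruhat order. -/
def bruhatLT (cs : CoxeterSystem M W) (a b : W) : Prop := bruhatLE cs a b ∧ a ≠ b

set_option maxHeartbeats 1000000 in
/-- If `z < w` in Bruhat order and `r` is a right descent of `w` but not of
`z`, then `μ(z,w) ≠ 0` implies `w = z r`, and in that case `μ(z,w) = 1`. Here the Hecke
algebra (standard basis `std`), the bar involution `σ`, the Kazhdan–Lusztig basis `b` and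
the KL polynomials `h` (Soergel's normalization) are specified by their defining
properties, and `μ(z,w)` is the coefficient of `v` in `h z w`. -/
theorem stmt_6 (cs : CoxeterSystem M W)
    {H : Type*} [Ring H] [Algebra (LaurentPolynomial ℤ) H]
    (std : Module.Basis W (LaurentPolynomial ℤ) H)
    (hone : std 1 = 1)
    (hmul : ∀ a c : W, cs.length (a * c) = cs.length a + cs.length c →
      std a * std c = std (a * c))
    (hquad : ∀ i : B, std (cs.simple i) * std (cs.simple i) =
      (T (-1) - T 1 : LaurentPolynomial ℤ) • std (cs.simple i) + 1)
    (σ : H →+* H)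
    (hσinvol : ∀ a, σ (σ a) = a)
    (hσsmul : ∀ (p : LaurentPolynomial ℤ) (a : H), σ (p • a) = invert p • σ a)
    (hσstd : ∀ w : W, σ (std w) * std w⁻¹ = 1)
    (b : W → H) (h : W → W → LaurentPolynomial ℤ)
    (hself : ∀ w, σ (b w) = b w)
    (hrepr : ∀ w u, std.repr (b w) u = h u w)
    (hdiag : ∀ w, h w w = 1)
    (hsupp : ∀ w u, h u w ≠ 0 → u = w ∨ bruhatLT cs u w)
    (hv : ∀ w u, bruhatLT cs u w → ∀ n : ℤ, n ≤ 0 → (h u w).coeff n = 0)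
    (z w : W) (hzw : bruhatLT cs z w) (r : B)
    (hdw : cs.IsRightDescent w r) (hdz : ¬ cs.IsRightDescent z r)
    (hμ : (h z w).coeff 1 ≠ 0) :
    w = z * cs.simple r ∧ (h z w).coeff 1 = 1 := by
  classical
  -- coefficient extraction lemmas for Laurent polynomials
  have hTmul : ∀ (p : LaurentPolynomial ℤ) (n m : ℤ), ((T m : LaurentPolynomial ℤ) * p).coeff n = p.coeff (n - m) := by
    intro p n m
    show ((AddMonoidAlgebra.single m 1 : AddMonoidAlgebra ℤ ℤ) * p).coeff n = _
    rw [AddMonoidAlgebra.coeff_single_mul_apply, one_mul, neg_add_eq_sub]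
  -- multiplication rules in the Hecke algebra
  have mulND : ∀ (u : W) (i : B), ¬ cs.IsRightDescent u i →
      std u * std (cs.simple i) = std (u * cs.simple i) := by
    intro u i hu
    exact hmul u (cs.simple i) (by
      rw [cs.length_simple, (cs.not_isRightDescent_iff).mp hu])
  have mulD : ∀ (u : W) (i : B), cs.IsRightDescent u i →
      std u * std (cs.simple i) = std (u * cs.simple i)
        + (T (-1) - T 1 : LaurentPolynomial ℤ) • std u := by
    intro u i hu
    have h1 : ¬ cs.IsRightDescent (u * cs.simple i) i :=
      (cs.isRightDescent_iff_not_isRightDescent_mul).mp hu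
    have h3 : u * cs.simple i * cs.simple i = u := by
      rw [mul_assoc, cs.simple_mul_simple_self, mul_one]
    have h2 : std (u * cs.simple i) * std (cs.simple i) = std u := by
      rw [mulND _ _ h1, h3]
    calc std u * std (cs.simple i)
        = std (u * cs.simple i) * (std (cs.simple i) * std (cs.simple i)) := by
          rw [← mul_assoc, h2]
      _ = std (u * cs.simple i) * ((T (-1) - T 1 : LaurentPolynomial ℤ) • std (cs.simple i) + 1) := by
          rw [hquad i]
      _ = (T (-1) - T 1 : LaurentPolynomial ℤ) • (std (u * cs.simple i) * std (cs.simple i))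
            + std (u * cs.simple i) := by
          rw [mul_add, mul_one, mul_smul_comm]
      _ = std (u * cs.simple i) + (T (-1) - T 1 : LaurentPolynomial ℤ) • std u := by
          rw [h2, add_comm]
  -- the key coefficient formula for right multiplication by a simple generator
  have reprMul : ∀ (i : B) (a : H) (x : W),
      std.repr (a * std (cs.simple i)) x =
        std.repr a (x * cs.simple i)
          + (if cs.IsRightDescent x i then (T (-1) - T 1 : LaurentPolynomial ℤ) else 0) * std.repr a x := by
    intro i a x
    have hne : ∀ y : W, y * cs.simple i ≠ y := by
      intro y hy
      exact cs.length_mul_simple_ne y i (by rw [hy])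
    have hs1 : cs.simple i ≠ 1 := by
      intro hs
      exact hne 1 (by rw [hs, one_mul])
    have hiff : ∀ u : W, u * cs.simple i = x ↔ u = x * cs.simple i := by
      intro u
      constructor
      · intro hh
        rw [← hh, mul_assoc, cs.simple_mul_simple_self, mul_one]
      · intro hh
        rw [hh, mul_assoc, cs.simple_mul_simple_self, mul_one]
    set c : LaurentPolynomial ℤ :=
      if cs.IsRightDescent x i then (T (-1) - T 1 : LaurentPolynomial ℤ) else 0 with hc
    let L1 : H →ₗ[LaurentPolynomial ℤ] LaurentPolynomial ℤ :=
      (Finsupp.lapply x) ∘ₗ (std.repr : H →ₗ[LaurentPolynomial ℤ] (W →₀ LaurentPolynomial ℤ))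
        ∘ₗ (LinearMap.mulRight (LaurentPolynomial ℤ) (std (cs.simple i)))
    let L2 : H →ₗ[LaurentPolynomial ℤ] LaurentPolynomial ℤ :=
      (Finsupp.lapply (x * cs.simple i)) ∘ₗ
          (std.repr : H →ₗ[LaurentPolynomial ℤ] (W →₀ LaurentPolynomial ℤ))
        + c • ((Finsupp.lapply x) ∘ₗ
          (std.repr : H →ₗ[LaurentPolynomial ℤ] (W →₀ LaurentPolynomial ℤ)))
    suffices hL : L1 = L2 by
      have := LinearMap.congr_fun hL a
      simpa [L1, L2, smul_eq_mul] using this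
    refine std.ext fun u => ?_
    show std.repr (std u * std (cs.simple i)) x =
      std.repr (std u) (x * cs.simple i) + c • (std.repr (std u) x)
    by_cases hu : cs.IsRightDescent u i
    · rw [mulD u i hu]
      by_cases hux : u = x
      · subst hux
        have hcc : c = (T (-1) - T 1 : LaurentPolynomial ℤ) := by rw [hc, if_pos hu]
        simp [Module.Basis.repr_self, Finsupp.single_apply, hne u, (hne u) ∘ (hiff u).mpr ∘ Eq.symm,
          hcc, smul_eq_mul, hs1]
      · simp [Module.Basis.repr_self, Finsupp.single_apply, hux, hiff u, smul_eq_mul]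
    · rw [mulND u i hu]
      by_cases hux : u = x
      · subst hux
        have hcc : c = 0 := by rw [hc, if_neg hu]
        simp [Module.Basis.repr_self, Finsupp.single_apply, hcc, smul_eq_mul]
      · simp [Module.Basis.repr_self, Finsupp.single_apply, hux, hiff u, smul_eq_mul]
  have hT0 : (T 1 : LaurentPolynomial ℤ) * T (-1) = 1 := by
    rw [← T_add]
    norm_num
  have hlb : ∀ (y : W) (i : B), cs.length y ≤ cs.length (y * cs.simple i) + 1 := by
    intro y i
    have hh := cs.length_mul_simple (y * cs.simple i) i
    rw [mul_assoc, cs.simple_mul_simple_self, mul_one] at hh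
    omega
  have hσsimple : ∀ i : B, σ (std (cs.simple i)) =
      std (cs.simple i) + ((T 1 - T (-1) : LaurentPolynomial ℤ)) • 1 := by
    intro i
    have hinv2 : std (cs.simple i) *
        (std (cs.simple i) + (T 1 - T (-1) : LaurentPolynomial ℤ) • 1) = 1 := by
      rw [mul_add, hquad i, mul_smul_comm, mul_one]
      module
    have hσs : σ (std (cs.simple i)) * std (cs.simple i) = 1 := by
      have hh := hσstd (cs.simple i)
      rwa [cs.inv_simple] at hh
    calc σ (std (cs.simple i))
        = σ (std (cs.simple i)) * (std (cs.simple i)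
            * (std (cs.simple i) + (T 1 - T (-1) : LaurentPolynomial ℤ) • 1)) := by
          rw [hinv2, mul_one]
      _ = (σ (std (cs.simple i)) * std (cs.simple i))
            * (std (cs.simple i) + (T 1 - T (-1) : LaurentPolynomial ℤ) • 1) := by
          rw [mul_assoc]
      _ = std (cs.simple i) + (T 1 - T (-1) : LaurentPolynomial ℤ) • 1 := by
          rw [hσs, one_mul]
  set sr := cs.simple r with hsr
  set D : H := b w * std sr - (T (-1) : LaurentPolynomial ℤ) • b w with hD
  have hd : ∀ x : W, std.repr D x =
      h (x * sr) w
        + (if cs.IsRightDescent x r then (T (-1) - T 1 : LaurentPolynomial ℤ) else 0) * h x w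
        - T (-1) * h x w := by
    intro x
    rw [hD, map_sub, map_smul, Finsupp.sub_apply, Finsupp.smul_apply, reprMul r (b w) x,
      hrepr, hrepr, smul_eq_mul]
  have hDr : D * std sr = (-(T 1) : LaurentPolynomial ℤ) • D := by
    have e1 : D * std sr
        = b w * ((T (-1) - T 1 : LaurentPolynomial ℤ) • std sr + 1)
          - (T (-1) : LaurentPolynomial ℤ) • (b w * std sr) := by
      rw [hD, sub_mul, smul_mul_assoc, mul_assoc, hquad r]
    have e2 : ((-(T 1) : LaurentPolynomial ℤ)) • D
        = (-(T 1) : LaurentPolynomial ℤ) • (b w * std sr) + b w := by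
      rw [hD, smul_sub, smul_smul, neg_mul, hT0, neg_one_smul, sub_neg_eq_add]
    rw [e1, e2, mul_add, mul_one, mul_smul_comm]
    module
  have hσD : σ D = D := by
    rw [hD, map_sub, map_mul, hσsmul, hself, hσsimple r, invert_T]
    rw [mul_add, mul_smul_comm, mul_one]
    have hnn : (- - 1 : ℤ) = 1 := by norm_num
    rw [hnn]
    module
  have tri : ∀ x : W, std.repr (σ (std x)) x = 1 ∧
      ∀ y : W, std.repr (σ (std x)) y ≠ 0 → y = x ∨ cs.length y < cs.length x := by
    have key : ∀ n : ℕ, ∀ x : W, cs.length x = n → std.repr (σ (std x)) x = 1 ∧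
        ∀ y : W, std.repr (σ (std x)) y ≠ 0 → y = x ∨ cs.length y < cs.length x := by
      intro n
      induction n using Nat.strong_induction_on with
      | _ n IH =>
        intro x hx
        by_cases hx1 : x = 1
        · subst hx1
          have e3 : σ (std 1) = std 1 := by rw [hone, map_one]
          rw [e3]
          constructor
          · simp [Module.Basis.repr_self]
          · intro y hy
            left
            by_contra hne
            rw [Module.Basis.repr_self, Finsupp.single_apply, if_neg (fun hh => hne hh.symm)] at hy
            exact hy rfl
        · obtain ⟨i, hi⟩ := cs.exists_rightDescent_of_ne_one hx1
          have hlen : cs.length (x * cs.simple i) + 1 = cs.length x :=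
            (cs.isRightDescent_iff).mp hi
          have hx'x : (x * cs.simple i) * cs.simple i = x := by
            rw [mul_assoc, cs.simple_mul_simple_self, mul_one]
          have hnd : ¬ cs.IsRightDescent (x * cs.simple i) i :=
            (cs.isRightDescent_iff_not_isRightDescent_mul).mp hi
          have hstd : std (x * cs.simple i) * std (cs.simple i) = std x := by
            rw [mulND _ i hnd, hx'x]
          obtain ⟨IH1, IH2⟩ := IH (cs.length (x * cs.simple i)) (by omega) (x * cs.simple i) rfl
          have hexp : σ (std x) = σ (std (x * cs.simple i)) * std (cs.simple i)
              + (T 1 - T (-1) : LaurentPolynomial ℤ) • σ (std (x * cs.simple i)) := by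
            rw [← hstd, map_mul, hσsimple i, mul_add, mul_smul_comm, mul_one]
          have hrep : ∀ y : W, std.repr (σ (std x)) y
              = std.repr (σ (std (x * cs.simple i))) (y * cs.simple i)
                + (if cs.IsRightDescent y i then (T (-1) - T 1 : LaurentPolynomial ℤ) else 0)
                    * std.repr (σ (std (x * cs.simple i))) y
                + (T 1 - T (-1) : LaurentPolynomial ℤ)
                    * std.repr (σ (std (x * cs.simple i))) y := by
            intro y
            rw [hexp, map_add, map_smul, Finsupp.add_apply, Finsupp.smul_apply, smul_eq_mul,
              reprMul i]
          have hzero : std.repr (σ (std (x * cs.simple i))) x = 0 := by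
            by_contra hne0
            rcases IH2 x hne0 with heq | hlt
            · have := congrArg cs.length heq
              omega
            · omega
          constructor
          · rw [hrep x, IH1, hzero]
            ring
          · intro y hy
            rw [hrep y] at hy
            have honeof : std.repr (σ (std (x * cs.simple i))) (y * cs.simple i) ≠ 0
                ∨ std.repr (σ (std (x * cs.simple i))) y ≠ 0 := by
              by_contra hcon
              push_neg at hcon
              rw [hcon.1, hcon.2] at hy
              simp at hy
            rcases honeof with h1 | h2
            · rcases IH2 _ h1 with heq | hlt
              · left
                rw [← hx'x, ← heq, mul_assoc, cs.simple_mul_simple_self, mul_one]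
              · right
                have := hlb y i
                omega
            · rcases IH2 _ h2 with heq | hlt
              · right
                rw [heq]
                omega
              · right
                omega
    intro x
    exact key (cs.length x) x rfl
  have hsub : ∀ (p q : LaurentPolynomial ℤ) (n : ℤ), (p - q).coeff n = p.coeff n - q.coeff n := by
    intro p q n
    show (p.coeff - q.coeff) n = _
    exact Finsupp.sub_apply p.coeff q.coeff n
  have hD0 : D = 0 := by
    by_contra hDne
    have hsup : (std.repr D).support.Nonempty := by
      rw [Finsupp.support_nonempty_iff]
      intro hrep0
      exact hDne (by rwa [LinearEquiv.map_eq_zero_iff] at hrep0)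
    obtain ⟨x, hxmem, hxmax⟩ :=
      Finset.exists_max_image (std.repr D).support (fun y => cs.length y) hsup
    have hxne : std.repr D x ≠ 0 := Finsupp.mem_support_iff.mp hxmem
    have hdx : cs.IsRightDescent x r := by
      by_contra hnd
      have hlx : cs.length (x * sr) = cs.length x + 1 := (cs.not_isRightDescent_iff).mp hnd
      have hnot : std.repr D (x * sr) = 0 := by
        by_contra hne0
        have := hxmax (x * sr) (Finsupp.mem_support_iff.mpr hne0)
        omega
      have hxx : x * sr * sr = x := by rw [mul_assoc, cs.simple_mul_simple_self, mul_one]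
      have e4 : std.repr (D * std sr) (x * sr) = std.repr D x := by
        rw [reprMul r D (x * sr), hxx, hnot, mul_zero, add_zero]
      rw [hDr, map_smul, Finsupp.smul_apply, hnot, smul_zero] at e4
      exact hxne e4.symm
    have hdx2 : std.repr D x = h (x * sr) w - T 1 * h x w := by
      rw [hd x, if_pos hdx]
      ring
    have hxsrw : x * sr ≠ w := by
      intro heq
      have h1 : cs.length (x * sr) < cs.length x := hdx
      have h2 : cs.length (w * sr) < cs.length w := hdw
      have h3 : w * sr = x := by rw [← heq, mul_assoc, cs.simple_mul_simple_self, mul_one]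
      rw [heq] at h1
      rw [h3] at h2
      omega
    have hpos : ∀ n : ℤ, n ≤ 0 → (std.repr D x).coeff n = 0 := by
      intro n hn
      rw [hdx2, hsub, hTmul]
      have e5 : (h (x * sr) w).coeff n = 0 := by
        by_cases h0 : h (x * sr) w = 0
        · rw [h0]
          exact Finsupp.zero_apply
        · rcases hsupp w (x * sr) h0 with heq | hlt
          · exact absurd heq hxsrw
          · exact hv w (x * sr) hlt n hn
      have e6 : (h x w).coeff (n - 1) = 0 := by
        by_cases h0 : h x w = 0
        · rw [h0]
          exact Finsupp.zero_apply
        · rcases hsupp w x h0 with heq | hlt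
          · subst heq
            rw [hdiag]
            rw [show ((1 : LaurentPolynomial ℤ)) = T 0 from (T_zero).symm, T_apply]
            rw [if_neg (by omega)]
          · exact hv w x hlt (n - 1) (by omega)
      rw [e5, e6, sub_zero]
    have hinv : invert (std.repr D x) = std.repr D x := by
      have hsum : ((std.repr D).sum fun u cu => cu • std u) = D := by
        conv_rhs => rw [← std.linearCombination_repr D]
        rw [Finsupp.linearCombination_apply]
      have e7 : σ D = (std.repr D).sum fun u cu => invert cu • σ (std u) := by
        calc σ D = σ ((std.repr D).sum fun u cu => cu • std u) := by rw [hsum]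
          _ = (std.repr D).sum fun u cu => σ (cu • std u) := map_finsuppSum σ _ _
          _ = (std.repr D).sum fun u cu => invert cu • σ (std u) :=
              Finsupp.sum_congr fun u _ => hσsmul _ _
      have e8 : std.repr (σ D) x
          = (std.repr D).sum fun u cu => invert cu * std.repr (σ (std u)) x := by
        rw [e7, map_finsuppSum, Finsupp.sum_apply]
        refine Finsupp.sum_congr fun u _ => ?_
        rw [map_smul, Finsupp.smul_apply, smul_eq_mul]
      rw [hσD] at e8
      conv_rhs => rw [e8]
      rw [Finsupp.sum, Finset.sum_eq_single x]
      · rw [(tri x).1, mul_one]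
      · intro u humem hune
        have hz9 : std.repr (σ (std u)) x = 0 := by
          by_contra hne0
          rcases (tri u).2 x hne0 with heq | hlt
          · exact hune heq.symm
          · have := hxmax u humem
            omega
        rw [hz9, mul_zero]
      · intro habs
        exact absurd hxmem habs
    have hdx0 : std.repr D x = 0 := by
      refine LaurentPolynomial.ext fun n => ?_
      show (std.repr D x).coeff n = 0
      rcases le_or_gt n 0 with hn | hn
      · exact hpos n hn
      · have e9 : (std.repr D x).coeff n = (std.repr D x).coeff (-n) := by
          conv_lhs => rw [← hinv]
          exact invert_apply _ _
        rw [e9]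
        exact hpos (-n) (by omega)
    exact hxne hdx0
  have e10 : std.repr D z = 0 := by
    rw [hD0]
    simp
  have hz0 : h (z * sr) w - T (-1) * h z w = 0 := by
    have e11 := hd z
    rw [e10, if_neg hdz, zero_mul, add_zero] at e11
    exact e11.symm
  have hzw2 : h z w = T 1 * h (z * sr) w := by
    have e12 : h (z * sr) w = T (-1) * h z w := sub_eq_zero.mp hz0
    rw [e12, ← mul_assoc, hT0, one_mul]
  have hcoef : (h z w).coeff 1 = (h (z * sr) w).coeff 0 := by
    rw [hzw2, hTmul]
    norm_num
  by_cases h0 : h (z * sr) w = 0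
  · exfalso
    apply hμ
    rw [hzw2, h0, mul_zero]
    exact Finsupp.zero_apply
  · rcases hsupp w (z * sr) h0 with heq | hlt
    · refine ⟨heq.symm, ?_⟩
      rw [hcoef, heq, hdiag]
      rw [show ((1 : LaurentPolynomial ℤ)) = T 0 from (T_zero).symm, T_apply]
      norm_num
    · exfalso
      apply hμ
      rw [hcoef]
      exact hv w (z * sr) hlt 0 le_rfl
end

section
/- Let x, y ∈ S_n be permutations in one-line (string) notation. If x and y are related by an elementary Knuth transformation K_i at position i (i.e. they differ only in positions i−1, i, i+1, where the substrings are related as bca ↔ bac or cab ↔ acb with a < b < c), then exactly one of the simple transpositions s_{i-1}, s_i lies in the right descent set of x, and y equals the right star operation of x with respect to {s_{i-1}, s_i}. -/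
/-- If `x, y ∈ S_n` are related by an elementary Knuth transformation at
position `p` (1-indexed middle position, `1 ≤ p`, `p + 1 < n`, acting on positions
`p-1, p, p+1` in 0-indexed one-line notation), then exactly one of `s_{p-1}, s_p` is a
right descent of `x`, and `y` is the right star operation of `x` with respect to
`{s_{p-1}, s_p}`: the unique element of `{x s_{p-1}, x s_p}` having exactly one of
`s_{p-1}, s_p` as a right descent. -/
theorem stmt_10 {n : ℕ} (x y : Equiv.Perm (Fin n)) (p : ℕ) (h1 : 1 ≤ p) (h2 : p + 1 < n)
    (i0 : Fin n) (i1 : Fin n) (i2 : Fin n)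
    (hi0 : (i0 : ℕ) = p - 1) (hi1 : (i1 : ℕ) = p) (hi2 : (i2 : ℕ) = p + 1)
    -- x and y agree outside positions p-1, p, p+1
    (hfix : ∀ j : Fin n, j ≠ i0 → j ≠ i1 → j ≠ i2 → x j = y j)
    -- and differ by an elementary Knuth transformation: bca ↔ bac or cab ↔ acb
    (hknuth :
      (y i0 = x i0 ∧ y i1 = x i2 ∧ y i2 = x i1 ∧
        (x i1 < x i0 ∧ x i0 < x i2 ∨ x i2 < x i0 ∧ x i0 < x i1)) ∨
      (y i2 = x i2 ∧ y i0 = x i1 ∧ y i1 = x i0 ∧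
        (x i0 < x i2 ∧ x i2 < x i1 ∨ x i1 < x i2 ∧ x i2 < x i0))) :
    -- exactly one of s_{p-1}, s_p is a right descent of x
    Xor' (x i1 < x i0) (x i2 < x i1) ∧
    -- y is obtained from x by right multiplication by s_{p-1} or s_p
    (y = x * Equiv.swap i0 i1 ∨ y = x * Equiv.swap i1 i2) ∧
    -- y lies in D_R(s_{p-1}, s_p)
    Xor' (y i1 < y i0) (y i2 < y i1) ∧
    -- and y is the unique such element, i.e. the right star operation applied to x
    (∀ z : Equiv.Perm (Fin n),
      (z = x * Equiv.swap i0 i1 ∨ z = x * Equiv.swap i1 i2) →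
      Xor' (z i1 < z i0) (z i2 < z i1) → z = y) := by
  have h01 : i0 ≠ i1 := by intro h; rw [Fin.ext_iff, hi0, hi1] at h; omega
  have h12 : i1 ≠ i2 := by intro h; rw [Fin.ext_iff, hi1, hi2] at h; omega
  have h02 : i0 ≠ i2 := by intro h; rw [Fin.ext_iff, hi0, hi2] at h; omega
  have eA : ∀ w : Equiv.Perm (Fin n), (w * Equiv.swap i0 i1) i0 = w i1 ∧
      (w * Equiv.swap i0 i1) i1 = w i0 ∧ (w * Equiv.swap i0 i1) i2 = w i2 := by
    intro w
    refine ⟨?_, ?_, ?_⟩ <;>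
      simp [Equiv.Perm.mul_apply, Equiv.swap_apply_of_ne_of_ne, h02.symm, h12.symm]
  have eB : ∀ w : Equiv.Perm (Fin n), (w * Equiv.swap i1 i2) i0 = w i0 ∧
      (w * Equiv.swap i1 i2) i1 = w i2 ∧ (w * Equiv.swap i1 i2) i2 = w i1 := by
    intro w
    refine ⟨?_, ?_, ?_⟩ <;>
      simp [Equiv.Perm.mul_apply, Equiv.swap_apply_of_ne_of_ne, h01, h02]
  rcases hknuth with ⟨e0, e1, e2, hord⟩ | ⟨e0, e1, e2, hord⟩
  · -- y = x * swap i1 i2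
    have hy : y = x * Equiv.swap i1 i2 := by
      apply Equiv.ext; intro j
      by_cases hj0 : j = i0
      · subst hj0; rw [(eB x).1, e0]
      · by_cases hj1 : j = i1
        · subst hj1; rw [(eB x).2.1, e1]
        · by_cases hj2 : j = i2
          · subst hj2; rw [(eB x).2.2, e2]
          · rw [← hfix j hj0 hj1 hj2]
            simp [Equiv.Perm.mul_apply, Equiv.swap_apply_of_ne_of_ne, hj1, hj2]
    refine ⟨?_, Or.inr hy, ?_, ?_⟩
    · simp only [Xor', xor_def, Fin.lt_def] at hord ⊢; omega
    · rw [e0, e1, e2]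
      simp only [Xor', xor_def, Fin.lt_def] at hord ⊢; omega
    · intro z hz hxor
      rcases hz with hz | hz
      · exfalso
        rw [hz, (eA x).1, (eA x).2.1, (eA x).2.2] at hxor
        simp only [Xor', xor_def, Fin.lt_def] at hord hxor; omega
      · rw [hz, hy]
  · -- y = x * swap i0 i1
    have hy : y = x * Equiv.swap i0 i1 := by
      apply Equiv.ext; intro j
      by_cases hj0 : j = i0
      · subst hj0; rw [(eA x).1, e1]
      · by_cases hj1 : j = i1
        · subst hj1; rw [(eA x).2.1, e2]
        · by_cases hj2 : j = i2
          · subst hj2; rw [(eA x).2.2, e0]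
          · rw [← hfix j hj0 hj1 hj2]
            simp [Equiv.Perm.mul_apply, Equiv.swap_apply_of_ne_of_ne, hj0, hj1]
    refine ⟨?_, Or.inl hy, ?_, ?_⟩
    · simp only [Xor', xor_def, Fin.lt_def] at hord ⊢; omega
    · rw [e0, e1, e2]
      simp only [Xor', xor_def, Fin.lt_def] at hord ⊢; omega
    · intro z hz hxor
      rcases hz with hz | hz
      · rw [hz, hy]
      · exfalso
        rw [hz, (eB x).1, (eB x).2.1, (eB x).2.2] at hxor
        simp only [Xor', xor_def, Fin.lt_def] at hord hxor; omega
end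

section
/- For permutations x, y ∈ S_n: x and y are Knuth equivalent (related by a finite sequence of elementary Knuth transformations) if and only if P(x) = P(y), where P denotes the Robinson–Schensted insertion tableau. -/
/-- Robinson–Schensted row insertion into a single row: replace the leftmost entry
strictly greater than `k` (returning the bumped entry), or append `k` at the end. -/
def rowInsert (r : List ℕ) (k : ℕ) : List ℕ × Option ℕ :=
  match r.findIdx? (fun x => decide (k < x)) with
  | none => (r ++ [k], none)
  | some j => (r.set j k, r[j]?)

/-- Robinson–Schensted insertion of `k` into a tableau (list of rows). -/
def insertTab : List (List ℕ) → ℕ → List (List ℕ)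
  | [], k => [[k]]
  | r :: rest, k =>
    match rowInsert r k with
    | (r', none) => r' :: rest
    | (r', some m) => r' :: insertTab rest m

/-- The insertion (`P`-) tableau of a word. -/
def Ptab (l : List ℕ) : List (List ℕ) := l.foldl insertTab []

/-- Add a box labelled `step` at the end of row `j` of `Q`. -/
def addBox (Q : List (List ℕ)) (j step : ℕ) : List (List ℕ) :=
  if j < Q.length then Q.set j ((Q.getD j []) ++ [step]) else Q ++ [[step]]

/-- The index of the row in which `P'` grew relative to `P`. -/
def growRow (P P' : List (List ℕ)) : ℕ :=
  (List.range P'.length).findIdx (fun j => decide ((P.getD j []).length < (P'.getD j []).length))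

/-- The recording (`Q`-) tableau of a word. -/
def Qtab (l : List ℕ) : List (List ℕ) :=
  ((l.zipIdx.map Prod.swap).foldl (fun pq s =>
    let P' := insertTab pq.1 s.2
    (P', addBox pq.2 (growRow pq.1 P') (s.1 + 1)))
    (([] : List (List ℕ)), ([] : List (List ℕ)))).2

/-- The (1-based) one-line notation of a permutation of `Fin n`. -/
def permWord {n : ℕ} (w : Equiv.Perm (Fin n)) : List ℕ :=
  (List.finRange n).map (fun i => (w i : ℕ) + 1)


/-- An elementary Knuth transformation relating `x` and `y`: at some (0-indexed) middle
position `p` with `1 ≤ p` and `p + 1 < n`, the one-line notations agree outside positions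
`p-1, p, p+1`, and on those positions are related as `bca ↔ bac` or `cab ↔ acb`
with `a < b < c`. -/
def KnuthMove {n : ℕ} (x y : Equiv.Perm (Fin n)) : Prop :=
  ∃ p : ℕ, ∃ _ : 1 ≤ p, ∃ h2 : p + 1 < n,
    let i0 : Fin n := ⟨p - 1, by omega⟩
    let i1 : Fin n := ⟨p, by omega⟩
    let i2 : Fin n := ⟨p + 1, h2⟩
    (∀ j : Fin n, j ≠ i0 → j ≠ i1 → j ≠ i2 → x j = y j) ∧
    ((y i0 = x i0 ∧ y i1 = x i2 ∧ y i2 = x i1 ∧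
        (x i1 < x i0 ∧ x i0 < x i2 ∨ x i2 < x i0 ∧ x i0 < x i1)) ∨
     (y i2 = x i2 ∧ y i0 = x i1 ∧ y i1 = x i0 ∧
        (x i0 < x i2 ∧ x i2 < x i1 ∨ x i1 < x i2 ∧ x i2 < x i0)))

/-! ### basic lemmas -/

def insertWord (T : List (List ℕ)) (l : List ℕ) : List (List ℕ) := l.foldl insertTab T

lemma insertWord_append (T : List (List ℕ)) (l₁ l₂ : List ℕ) :
    insertWord T (l₁ ++ l₂) = insertWord (insertWord T l₁) l₂ := List.foldl_append ..

lemma Ptab_eq_insertWord (l : List ℕ) : Ptab l = insertWord [] l := rfl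

lemma rowInsert_append (s : List ℕ) (k : ℕ) (hs : ∀ x ∈ s, x < k) :
    rowInsert s k = (s ++ [k], none) := by
  have : s.findIdx? (fun x => decide (k < x)) = none := by
    rw [List.findIdx?_eq_none_iff]
    intro x hx
    simpa using Nat.not_lt.2 (le_of_lt (hs x hx))
  simp [rowInsert, this]

lemma rowInsert_bump (s : List ℕ) (m : ℕ) (t : List ℕ) (k : ℕ)
    (hs : ∀ x ∈ s, x < k) (hm : k < m) :
    rowInsert (s ++ m :: t) k = (s ++ k :: t, some m) := by
  induction s with
  | nil =>
    simp only [List.nil_append, rowInsert, List.findIdx?_cons]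
    simp [hm]
  | cons x s ih =>
    have hx : x < k := hs x (by simp)
    have ih' := ih (fun y hy => hs y (by simp [hy]))
    simp only [List.cons_append, rowInsert, List.findIdx?_cons, decide_eq_true_eq] at *
    rw [if_neg (by omega)]
    rcases h : List.findIdx? (fun x => decide (k < x)) (s ++ m :: t) with _ | j
    · simp [h] at ih'
    · simp only [h, Option.map_some] at *
      have h1 : (s ++ m :: t).set j k = s ++ k :: t := by
        have := congrArg Prod.fst ih'; simpa using this
      have h2 : (s ++ m :: t)[j]? = some m := by
        have := congrArg Prod.snd ih'; simpa using this
      simp [h1, h2]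

lemma insertTab_app (s : List ℕ) (rest : List (List ℕ)) (k : ℕ) (hs : ∀ x ∈ s, x < k) :
    insertTab (s :: rest) k = (s ++ [k]) :: rest := by
  simp [insertTab, rowInsert_append s k hs]

lemma insertTab_bump (s : List ℕ) (m : ℕ) (t : List ℕ) (rest : List (List ℕ)) (k : ℕ)
    (hs : ∀ x ∈ s, x < k) (hm : k < m) :
    insertTab ((s ++ m :: t) :: rest) k = (s ++ k :: t) :: insertTab rest m := by
  simp [insertTab, rowInsert_bump s m t k hs hm]

/-- decompose a sorted list around a value not in it -/
lemma sorted_decomp (r : List ℕ) (k : ℕ) (hr : r.Pairwise (· < ·)) (hk : k ∉ r) :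
    ∃ s t, r = s ++ t ∧ (∀ x ∈ s, x < k) ∧ (∀ x ∈ t, k < x) := by
  refine ⟨r.takeWhile (fun x => decide (x < k)), r.dropWhile (fun x => decide (x < k)),
    List.takeWhile_append_dropWhile.symm, ?_, ?_⟩
  · intro x hx
    have := List.mem_takeWhile_imp hx
    simpa using this
  · intro x hx
    rcases h : r.dropWhile (fun x => decide (x < k)) with _ | ⟨y, t'⟩
    · simp [h] at hx
    · have hy : ¬ (y < k) := by
        have := List.head?_dropWhile_not (fun x => decide (x < k)) r
        rw [h] at this; simpa using this
      have hyr : y ∈ r := by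
        have : y ∈ r.dropWhile (fun x => decide (x < k)) := by simp [h]
        exact List.dropWhile_sublist _ |>.mem this
      have hyk : k < y := lt_of_le_of_ne (Nat.not_lt.1 hy) (fun e => hk (e ▸ hyr))
      rw [h] at hx
      rcases List.mem_cons.1 hx with rfl | hx'
      · exact hyk
      · -- x after y in sorted list
        have hsub : List.Pairwise (· < ·) (y :: t') := by
          have : List.Sublist (y :: t') r := h ▸ List.dropWhile_sublist _
          exact hr.sublist this
        exact lt_trans hyk (List.rel_of_pairwise_cons hsub hx')

lemma lt_app {K : ℕ} {l₁ l₂ : List ℕ} (h₁ : ∀ x ∈ l₁, x < K) (h₂ : ∀ x ∈ l₂, x < K) :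
    ∀ x ∈ l₁ ++ l₂, x < K := by
  intro x hx; rcases List.mem_append.mp hx with h | h; exacts [h₁ x h, h₂ x h]

lemma lt_cons {K y : ℕ} {l : List ℕ} (hy : y < K) (h : ∀ x ∈ l, x < K) :
    ∀ x ∈ y :: l, x < K := by
  intro x hx; rcases List.mem_cons.mp hx with rfl | h'; exacts [hy, h x h']

lemma lt_nil {K : ℕ} : ∀ x ∈ ([] : List ℕ), x < K := by simp

/-! ### key lemma: Knuth moves commute with insertion -/

lemma keyA : ∀ (T : List (List Nat)), (∀ row ∈ T, row.Pairwise (· < ·)) → T.flatten.Nodup →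
    ∀ a b c : Nat, a < b → b < c →
    a ∉ T.flatten → b ∉ T.flatten → c ∉ T.flatten →
    (insertWord T [b, a, c] = insertWord T [b, c, a]) ∧
    (insertWord T [a, c, b] = insertWord T [c, a, b]) := by
  intro T
  induction T with
  | nil =>
    intro _ _ a b c hab hbc _ _ _
    have hac : a < c := lt_trans hab hbc
    have h1 : ¬ (b < a) := by omega
    have h2 : ¬ (c < a) := by omega
    have h3 : ¬ (c < b) := by omega
    constructor
    · show insertTab (insertTab (insertTab [] b) a) c = insertTab (insertTab (insertTab [] b) c) a
      simp [insertTab, rowInsert, List.findIdx?_cons, hab, hbc, hac, h1, h2, h3]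
    · show insertTab (insertTab (insertTab [] a) c) b = insertTab (insertTab (insertTab [] c) a) b
      simp [insertTab, rowInsert, List.findIdx?_cons, hab, hbc, hac, h1, h2, h3]
  | cons r rest IH =>
    intro hsort hnd a b c hab hbc ha hb hc
    have hac : a < c := lt_trans hab hbc
    have hrs : r.Pairwise (· < ·) := hsort r (List.mem_cons_self)
    have hrestsort : ∀ row ∈ rest, row.Pairwise (· < ·) := fun row h => hsort row (List.mem_cons_of_mem _ h)
    rw [List.flatten_cons] at hnd ha hb hc
    rcases List.nodup_append'.mp hnd with ⟨hndr, hndrest, hdisj0⟩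
    have hdisj : ∀ x ∈ r, x ∉ rest.flatten := fun x hx hx' => hdisj0 hx hx'
    have har : a ∉ r := fun h => ha (List.mem_append_left _ h)
    have hbr : b ∉ r := fun h => hb (List.mem_append_left _ h)
    have hcr : c ∉ r := fun h => hc (List.mem_append_left _ h)
    have harest : a ∉ rest.flatten := fun h => ha (List.mem_append_right _ h)
    have hbrest : b ∉ rest.flatten := fun h => hb (List.mem_append_right _ h)
    have hcrest : c ∉ rest.flatten := fun h => hc (List.mem_append_right _ h)
    obtain ⟨s1, u, hru, h1, hu⟩ := sorted_decomp r a hrs har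
    subst hru
    have hus : u.Pairwise (· < ·) := (List.pairwise_append.mp hrs).2.1
    have hbu : b ∉ u := fun h => hbr (List.mem_append_right _ h)
    obtain ⟨s2, v, huv, B2b, hv⟩ := sorted_decomp u b hus hbu
    subst huv
    have hvs : v.Pairwise (· < ·) := (List.pairwise_append.mp hus).2.1
    have hcv : c ∉ v := fun h => hcr (List.mem_append_right _ (List.mem_append_right _ h))
    obtain ⟨s3, s4, hvw, B3c, B4c⟩ := sorted_decomp v c hvs hcv
    subst hvw
    have hs3 : s3.Pairwise (· < ·) := (List.pairwise_append.mp hvs).1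
    have hs4 : s4.Pairwise (· < ·) := (List.pairwise_append.mp hvs).2.1
    have B2a : ∀ x ∈ s2, a < x := fun x h => hu x (List.mem_append_left _ h)
    have B3b : ∀ x ∈ s3, b < x := fun x h => hv x (List.mem_append_left _ h)
    have B4b : ∀ x ∈ s4, b < x := fun x h => hv x (List.mem_append_right _ h)
    have B1b : ∀ x ∈ s1, x < b := fun x h => lt_trans (h1 x h) hab
    have B1c : ∀ x ∈ s1, x < c := fun x h => lt_trans (h1 x h) hac
    have B2c : ∀ x ∈ s2, x < c := fun x h => lt_trans (B2b x h) hbc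
    have Pb : ∀ x ∈ s1 ++ s2, x < b := lt_app B1b B2b
    refine ⟨?_, ?_⟩
    · -- bac vs bca
      show insertTab (insertTab (insertTab ((s1 ++ (s2 ++ (s3 ++ s4))) :: rest) b) a) c
         = insertTab (insertTab (insertTab ((s1 ++ (s2 ++ (s3 ++ s4))) :: rest) b) c) a
      rcases s3 with _ | ⟨e, s3'⟩
      · -- s3 = []
        rcases s4 with _ | ⟨g, s4'⟩
        · -- s4 = [] : b appends
          rw [show s1 ++ (s2 ++ (([] : List ℕ) ++ ([] : List ℕ))) = s1 ++ s2 by simp]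
          rw [insertTab_app (s1 ++ s2) rest b Pb]
          rcases s2 with _ | ⟨d, s2'⟩
          · rw [show (s1 ++ ([] : List ℕ)) ++ [b] = s1 ++ b :: [] by simp]
            rw [insertTab_bump s1 b [] rest a h1 hab]
            rw [insertTab_app (s1 ++ a :: []) (insertTab rest b) c (lt_app B1c (lt_cons hac lt_nil))]
            rw [insertTab_app (s1 ++ b :: []) rest c (lt_app B1c (lt_cons hbc lt_nil))]
            rw [show (s1 ++ b :: []) ++ [c] = s1 ++ b :: [c] by simp]
            rw [insertTab_bump s1 b [c] rest a h1 hab]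
            simp
          · have had : a < d := B2a d (List.mem_cons_self)
            have B2'c : ∀ x ∈ s2', x < c := fun x h => B2c x (List.mem_cons_of_mem _ h)
            rw [show (s1 ++ d :: s2') ++ [b] = s1 ++ d :: (s2' ++ [b]) by simp]
            rw [insertTab_bump s1 d (s2' ++ [b]) rest a h1 had]
            rw [insertTab_app (s1 ++ a :: (s2' ++ [b])) (insertTab rest d) c
              (lt_app B1c (lt_cons hac (lt_app B2'c (lt_cons hbc lt_nil))))]
            rw [insertTab_app (s1 ++ d :: (s2' ++ [b])) rest c
              (lt_app B1c (lt_cons (B2c d (List.mem_cons_self)) (lt_app B2'c (lt_cons hbc lt_nil))))]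
            rw [show (s1 ++ d :: (s2' ++ [b])) ++ [c] = s1 ++ d :: ((s2' ++ [b]) ++ [c]) by simp]
            rw [insertTab_bump s1 d ((s2' ++ [b]) ++ [c]) rest a h1 had]
            simp
        · -- s4 = g :: s4'
          have hcg : c < g := B4c g (List.mem_cons_self)
          have hbg : b < g := by omega
          rw [show s1 ++ (s2 ++ (([] : List ℕ) ++ g :: s4')) = (s1 ++ s2) ++ g :: s4' by simp]
          rw [insertTab_bump (s1 ++ s2) g s4' rest b Pb hbg]
          rcases s2 with _ | ⟨d, s2'⟩
          · rw [show (s1 ++ ([] : List ℕ)) ++ b :: s4' = s1 ++ b :: s4' by simp]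
            rw [insertTab_bump s1 b s4' (insertTab rest g) a h1 hab]
            rcases s4' with _ | ⟨h', s4''⟩
            · rw [insertTab_app (s1 ++ a :: []) (insertTab (insertTab rest g) b) c (lt_app B1c (lt_cons hac lt_nil))]
              rw [insertTab_app (s1 ++ b :: []) (insertTab rest g) c (lt_app B1c (lt_cons hbc lt_nil))]
              rw [show (s1 ++ b :: []) ++ [c] = s1 ++ b :: [c] by simp]
              rw [insertTab_bump s1 b [c] (insertTab rest g) a h1 hab]
              simp
            · have hch : c < h' := B4c h' (by simp)
              have hgh : g < h' := List.rel_of_pairwise_cons hs4 (List.mem_cons_self)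
              rw [show s1 ++ a :: h' :: s4'' = (s1 ++ [a]) ++ h' :: s4'' by simp]
              rw [insertTab_bump (s1 ++ [a]) h' s4'' (insertTab (insertTab rest g) b) c
                (lt_app B1c (lt_cons hac lt_nil)) hch]
              rw [show s1 ++ b :: h' :: s4'' = (s1 ++ [b]) ++ h' :: s4'' by simp]
              rw [insertTab_bump (s1 ++ [b]) h' s4'' (insertTab rest g) c
                (lt_app B1c (lt_cons hbc lt_nil)) hch]
              rw [show (s1 ++ [b]) ++ c :: s4'' = s1 ++ b :: (c :: s4'') by simp]
              rw [insertTab_bump s1 b (c :: s4'') (insertTab (insertTab rest g) h') a h1 hab]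
              have hIH := (IH hrestsort hndrest b g h' hbg (by omega) hbrest
                (hdisj g (by simp)) (hdisj h' (by simp))).1
              have hIH' : insertTab (insertTab (insertTab rest g) b) h'
                  = insertTab (insertTab (insertTab rest g) h') b := hIH
              rw [hIH']
              simp
          · have had : a < d := B2a d (List.mem_cons_self)
            have B2'c : ∀ x ∈ s2', x < c := fun x h => B2c x (List.mem_cons_of_mem _ h)
            have hdb : d < b := B2b d (List.mem_cons_self)
            rw [show (s1 ++ d :: s2') ++ b :: s4' = s1 ++ d :: (s2' ++ b :: s4') by simp]
            rw [insertTab_bump s1 d (s2' ++ b :: s4') (insertTab rest g) a h1 had]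
            rcases s4' with _ | ⟨h', s4''⟩
            · rw [insertTab_app (s1 ++ a :: (s2' ++ b :: [])) (insertTab (insertTab rest g) d) c
                (lt_app B1c (lt_cons hac (lt_app B2'c (lt_cons hbc lt_nil))))]
              rw [insertTab_app (s1 ++ d :: (s2' ++ b :: [])) (insertTab rest g) c
                (lt_app B1c (lt_cons (B2c d (List.mem_cons_self)) (lt_app B2'c (lt_cons hbc lt_nil))))]
              rw [show (s1 ++ d :: (s2' ++ b :: [])) ++ [c] = s1 ++ d :: ((s2' ++ b :: []) ++ [c]) by simp]
              rw [insertTab_bump s1 d ((s2' ++ b :: []) ++ [c]) (insertTab rest g) a h1 had]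
              simp
            · have hch : c < h' := B4c h' (by simp)
              have hgh : g < h' := List.rel_of_pairwise_cons hs4 (List.mem_cons_self)
              rw [show s1 ++ a :: (s2' ++ b :: h' :: s4'') = (s1 ++ a :: (s2' ++ [b])) ++ h' :: s4'' by simp]
              rw [insertTab_bump (s1 ++ a :: (s2' ++ [b])) h' s4'' (insertTab (insertTab rest g) d) c
                (lt_app B1c (lt_cons hac (lt_app B2'c (lt_cons hbc lt_nil)))) hch]
              rw [show s1 ++ d :: (s2' ++ b :: h' :: s4'') = (s1 ++ d :: (s2' ++ [b])) ++ h' :: s4'' by simp]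
              rw [insertTab_bump (s1 ++ d :: (s2' ++ [b])) h' s4'' (insertTab rest g) c
                (lt_app B1c (lt_cons (B2c d (List.mem_cons_self)) (lt_app B2'c (lt_cons hbc lt_nil)))) hch]
              rw [show (s1 ++ d :: (s2' ++ [b])) ++ c :: s4'' = s1 ++ d :: ((s2' ++ [b]) ++ c :: s4'') by simp]
              rw [insertTab_bump s1 d ((s2' ++ [b]) ++ c :: s4'') (insertTab (insertTab rest g) h') a h1 had]
              have hIH := (IH hrestsort hndrest d g h' (by omega) (by omega)
                (hdisj d (by simp)) (hdisj g (by simp)) (hdisj h' (by simp))).1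
              have hIH' : insertTab (insertTab (insertTab rest g) d) h'
                  = insertTab (insertTab (insertTab rest g) h') d := hIH
              rw [hIH']
              simp
      · -- s3 = e :: s3'
        have hbe : b < e := B3b e (List.mem_cons_self)
        have hec : e < c := B3c e (List.mem_cons_self)
        have B3'c : ∀ x ∈ s3', x < c := fun x h => B3c x (List.mem_cons_of_mem _ h)
        rw [show s1 ++ (s2 ++ ((e :: s3') ++ s4)) = (s1 ++ s2) ++ e :: (s3' ++ s4) by simp]
        rw [insertTab_bump (s1 ++ s2) e (s3' ++ s4) rest b Pb hbe]
        rcases s2 with _ | ⟨d, s2'⟩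
        · rw [show (s1 ++ ([] : List ℕ)) ++ b :: (s3' ++ s4) = s1 ++ b :: (s3' ++ s4) by simp]
          rw [insertTab_bump s1 b (s3' ++ s4) (insertTab rest e) a h1 hab]
          rcases s4 with _ | ⟨g, s4'⟩
          · rw [insertTab_app (s1 ++ a :: (s3' ++ ([] : List ℕ))) (insertTab (insertTab rest e) b) c
              (lt_app B1c (lt_cons hac (lt_app B3'c lt_nil)))]
            rw [insertTab_app (s1 ++ b :: (s3' ++ ([] : List ℕ))) (insertTab rest e) c
              (lt_app B1c (lt_cons hbc (lt_app B3'c lt_nil)))]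
            rw [show (s1 ++ b :: (s3' ++ ([] : List ℕ))) ++ [c] = s1 ++ b :: ((s3' ++ ([] : List ℕ)) ++ [c]) by simp]
            rw [insertTab_bump s1 b ((s3' ++ ([] : List ℕ)) ++ [c]) (insertTab rest e) a h1 hab]
            simp
          · have hcg : c < g := B4c g (List.mem_cons_self)
            rw [show s1 ++ a :: (s3' ++ g :: s4') = (s1 ++ a :: s3') ++ g :: s4' by simp]
            rw [insertTab_bump (s1 ++ a :: s3') g s4' (insertTab (insertTab rest e) b) c
              (lt_app B1c (lt_cons hac B3'c)) hcg]
            rw [show s1 ++ b :: (s3' ++ g :: s4') = (s1 ++ b :: s3') ++ g :: s4' by simp]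
            rw [insertTab_bump (s1 ++ b :: s3') g s4' (insertTab rest e) c
              (lt_app B1c (lt_cons hbc B3'c)) hcg]
            rw [show (s1 ++ b :: s3') ++ c :: s4' = s1 ++ b :: (s3' ++ c :: s4') by simp]
            rw [insertTab_bump s1 b (s3' ++ c :: s4') (insertTab (insertTab rest e) g) a h1 hab]
            have hIH := (IH hrestsort hndrest b e g hbe (by omega) hbrest
              (hdisj e (by simp)) (hdisj g (by simp))).1
            have hIH' : insertTab (insertTab (insertTab rest e) b) g
                = insertTab (insertTab (insertTab rest e) g) b := hIH
            rw [hIH']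
            simp
        · have had : a < d := B2a d (List.mem_cons_self)
          have hdb : d < b := B2b d (List.mem_cons_self)
          have B2'c : ∀ x ∈ s2', x < c := fun x h => B2c x (List.mem_cons_of_mem _ h)
          rw [show (s1 ++ d :: s2') ++ b :: (s3' ++ s4) = s1 ++ d :: (s2' ++ b :: (s3' ++ s4)) by simp]
          rw [insertTab_bump s1 d (s2' ++ b :: (s3' ++ s4)) (insertTab rest e) a h1 had]
          rcases s4 with _ | ⟨g, s4'⟩
          · rw [insertTab_app (s1 ++ a :: (s2' ++ b :: (s3' ++ ([] : List ℕ)))) (insertTab (insertTab rest e) d) c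
              (lt_app B1c (lt_cons hac (lt_app B2'c (lt_cons hbc (lt_app B3'c lt_nil)))))]
            rw [insertTab_app (s1 ++ d :: (s2' ++ b :: (s3' ++ ([] : List ℕ)))) (insertTab rest e) c
              (lt_app B1c (lt_cons (by omega) (lt_app B2'c (lt_cons hbc (lt_app B3'c lt_nil)))))]
            rw [show (s1 ++ d :: (s2' ++ b :: (s3' ++ ([] : List ℕ)))) ++ [c]
                = s1 ++ d :: ((s2' ++ b :: (s3' ++ ([] : List ℕ))) ++ [c]) by simp]
            rw [insertTab_bump s1 d ((s2' ++ b :: (s3' ++ ([] : List ℕ))) ++ [c]) (insertTab rest e) a h1 had]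
            simp
          · have hcg : c < g := B4c g (List.mem_cons_self)
            rw [show s1 ++ a :: (s2' ++ b :: (s3' ++ g :: s4')) = (s1 ++ a :: (s2' ++ b :: s3')) ++ g :: s4' by simp]
            rw [insertTab_bump (s1 ++ a :: (s2' ++ b :: s3')) g s4' (insertTab (insertTab rest e) d) c
              (lt_app B1c (lt_cons hac (lt_app B2'c (lt_cons hbc B3'c)))) hcg]
            rw [show s1 ++ d :: (s2' ++ b :: (s3' ++ g :: s4')) = (s1 ++ d :: (s2' ++ b :: s3')) ++ g :: s4' by simp]
            rw [insertTab_bump (s1 ++ d :: (s2' ++ b :: s3')) g s4' (insertTab rest e) c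
              (lt_app B1c (lt_cons (by omega) (lt_app B2'c (lt_cons hbc B3'c)))) hcg]
            rw [show (s1 ++ d :: (s2' ++ b :: s3')) ++ c :: s4' = s1 ++ d :: ((s2' ++ b :: s3') ++ c :: s4') by simp]
            rw [insertTab_bump s1 d ((s2' ++ b :: s3') ++ c :: s4') (insertTab (insertTab rest e) g) a h1 had]
            have hIH := (IH hrestsort hndrest d e g (by omega) (by omega)
              (hdisj d (by simp)) (hdisj e (by simp)) (hdisj g (by simp))).1
            have hIH' : insertTab (insertTab (insertTab rest e) d) g
                = insertTab (insertTab (insertTab rest e) g) d := hIH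
            rw [hIH']
            simp
    · -- acb vs cab
      show insertTab (insertTab (insertTab ((s1 ++ (s2 ++ (s3 ++ s4))) :: rest) a) c) b
         = insertTab (insertTab (insertTab ((s1 ++ (s2 ++ (s3 ++ s4))) :: rest) c) a) b
      rcases s2 with _ | ⟨d, s2'⟩
      · -- s2 = []
        rcases s3 with _ | ⟨e, s3'⟩
        · -- s3 = []
          rcases s4 with _ | ⟨g, s4'⟩
          · -- s4 = [] : everything appends/simple
            rw [show s1 ++ (([] : List ℕ) ++ (([] : List ℕ) ++ ([] : List ℕ))) = s1 by simp]
            rw [insertTab_app s1 rest a h1]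
            rw [insertTab_app (s1 ++ [a]) rest c (lt_app B1c (lt_cons hac lt_nil))]
            rw [insertTab_bump (s1 ++ [a]) c [] rest b (lt_app B1b (lt_cons hab lt_nil)) hbc]
            rw [insertTab_app s1 rest c B1c]
            rw [insertTab_bump s1 c [] rest a h1 hac]
            rw [insertTab_app (s1 ++ a :: []) (insertTab rest c) b (lt_app B1b (lt_cons hab lt_nil))]
          · -- s4 = g :: s4'
            have hcg : c < g := B4c g (List.mem_cons_self)
            have hag : a < g := by omega
            rw [show s1 ++ (([] : List ℕ) ++ (([] : List ℕ) ++ g :: s4')) = s1 ++ g :: s4' by simp]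
            rw [insertTab_bump s1 g s4' rest a h1 hag]
            rcases s4' with _ | ⟨h', s4''⟩
            · rw [insertTab_app (s1 ++ a :: []) (insertTab rest g) c (lt_app B1c (lt_cons hac lt_nil))]
              rw [show (s1 ++ a :: []) ++ [c] = (s1 ++ [a]) ++ c :: [] by simp]
              rw [insertTab_bump (s1 ++ [a]) c [] (insertTab rest g) b (lt_app B1b (lt_cons hab lt_nil)) hbc]
              rw [insertTab_bump s1 g [] rest c B1c hcg]
              rw [insertTab_bump s1 c [] (insertTab rest g) a h1 hac]
              rw [insertTab_app (s1 ++ a :: []) (insertTab (insertTab rest g) c) b (lt_app B1b (lt_cons hab lt_nil))]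
            · have hch : c < h' := B4c h' (by simp)
              have hgh : g < h' := List.rel_of_pairwise_cons hs4 (List.mem_cons_self)
              rw [show s1 ++ a :: h' :: s4'' = (s1 ++ [a]) ++ h' :: s4'' by simp]
              rw [insertTab_bump (s1 ++ [a]) h' s4'' (insertTab rest g) c (lt_app B1c (lt_cons hac lt_nil)) hch]
              rw [insertTab_bump (s1 ++ [a]) c s4'' (insertTab (insertTab rest g) h') b
                (lt_app B1b (lt_cons hab lt_nil)) hbc]
              rw [insertTab_bump s1 g (h' :: s4'') rest c B1c hcg]
              rw [insertTab_bump s1 c (h' :: s4'') (insertTab rest g) a h1 hac]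
              rw [show s1 ++ a :: h' :: s4'' = (s1 ++ [a]) ++ h' :: s4'' by simp]
              rw [insertTab_bump (s1 ++ [a]) h' s4'' (insertTab (insertTab rest g) c) b
                (lt_app B1b (lt_cons hab lt_nil)) (by omega)]
              have hIH := (IH hrestsort hndrest c g h' hcg hgh hcrest
                (hdisj g (by simp)) (hdisj h' (by simp))).1
              have hIH' : insertTab (insertTab (insertTab rest g) c) h'
                  = insertTab (insertTab (insertTab rest g) h') c := hIH
              rw [hIH']
        · -- s3 = e :: s3'
          have hbe : b < e := B3b e (List.mem_cons_self)
          have hec : e < c := B3c e (List.mem_cons_self)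
          have hae : a < e := by omega
          have B3'c : ∀ x ∈ s3', x < c := fun x h => B3c x (List.mem_cons_of_mem _ h)
          have B3'b : ∀ x ∈ s3', b < x := fun x h => B3b x (List.mem_cons_of_mem _ h)
          rw [show s1 ++ (([] : List ℕ) ++ ((e :: s3') ++ s4)) = s1 ++ e :: (s3' ++ s4) by simp]
          rw [insertTab_bump s1 e (s3' ++ s4) rest a h1 hae]
          rcases s4 with _ | ⟨g, s4'⟩
          · rw [insertTab_app (s1 ++ a :: (s3' ++ ([] : List ℕ))) (insertTab rest e) c
              (lt_app B1c (lt_cons hac (lt_app B3'c lt_nil)))]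
            rw [insertTab_app (s1 ++ e :: (s3' ++ ([] : List ℕ))) rest c
              (lt_app B1c (lt_cons hec (lt_app B3'c lt_nil)))]
            rw [show (s1 ++ e :: (s3' ++ ([] : List ℕ))) ++ [c] = s1 ++ e :: ((s3' ++ ([] : List ℕ)) ++ [c]) by simp]
            rw [insertTab_bump s1 e ((s3' ++ ([] : List ℕ)) ++ [c]) rest a h1 hae]
            rcases s3' with _ | ⟨f, s3''⟩
            · rw [show (s1 ++ a :: (([] : List ℕ) ++ ([] : List ℕ))) ++ [c] = (s1 ++ [a]) ++ c :: [] by simp]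
              rw [show s1 ++ a :: ((([] : List ℕ) ++ ([] : List ℕ)) ++ [c]) = (s1 ++ [a]) ++ c :: [] by simp]
            · rw [show (s1 ++ a :: ((f :: s3'') ++ ([] : List ℕ))) ++ [c] = (s1 ++ [a]) ++ f :: (s3'' ++ [c]) by simp]
              rw [show s1 ++ a :: (((f :: s3'') ++ ([] : List ℕ)) ++ [c]) = (s1 ++ [a]) ++ f :: (s3'' ++ [c]) by simp]
          · have hcg : c < g := B4c g (List.mem_cons_self)
            rw [show s1 ++ a :: (s3' ++ g :: s4') = (s1 ++ a :: s3') ++ g :: s4' by simp]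
            rw [insertTab_bump (s1 ++ a :: s3') g s4' (insertTab rest e) c
              (lt_app B1c (lt_cons hac B3'c)) hcg]
            rw [show s1 ++ e :: (s3' ++ g :: s4') = (s1 ++ e :: s3') ++ g :: s4' by simp]
            rw [insertTab_bump (s1 ++ e :: s3') g s4' rest c (lt_app B1c (lt_cons hec B3'c)) hcg]
            rw [show (s1 ++ e :: s3') ++ c :: s4' = s1 ++ e :: (s3' ++ c :: s4') by simp]
            rw [insertTab_bump s1 e (s3' ++ c :: s4') (insertTab rest g) a h1 hae]
            rcases s3' with _ | ⟨f, s3''⟩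
            · rw [show (s1 ++ a :: ([] : List ℕ)) ++ c :: s4' = (s1 ++ [a]) ++ c :: s4' by simp]
              rw [insertTab_bump (s1 ++ [a]) c s4' (insertTab (insertTab rest e) g) b
                (lt_app B1b (lt_cons hab lt_nil)) hbc]
              rw [show s1 ++ a :: (([] : List ℕ) ++ c :: s4') = (s1 ++ [a]) ++ c :: s4' by simp]
              rw [insertTab_bump (s1 ++ [a]) c s4' (insertTab (insertTab rest g) e) b
                (lt_app B1b (lt_cons hab lt_nil)) hbc]
              have hIH := (IH hrestsort hndrest e c g hec hcg (hdisj e (by simp)) hcrest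
                (hdisj g (by simp))).2
              have hIH' : insertTab (insertTab (insertTab rest e) g) c
                  = insertTab (insertTab (insertTab rest g) e) c := hIH
              rw [hIH']
            · have hbf : b < f := B3'b f (List.mem_cons_self)
              have hef : e < f := List.rel_of_pairwise_cons hs3 (List.mem_cons_self)
              rw [show (s1 ++ a :: (f :: s3'')) ++ c :: s4' = (s1 ++ [a]) ++ f :: (s3'' ++ c :: s4') by simp]
              rw [insertTab_bump (s1 ++ [a]) f (s3'' ++ c :: s4') (insertTab (insertTab rest e) g) b
                (lt_app B1b (lt_cons hab lt_nil)) hbf]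
              rw [show s1 ++ a :: ((f :: s3'') ++ c :: s4') = (s1 ++ [a]) ++ f :: (s3'' ++ c :: s4') by simp]
              have hfc : f < c := B3'c f (List.mem_cons_self)
              rw [insertTab_bump (s1 ++ [a]) f (s3'' ++ c :: s4') (insertTab (insertTab rest g) e) b
                (lt_app B1b (lt_cons hab lt_nil)) hbf]
              have hIH := (IH hrestsort hndrest e f g hef (by omega) (hdisj e (by simp))
                (hdisj f (by simp)) (hdisj g (by simp))).2
              have hIH' : insertTab (insertTab (insertTab rest e) g) f
                  = insertTab (insertTab (insertTab rest g) e) f := hIH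
              rw [hIH']
      · -- s2 = d :: s2'
        have had : a < d := B2a d (List.mem_cons_self)
        have hdb : d < b := B2b d (List.mem_cons_self)
        have B2'b : ∀ x ∈ s2', x < b := fun x h => B2b x (List.mem_cons_of_mem _ h)
        have B2'c : ∀ x ∈ s2', x < c := fun x h => B2c x (List.mem_cons_of_mem _ h)
        have PBnd : ∀ x ∈ s1 ++ a :: s2', x < b := lt_app B1b (lt_cons hab B2'b)
        rw [show s1 ++ ((d :: s2') ++ (s3 ++ s4)) = s1 ++ d :: (s2' ++ (s3 ++ s4)) by simp]
        rw [insertTab_bump s1 d (s2' ++ (s3 ++ s4)) rest a h1 had]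
        rcases s4 with _ | ⟨g, s4'⟩
        · -- s4 = []
          rw [insertTab_app (s1 ++ a :: (s2' ++ (s3 ++ ([] : List ℕ)))) (insertTab rest d) c
            (lt_app B1c (lt_cons hac (lt_app B2'c (lt_app B3c lt_nil))))]
          rw [insertTab_app (s1 ++ d :: (s2' ++ (s3 ++ ([] : List ℕ)))) rest c
            (lt_app B1c (lt_cons (by omega) (lt_app B2'c (lt_app B3c lt_nil))))]
          rw [show (s1 ++ d :: (s2' ++ (s3 ++ ([] : List ℕ)))) ++ [c]
              = s1 ++ d :: ((s2' ++ (s3 ++ ([] : List ℕ))) ++ [c]) by simp]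
          rw [insertTab_bump s1 d ((s2' ++ (s3 ++ ([] : List ℕ))) ++ [c]) rest a h1 had]
          rcases s3 with _ | ⟨e, s3'⟩
          · rw [show (s1 ++ a :: (s2' ++ (([] : List ℕ) ++ ([] : List ℕ)))) ++ [c] = (s1 ++ a :: s2') ++ c :: [] by simp]
            rw [show s1 ++ a :: ((s2' ++ (([] : List ℕ) ++ ([] : List ℕ))) ++ [c]) = (s1 ++ a :: s2') ++ c :: [] by simp]
          · have hbe : b < e := B3b e (List.mem_cons_self)
            rw [show (s1 ++ a :: (s2' ++ ((e :: s3') ++ ([] : List ℕ)))) ++ [c]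
                = (s1 ++ a :: s2') ++ e :: (s3' ++ [c]) by simp]
            rw [show s1 ++ a :: ((s2' ++ ((e :: s3') ++ ([] : List ℕ))) ++ [c])
                = (s1 ++ a :: s2') ++ e :: (s3' ++ [c]) by simp]
        · -- s4 = g :: s4'
          have hcg : c < g := B4c g (List.mem_cons_self)
          rw [show s1 ++ a :: (s2' ++ (s3 ++ g :: s4')) = (s1 ++ a :: (s2' ++ s3)) ++ g :: s4' by simp]
          rw [insertTab_bump (s1 ++ a :: (s2' ++ s3)) g s4' (insertTab rest d) c
            (lt_app B1c (lt_cons hac (lt_app B2'c B3c))) hcg]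
          rw [show s1 ++ d :: (s2' ++ (s3 ++ g :: s4')) = (s1 ++ d :: (s2' ++ s3)) ++ g :: s4' by simp]
          rw [insertTab_bump (s1 ++ d :: (s2' ++ s3)) g s4' rest c
            (lt_app B1c (lt_cons (by omega) (lt_app B2'c B3c))) hcg]
          rw [show (s1 ++ d :: (s2' ++ s3)) ++ c :: s4' = s1 ++ d :: ((s2' ++ s3) ++ c :: s4') by simp]
          rw [insertTab_bump s1 d ((s2' ++ s3) ++ c :: s4') (insertTab rest g) a h1 had]
          rcases s3 with _ | ⟨e, s3'⟩
          · rw [show (s1 ++ a :: (s2' ++ ([] : List ℕ))) ++ c :: s4' = (s1 ++ a :: s2') ++ c :: s4' by simp]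
            rw [insertTab_bump (s1 ++ a :: s2') c s4' (insertTab (insertTab rest d) g) b PBnd hbc]
            rw [show s1 ++ a :: ((s2' ++ ([] : List ℕ)) ++ c :: s4') = (s1 ++ a :: s2') ++ c :: s4' by simp]
            rw [insertTab_bump (s1 ++ a :: s2') c s4' (insertTab (insertTab rest g) d) b PBnd hbc]
            have hIH := (IH hrestsort hndrest d c g (by omega) hcg (hdisj d (by simp)) hcrest
              (hdisj g (by simp))).2
            have hIH' : insertTab (insertTab (insertTab rest d) g) c
                = insertTab (insertTab (insertTab rest g) d) c := hIH
            rw [hIH']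
          · have hbe : b < e := B3b e (List.mem_cons_self)
            have hec : e < c := B3c e (List.mem_cons_self)
            rw [show (s1 ++ a :: (s2' ++ (e :: s3'))) ++ c :: s4'
                = (s1 ++ a :: s2') ++ e :: (s3' ++ c :: s4') by simp]
            rw [insertTab_bump (s1 ++ a :: s2') e (s3' ++ c :: s4') (insertTab (insertTab rest d) g) b PBnd hbe]
            rw [show s1 ++ a :: ((s2' ++ (e :: s3')) ++ c :: s4')
                = (s1 ++ a :: s2') ++ e :: (s3' ++ c :: s4') by simp]
            rw [insertTab_bump (s1 ++ a :: s2') e (s3' ++ c :: s4') (insertTab (insertTab rest g) d) b PBnd hbe]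
            have hIH := (IH hrestsort hndrest d e g (by omega) (by omega) (hdisj d (by simp))
              (hdisj e (by simp)) (hdisj g (by simp))).2
            have hIH' : insertTab (insertTab (insertTab rest d) g) e
                = insertTab (insertTab (insertTab rest g) d) e := hIH
            rw [hIH']

/-! ### validity of tableaux -/

lemma insertTab_valid (T : List (List ℕ)) (hsort : ∀ row ∈ T, row.Pairwise (· < ·))
    (hnd : T.flatten.Nodup) (k : ℕ) (hk : k ∉ T.flatten) :
    (∀ row ∈ insertTab T k, row.Pairwise (· < ·)) ∧
      (insertTab T k).flatten.Perm (k :: T.flatten) := by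
  induction T generalizing k with
  | nil =>
    constructor
    · intro row hrow
      simp only [insertTab, List.mem_singleton] at hrow
      simp [hrow, List.Pairwise]
    · simp [insertTab]
  | cons r rest IH =>
    have hrs : r.Pairwise (· < ·) := hsort r (List.mem_cons_self)
    have hrestsort : ∀ row ∈ rest, row.Pairwise (· < ·) := fun row h => hsort row (List.mem_cons_of_mem _ h)
    rw [List.flatten_cons] at hnd hk
    rcases List.nodup_append'.mp hnd with ⟨hndr, hndrest, hdisj0⟩
    have hkr : k ∉ r := fun h => hk (List.mem_append_left _ h)
    obtain ⟨s, t, hr, hs, ht⟩ := sorted_decomp r k hrs hkr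
    subst hr
    have hss : s.Pairwise (· < ·) := (List.pairwise_append.mp hrs).1
    have hts : t.Pairwise (· < ·) := (List.pairwise_append.mp hrs).2.1
    rcases t with _ | ⟨m, t'⟩
    · rw [show (s ++ ([] : List ℕ)) = s by simp] at *
      rw [insertTab_app s rest k hs]
      constructor
      · intro row hrow
        rcases List.mem_cons.mp hrow with rfl | h
        · refine List.pairwise_append.mpr ⟨hss, by simp, ?_⟩
          intro x hx y hy
          rw [List.mem_singleton] at hy
          subst hy; exact hs x hx
        · exact hrestsort row h
      · rw [List.flatten_cons]
        have : (s ++ [k]) ++ rest.flatten = s ++ k :: rest.flatten := by simp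
        rw [this]
        exact List.perm_middle.trans (by simp)
    · have hmr : k < m := ht m (List.mem_cons_self)
      have hmrest : m ∉ rest.flatten := fun h => hdisj0 (List.mem_append_right _ (List.mem_cons_self)) h
      rw [insertTab_bump s m t' rest k hs hmr]
      obtain ⟨IH1, IH2⟩ := IH hrestsort hndrest m hmrest
      constructor
      · intro row hrow
        rcases List.mem_cons.mp hrow with rfl | h
        · refine List.pairwise_append.mpr ⟨hss, ?_, ?_⟩
          · refine List.pairwise_cons.mpr ⟨?_, ?_⟩
            · intro y hy
              exact lt_trans hmr (List.rel_of_pairwise_cons hts hy)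
            · exact (List.pairwise_cons.mp hts).2
          · intro x hx y hy
            rcases List.mem_cons.mp hy with rfl | hy'
            · exact hs x hx
            · exact lt_trans (hs x hx) (lt_trans hmr (List.rel_of_pairwise_cons hts hy'))
        · exact IH1 row h
      · rw [List.flatten_cons]
        have h2 : ((s ++ k :: t') ++ (insertTab rest m).flatten).Perm
            ((s ++ k :: t') ++ (m :: rest.flatten)) := List.Perm.append_left _ IH2
        refine h2.trans ?_
        refine List.perm_iff_count.mpr fun x => ?_
        simp [List.count_append, List.count_cons]
        ring

lemma insertWord_valid : ∀ (l : List ℕ) (T : List (List ℕ)),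
    (∀ row ∈ T, row.Pairwise (· < ·)) → T.flatten.Nodup →
    (∀ x ∈ l, x ∉ T.flatten) → l.Nodup →
    (∀ row ∈ insertWord T l, row.Pairwise (· < ·)) ∧
      (insertWord T l).flatten.Perm (T.flatten ++ l) := by
  intro l
  induction l with
  | nil => intro T h1 h2 _ _; exact ⟨h1, by simp [insertWord]⟩
  | cons k l IH =>
    intro T h1 h2 h3 h4
    have hk : k ∉ T.flatten := h3 k (List.mem_cons_self)
    obtain ⟨v1, v2⟩ := insertTab_valid T h1 h2 k hk
    have hnd' : (insertTab T k).flatten.Nodup := by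
      refine v2.nodup_iff.mpr ?_
      exact List.nodup_cons.mpr ⟨hk, h2⟩
    have h3' : ∀ x ∈ l, x ∉ (insertTab T k).flatten := by
      intro x hx hmem
      have := v2.mem_iff.mp hmem
      rcases List.mem_cons.mp this with rfl | h
      · exact (List.nodup_cons.mp h4).1 hx
      · exact h3 x (List.mem_cons_of_mem _ hx) h
    obtain ⟨w1, w2⟩ := IH (insertTab T k) v1 hnd' h3' (List.nodup_cons.mp h4).2
    refine ⟨w1, ?_⟩
    have : insertWord T (k :: l) = insertWord (insertTab T k) l := rfl
    rw [this]
    refine w2.trans ?_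
    refine (List.Perm.append_right l v2).trans ?_
    have : (k :: T.flatten) ++ l = k :: (T.flatten ++ l) := rfl
    rw [this]
    exact List.perm_middle.symm

lemma Ptab_valid (l : List ℕ) (h : l.Nodup) :
    (∀ row ∈ Ptab l, row.Pairwise (· < ·)) ∧ (Ptab l).flatten.Perm l := by
  obtain ⟨w1, w2⟩ := insertWord_valid l [] (by simp) (by simp) (by simp) h
  exact ⟨w1, w2⟩

/-! ### list-level Knuth moves -/

def LMove (w w' : List ℕ) : Prop :=
  ∃ u v : List ℕ, ∃ a b c : ℕ, a < b ∧ b < c ∧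
    ((w = u ++ [b, a, c] ++ v ∧ w' = u ++ [b, c, a] ++ v) ∨
     (w = u ++ [b, c, a] ++ v ∧ w' = u ++ [b, a, c] ++ v) ∨
     (w = u ++ [a, c, b] ++ v ∧ w' = u ++ [c, a, b] ++ v) ∨
     (w = u ++ [c, a, b] ++ v ∧ w' = u ++ [a, c, b] ++ v))

lemma LMove.symm {w w' : List ℕ} (h : LMove w w') : LMove w' w := by
  obtain ⟨u, v, a, b, c, h1, h2, h3⟩ := h
  exact ⟨u, v, a, b, c, h1, h2, by tauto⟩

lemma LMove.perm {w w' : List ℕ} (h : LMove w w') : w.Perm w' := by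
  obtain ⟨u, v, a, b, c, _, _, h3⟩ := h
  rcases h3 with ⟨rfl, rfl⟩ | ⟨rfl, rfl⟩ | ⟨rfl, rfl⟩ | ⟨rfl, rfl⟩ <;>
    · refine List.Perm.append_right v (List.Perm.append_left u ?_)
      refine List.perm_iff_count.mpr fun x => ?_
      simp [List.count_cons]
      ring

lemma Ptab_decomp (u M v : List ℕ) :
    Ptab (u ++ M ++ v) = insertWord (insertWord (Ptab u) M) v := by
  rw [Ptab_eq_insertWord, insertWord_append, insertWord_append, ← Ptab_eq_insertWord]

lemma LMove_Ptab {w w' : List ℕ} (h : LMove w w') (hnd : w.Nodup) : Ptab w = Ptab w' := by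
  obtain ⟨u, v, a, b, c, hab, hbc, h3⟩ := h
  have prep : ∀ M : List ℕ, w = u ++ M ++ v → a ∈ M → b ∈ M → c ∈ M →
      (insertWord (Ptab u) [b, a, c] = insertWord (Ptab u) [b, c, a]) ∧
      (insertWord (Ptab u) [a, c, b] = insertWord (Ptab u) [c, a, b]) := by
    intro M hw haM hbM hcM
    subst hw
    have hnd' : (u ++ (M ++ v)).Nodup := by simpa [List.append_assoc] using hnd
    rcases List.nodup_append'.mp hnd' with ⟨hndu, _, hdisj⟩
    have haU : a ∉ u := fun h => hdisj h (List.mem_append_left _ haM)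
    have hbU : b ∉ u := fun h => hdisj h (List.mem_append_left _ hbM)
    have hcU : c ∉ u := fun h => hdisj h (List.mem_append_left _ hcM)
    obtain ⟨hT1, hT2⟩ := Ptab_valid u hndu
    have hndT : (Ptab u).flatten.Nodup := hT2.nodup_iff.mpr hndu
    exact keyA (Ptab u) hT1 hndT a b c hab hbc
      (fun h => haU (hT2.mem_iff.mp h)) (fun h => hbU (hT2.mem_iff.mp h))
      (fun h => hcU (hT2.mem_iff.mp h))
  rcases h3 with ⟨hw, hw'⟩ | ⟨hw, hw'⟩ | ⟨hw, hw'⟩ | ⟨hw, hw'⟩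
  · have K := (prep [b, a, c] hw (by simp) (by simp) (by simp)).1
    rw [hw, hw', Ptab_decomp, Ptab_decomp, K]
  · have K := (prep [b, c, a] hw (by simp) (by simp) (by simp)).1
    rw [hw, hw', Ptab_decomp, Ptab_decomp, K]
  · have K := (prep [a, c, b] hw (by simp) (by simp) (by simp)).2
    rw [hw, hw', Ptab_decomp, Ptab_decomp, K]
  · have K := (prep [c, a, b] hw (by simp) (by simp) (by simp)).2
    rw [hw, hw', Ptab_decomp, Ptab_decomp, K]

/-! ### Knuth equivalence on words -/

def LK : List ℕ → List ℕ → Prop := Relation.ReflTransGen LMove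

lemma LMove_context {w w' : List ℕ} (x y : List ℕ) (h : LMove w w') :
    LMove (x ++ w ++ y) (x ++ w' ++ y) := by
  obtain ⟨u, v, a, b, c, h1, h2, h3⟩ := h
  refine ⟨x ++ u, v ++ y, a, b, c, h1, h2, ?_⟩
  rcases h3 with ⟨rfl, rfl⟩ | ⟨rfl, rfl⟩ | ⟨rfl, rfl⟩ | ⟨rfl, rfl⟩
  · exact Or.inl ⟨by simp, by simp⟩
  · exact Or.inr (Or.inl ⟨by simp, by simp⟩)
  · exact Or.inr (Or.inr (Or.inl ⟨by simp, by simp⟩))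
  · exact Or.inr (Or.inr (Or.inr ⟨by simp, by simp⟩))

lemma LK_context {w w' : List ℕ} (x y : List ℕ) (h : LK w w') :
    LK (x ++ w ++ y) (x ++ w' ++ y) :=
  Relation.ReflTransGen.lift (fun l => x ++ l ++ y) (fun _ _ hb => LMove_context x y hb) _ _ h

lemma LK_cons {w w' : List ℕ} (x : ℕ) (h : LK w w') : LK (x :: w) (x :: w') := by
  have := LK_context [x] [] h
  simpa using this

lemma LK_perm {w w' : List ℕ} (h : LK w w') : w.Perm w' := by
  induction h with
  | refl => exact List.Perm.refl _
  | tail _ h2 ih => exact ih.trans h2.perm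

lemma LK_symm {w w' : List ℕ} (h : LK w w') : LK w' w := by
  induction h with
  | refl => exact Relation.ReflTransGen.refl
  | tail _ h2 ih => exact Relation.ReflTransGen.trans (Relation.ReflTransGen.single h2.symm) ih

lemma moveleft (k : ℕ) : ∀ (t : List ℕ) (p : ℕ) (X : List ℕ), k < p →
    List.Pairwise (· < ·) (p :: t) →
    LK (X ++ (p :: t) ++ [k]) (X ++ p :: k :: t) := by
  intro t
  induction t with
  | nil =>
    intro p X _ _
    rw [show X ++ [p] ++ [k] = X ++ p :: k :: [] by simp]
    exact Relation.ReflTransGen.refl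
  | cons q t' IHt =>
    intro p X hkp hsor
    have hpq : p < q := List.rel_of_pairwise_cons hsor (List.mem_cons_self)
    have step1 : LK ((X ++ [p]) ++ (q :: t') ++ [k]) ((X ++ [p]) ++ q :: k :: t') :=
      IHt q (X ++ [p]) (lt_trans hkp hpq) hsor.of_cons
    have move : LMove ((X ++ [p]) ++ q :: k :: t') (X ++ p :: k :: q :: t') := by
      refine ⟨X, t', k, p, q, hkp, hpq, Or.inr (Or.inl ⟨by simp, by simp⟩)⟩
    refine Relation.ReflTransGen.trans ?_ (Relation.ReflTransGen.single move)
    rw [show X ++ (p :: q :: t') ++ [k] = (X ++ [p]) ++ (q :: t') ++ [k] by simp]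
    exact step1

lemma movem : ∀ (s : List ℕ) (Y : List ℕ) (z w : ℕ), s.Pairwise (· < ·) →
    (∀ x ∈ s, x < z) → z < w →
    LK (s ++ w :: z :: Y) (w :: (s ++ z :: Y)) := by
  intro s
  induction s with
  | nil => intro Y z w _ _ _; exact Relation.ReflTransGen.refl
  | cons x s' IHs =>
    intro Y z w hsor hbnd hzw
    have hxz : x < z := hbnd x (List.mem_cons_self)
    have step1 : LK (x :: (s' ++ w :: z :: Y)) (x :: (w :: (s' ++ z :: Y))) :=
      LK_cons x (IHs Y z w hsor.of_cons (fun u hu => hbnd u (List.mem_cons_of_mem _ hu)) hzw)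
    have move : LMove (x :: w :: (s' ++ z :: Y)) (w :: x :: (s' ++ z :: Y)) := by
      rcases s' with _ | ⟨q, s''⟩
      · exact ⟨[], Y, x, z, w, hxz, hzw, Or.inr (Or.inr (Or.inl ⟨by simp, by simp⟩))⟩
      · have hxq : x < q := List.rel_of_pairwise_cons hsor (by simp)
        have hqz : q < z := hbnd q (by simp)
        exact ⟨[], s'' ++ z :: Y, x, q, w, hxq, by omega,
          Or.inr (Or.inr (Or.inl ⟨by simp, by simp⟩))⟩
    refine Relation.ReflTransGen.trans ?_ (Relation.ReflTransGen.single move)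
    rw [show (x :: s') ++ w :: z :: Y = x :: (s' ++ w :: z :: Y) by simp]
    exact step1

lemma rowmove (s t' : List ℕ) (k m : ℕ) (hss : s.Pairwise (· < ·)) (hs : ∀ x ∈ s, x < k)
    (hkm : k < m) (hts : List.Pairwise (· < ·) (m :: t')) :
    LK ((s ++ m :: t') ++ [k]) (m :: (s ++ k :: t')) := by
  have step1 : LK (s ++ (m :: t') ++ [k]) (s ++ m :: k :: t') := moveleft k t' m s hkm hts
  have step2 : LK (s ++ m :: k :: t') (m :: (s ++ k :: t')) :=
    movem s t' k m hss hs hkm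
  refine Relation.ReflTransGen.trans ?_ step2
  rw [show (s ++ m :: t') ++ [k] = s ++ (m :: t') ++ [k] by simp]
  exact step1

/-! ### reading word -/

def readT (T : List (List ℕ)) : List ℕ := T.reverse.flatten

lemma readT_cons (r : List ℕ) (rest : List (List ℕ)) :
    readT (r :: rest) = readT rest ++ r := by
  simp [readT]

lemma readT_insert : ∀ (T : List (List ℕ)) (k : ℕ), (∀ row ∈ T, row.Pairwise (· < ·)) →
    T.flatten.Nodup → k ∉ T.flatten →
    LK (readT T ++ [k]) (readT (insertTab T k)) := by
  intro T
  induction T with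
  | nil =>
    intro k _ _ _
    rw [show readT ([] : List (List ℕ)) ++ [k] = readT (insertTab [] k) by simp [readT, insertTab]]
    exact Relation.ReflTransGen.refl
  | cons r rest IH =>
    intro k hsort hnd hk
    have hrs : r.Pairwise (· < ·) := hsort r (List.mem_cons_self)
    have hrestsort : ∀ row ∈ rest, row.Pairwise (· < ·) := fun row h => hsort row (List.mem_cons_of_mem _ h)
    rw [List.flatten_cons] at hnd hk
    rcases List.nodup_append'.mp hnd with ⟨hndr, hndrest, hdisj0⟩
    have hkr : k ∉ r := fun h => hk (List.mem_append_left _ h)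
    obtain ⟨s, t, hr, hs, ht⟩ := sorted_decomp r k hrs hkr
    subst hr
    have hss : s.Pairwise (· < ·) := (List.pairwise_append.mp hrs).1
    have hts : t.Pairwise (· < ·) := (List.pairwise_append.mp hrs).2.1
    rcases t with _ | ⟨m, t'⟩
    · rw [show (s ++ ([] : List ℕ)) = s by simp] at *
      rw [insertTab_app s rest k hs, readT_cons, readT_cons]
      rw [show (readT rest ++ s) ++ [k] = readT rest ++ (s ++ [k]) by simp]
      exact Relation.ReflTransGen.refl
    · have hkm : k < m := ht m (List.mem_cons_self)
      have hmrest : m ∉ rest.flatten := fun h =>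
        hdisj0 (List.mem_append_right _ (List.mem_cons_self)) h
      rw [insertTab_bump s m t' rest k hs hkm, readT_cons, readT_cons]
      have step1 : LK (readT rest ++ ((s ++ m :: t') ++ [k]) ++ [])
          (readT rest ++ (m :: (s ++ k :: t')) ++ []) :=
        LK_context (readT rest) [] (rowmove s t' k m hss hs hkm hts)
      have step2 : LK ([] ++ (readT rest ++ [m]) ++ (s ++ k :: t'))
          ([] ++ readT (insertTab rest m) ++ (s ++ k :: t')) :=
        LK_context [] (s ++ k :: t') (IH m hrestsort hndrest hmrest)
      refine Relation.ReflTransGen.trans (b := readT rest ++ (m :: (s ++ k :: t'))) ?_ ?_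
      · rw [show (readT rest ++ (s ++ m :: t')) ++ [k]
            = readT rest ++ ((s ++ m :: t') ++ [k]) ++ [] by simp]
        rw [show readT rest ++ (m :: (s ++ k :: t'))
            = readT rest ++ (m :: (s ++ k :: t')) ++ [] by simp]
        exact step1
      · rw [show readT rest ++ (m :: (s ++ k :: t'))
            = [] ++ (readT rest ++ [m]) ++ (s ++ k :: t') by simp]
        rw [show readT (insertTab rest m) ++ (s ++ k :: t')
            = [] ++ readT (insertTab rest m) ++ (s ++ k :: t') by simp]
        exact step2

lemma word_to_read (l : List ℕ) (h : l.Nodup) : LK l (readT (Ptab l)) := by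
  induction l using List.reverseRecOn with
  | nil =>
    rw [show readT (Ptab []) = [] by simp [readT, Ptab]]
    exact Relation.ReflTransGen.refl
  | append_singleton l k IHl =>
    have hl : l.Nodup := (List.nodup_append'.mp h).1
    have hkl : k ∉ l := by
      intro hm
      have := (List.nodup_append'.mp h).2.2
      exact this hm (List.mem_singleton_self k)
    have step1 : LK (l ++ [k]) (readT (Ptab l) ++ [k]) := by
      have := LK_context [] [k] (IHl hl)
      simpa using this
    have step2 : LK (readT (Ptab l) ++ [k]) (readT (insertTab (Ptab l) k)) := by
      obtain ⟨hT1, hT2⟩ := Ptab_valid l hl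
      exact readT_insert (Ptab l) k hT1 (hT2.nodup_iff.mpr hl) (fun hmem => hkl (hT2.mem_iff.mp hmem))
    have hPt : Ptab (l ++ [k]) = insertTab (Ptab l) k := by
      rw [Ptab_eq_insertWord, insertWord_append, ← Ptab_eq_insertWord]
      rfl
    rw [hPt]
    exact Relation.ReflTransGen.trans step1 step2

lemma LK_Ptab {w w' : List ℕ} (h : LK w w') (hnd : w.Nodup) : Ptab w = Ptab w' := by
  induction h with
  | refl => rfl
  | tail h1 h2 ih =>
    have hb : _root_.List.Nodup _ := ((LK_perm h1).nodup_iff).mp hnd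
    exact ih.trans (LMove_Ptab h2 hb)

lemma Ptab_LK {w w' : List ℕ} (hnd : w.Nodup) (hnd' : w'.Nodup) (h : Ptab w = Ptab w') :
    LK w w' := by
  refine Relation.ReflTransGen.trans (word_to_read w hnd) ?_
  rw [h]
  exact LK_symm (word_to_read w' hnd')

/-! ### permutation words -/

lemma permWord_length {n : ℕ} (w : Equiv.Perm (Fin n)) : (permWord w).length = n := by
  simp [permWord]

lemma permWord_getElem {n : ℕ} (w : Equiv.Perm (Fin n)) (i : ℕ) (h : i < n)
    (h' : i < (permWord w).length) : (permWord w)[i] = (w ⟨i, h⟩ : ℕ) + 1 := by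
  simp [permWord]

lemma permWord_nodup {n : ℕ} (w : Equiv.Perm (Fin n)) : (permWord w).Nodup := by
  refine List.Nodup.map ?_ (List.nodup_finRange n)
  intro i j hij
  simp only [add_left_inj] at hij
  exact w.injective (Fin.ext hij)

lemma permWord_inj {n : ℕ} {w w' : Equiv.Perm (Fin n)} (h : permWord w = permWord w') : w = w' := by
  ext i
  have h1 := permWord_getElem w i i.isLt (by simp [permWord_length])
  have h2 := permWord_getElem w' i i.isLt (by simp [permWord_length])
  simp only [h] at h1
  have h3 := h1.symm.trans h2
  simp only [Fin.eta] at h3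
  omega

lemma decomp3 (L : List ℕ) (q : ℕ) (h : q + 3 ≤ L.length) :
    L = L.take q ++ [L[q]'(by omega), L[q+1]'(by omega), L[q+2]'(by omega)] ++ L.drop (q+3) := by
  rw [List.append_assoc]
  conv_lhs => rw [← List.take_append_drop q L]
  congr 1
  rw [List.drop_eq_getElem_cons (by omega : q < L.length)]
  congr 1
  rw [List.drop_eq_getElem_cons (by omega : q + 1 < L.length)]
  congr 1
  rw [List.drop_eq_getElem_cons (by omega : q + 2 < L.length)]
  simp [show q + 1 + 1 = q + 2 by omega, show q + 2 + 1 = q + 3 by omega]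

lemma get_mid (u v : List ℕ) (p q r : ℕ) (j : ℕ) (hj : j < 3)
    (h : u.length + j < (u ++ [p, q, r] ++ v).length) :
    (u ++ [p, q, r] ++ v)[u.length + j] = [p, q, r][j]'(by simpa using hj) := by
  rw [List.getElem_append_left (by simp; omega)]
  rw [List.getElem_append_right (Nat.le_add_right _ _)]
  simp only [Nat.add_sub_cancel_left]

lemma outside_get (u M M' v : List ℕ) (hM : M.length = 3) (hM' : M'.length = 3) (j : ℕ)
    (hj : j < u.length ∨ u.length + 3 ≤ j) (h1 : j < (u ++ M ++ v).length)
    (h2 : j < (u ++ M' ++ v).length) :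
    (u ++ M ++ v)[j] = (u ++ M' ++ v)[j] := by
  rcases hj with hj | hj
  · rw [List.getElem_append_left (by simp; omega), List.getElem_append_left hj,
      List.getElem_append_left (by simp; omega), List.getElem_append_left hj]
  · rw [List.getElem_append_right (by simp; omega), List.getElem_append_right (by simp; omega)]
    congr 1
    simp [hM, hM']

lemma KnuthMove_LMove {n : ℕ} {x y : Equiv.Perm (Fin n)} (h : KnuthMove x y) :
    LMove (permWord x) (permWord y) := by
  obtain ⟨p, hp1, hp2, hmain⟩ := h
  obtain ⟨hagree, hpat⟩ := hmain
  have key : ∀ z : Equiv.Perm (Fin n),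
      permWord z = (permWord z).take (p-1) ++
        [(z ⟨p-1, by omega⟩ : ℕ)+1, (z ⟨p, by omega⟩ : ℕ)+1, (z ⟨p+1, hp2⟩ : ℕ)+1] ++
        (permWord z).drop (p+2) := by
    intro z
    have h3 : (p-1) + 3 ≤ (permWord z).length := by rw [permWord_length]; omega
    have dz := decomp3 (permWord z) (p-1) h3
    simp only [show p - 1 + 3 = p + 2 by omega] at dz
    rw [permWord_getElem z (p-1) (by omega), permWord_getElem z (p-1+1) (by omega),
        permWord_getElem z (p-1+2) (by omega)] at dz
    have e1 : (⟨p-1+1, by omega⟩ : Fin n) = (⟨p, by omega⟩ : Fin n) := Fin.ext (by simp; omega)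
    have e2 : (⟨p-1+2, by omega⟩ : Fin n) = (⟨p+1, hp2⟩ : Fin n) := Fin.ext (by simp; omega)
    rw [e1, e2] at dz
    exact dz
  have htake : (permWord x).take (p-1) = (permWord y).take (p-1) := by
    apply List.ext_getElem (by simp [permWord_length])
    intro j hj1 hj2
    have hjp : j < p - 1 := by simp [permWord_length] at hj1; omega
    rw [List.getElem_take, List.getElem_take]
    rw [permWord_getElem x j (by omega), permWord_getElem y j (by omega)]
    have := hagree ⟨j, by omega⟩ (Fin.ne_of_val_ne (by simp; omega))
      (Fin.ne_of_val_ne (by simp; omega)) (Fin.ne_of_val_ne (by simp; omega))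
    rw [this]
  have hdrop : (permWord x).drop (p+2) = (permWord y).drop (p+2) := by
    apply List.ext_getElem (by simp [permWord_length])
    intro j hj1 hj2
    have hjn : p + 2 + j < n := by simp [permWord_length] at hj1; omega
    rw [List.getElem_drop, List.getElem_drop]
    rw [permWord_getElem x (p+2+j) (by omega), permWord_getElem y (p+2+j) (by omega)]
    have := hagree ⟨p+2+j, by omega⟩ (Fin.ne_of_val_ne (by simp; omega))
      (Fin.ne_of_val_ne (by simp; omega)) (Fin.ne_of_val_ne (by simp; omega))
    rw [this]
  rcases hpat with ⟨e0, e1, e2, hlt | hlt⟩ | ⟨e0, e1, e2, hlt | hlt⟩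
  · -- x = (b,a,c), y = (b,c,a)
    have l1 := Fin.lt_def.mp hlt.1
    have l2 := Fin.lt_def.mp hlt.2
    refine ⟨(permWord x).take (p-1), (permWord x).drop (p+2),
      (x ⟨p, by omega⟩ : ℕ)+1, (x ⟨p-1, by omega⟩ : ℕ)+1, (x ⟨p+1, hp2⟩ : ℕ)+1,
      by omega, by omega, Or.inl ⟨key x, ?_⟩⟩
    rw [key y, ← htake, ← hdrop, e0, e1, e2]
  · -- x = (b,c,a), y = (b,a,c)
    have l1 := Fin.lt_def.mp hlt.1
    have l2 := Fin.lt_def.mp hlt.2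
    refine ⟨(permWord x).take (p-1), (permWord x).drop (p+2),
      (x ⟨p+1, hp2⟩ : ℕ)+1, (x ⟨p-1, by omega⟩ : ℕ)+1, (x ⟨p, by omega⟩ : ℕ)+1,
      by omega, by omega, Or.inr (Or.inl ⟨key x, ?_⟩)⟩
    rw [key y, ← htake, ← hdrop, e0, e1, e2]
  · -- x = (a,c,b), y = (c,a,b)
    have l1 := Fin.lt_def.mp hlt.1
    have l2 := Fin.lt_def.mp hlt.2
    refine ⟨(permWord x).take (p-1), (permWord x).drop (p+2),
      (x ⟨p-1, by omega⟩ : ℕ)+1, (x ⟨p+1, hp2⟩ : ℕ)+1, (x ⟨p, by omega⟩ : ℕ)+1,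
      by omega, by omega, Or.inr (Or.inr (Or.inl ⟨key x, ?_⟩))⟩
    rw [key y, ← htake, ← hdrop, e0, e1, e2]
  · -- x = (c,a,b), y = (a,c,b)
    have l1 := Fin.lt_def.mp hlt.1
    have l2 := Fin.lt_def.mp hlt.2
    refine ⟨(permWord x).take (p-1), (permWord x).drop (p+2),
      (x ⟨p, by omega⟩ : ℕ)+1, (x ⟨p+1, hp2⟩ : ℕ)+1, (x ⟨p-1, by omega⟩ : ℕ)+1,
      by omega, by omega, Or.inr (Or.inr (Or.inr ⟨key x, ?_⟩))⟩
    rw [key y, ← htake, ← hdrop, e0, e1, e2]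

lemma get_mid0 (u v : List ℕ) (p q r : ℕ) (h : u.length < (u ++ [p, q, r] ++ v).length) :
    (u ++ [p, q, r] ++ v)[u.length] = p := by
  rw [List.getElem_append_left (by simp)]
  rw [List.getElem_append_right (Nat.le_refl _)]
  simp

lemma get_mid1 (u v : List ℕ) (p q r : ℕ) (h : u.length + 1 < (u ++ [p, q, r] ++ v).length) :
    (u ++ [p, q, r] ++ v)[u.length + 1] = q := by
  rw [List.getElem_append_left (by simp)]
  rw [List.getElem_append_right (Nat.le_add_right _ _)]
  simp

lemma get_mid2 (u v : List ℕ) (p q r : ℕ) (h : u.length + 2 < (u ++ [p, q, r] ++ v).length) :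
    (u ++ [p, q, r] ++ v)[u.length + 2] = r := by
  rw [List.getElem_append_left (by simp)]
  rw [List.getElem_append_right (Nat.le_add_right _ _)]
  simp [Nat.add_sub_cancel_left]

lemma exists_perm_of_LMove {n : ℕ} (z : Equiv.Perm (Fin n)) (w' : List ℕ)
    (h : LMove (permWord z) w') :
    ∃ z' : Equiv.Perm (Fin n), permWord z' = w' ∧ KnuthMove z z' := by
  have hperm : (permWord z).Perm w' := h.perm
  have hlen : w'.length = n := by rw [← hperm.length_eq, permWord_length]
  have hmem : ∀ j (hj : j < w'.length), ∃ i : Fin n, w'[j] = (z i : ℕ) + 1 := by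
    intro j hj
    have hm : w'[j] ∈ permWord z := hperm.mem_iff.mpr (List.getElem_mem hj)
    obtain ⟨i, _, hi⟩ := List.mem_map.mp hm
    exact ⟨i, hi.symm⟩
  have hnd' : w'.Nodup := (hperm.nodup_iff).mp (permWord_nodup z)
  have hbound : ∀ (i : Fin n), w'[(i : ℕ)]'(by omega) - 1 < n := by
    intro i
    obtain ⟨i', hi'⟩ := hmem i (by omega)
    rw [hi']
    simpa using i'.isLt
  let f : Fin n → Fin n := fun i => ⟨w'[(i : ℕ)]'(by omega) - 1, hbound i⟩
  have hinj : Function.Injective f := by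
    intro i j hij
    simp only [f, Fin.mk.injEq] at hij
    obtain ⟨i', hi'⟩ := hmem i (by omega)
    obtain ⟨j', hj'⟩ := hmem j (by omega)
    have heq : w'[(i : ℕ)]'(by omega) = w'[(j : ℕ)]'(by omega) := by omega
    have := List.nodup_iff_injective_get.mp hnd' (a₁ := ⟨i, by omega⟩) (a₂ := ⟨j, by omega⟩)
      (by simpa [List.get_eq_getElem] using heq)
    exact Fin.ext (by simpa using congrArg Fin.val this)
  let z' : Equiv.Perm (Fin n) := Equiv.ofBijective f (Finite.injective_iff_bijective.mp hinj)
  have hz'val : ∀ (i : Fin n), (z' i : ℕ) = w'[(i : ℕ)]'(by omega) - 1 := fun i => rfl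
  have hge1 : ∀ j (hj : j < w'.length), 1 ≤ w'[j] := by
    intro j hj; obtain ⟨i, hi⟩ := hmem j hj; omega
  have hz'w : permWord z' = w' := by
    apply List.ext_getElem (by rw [permWord_length, hlen])
    intro j h1 h2
    rw [permWord_getElem z' j (by rwa [permWord_length] at h1)]
    have h3 := hz'val ⟨j, by rwa [permWord_length] at h1⟩
    have hg := hge1 j h2
    simp only [Fin.eta] at h3 ⊢
    omega
  refine ⟨z', hz'w, ?_⟩
  obtain ⟨u, v, a, b, c, hab, hbc, hcases⟩ := h
  have hn3 : u.length + 2 < n := by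
    rcases hcases with ⟨hw, _⟩ | ⟨hw, _⟩ | ⟨hw, _⟩ | ⟨hw, _⟩ <;>
      · have := congrArg List.length hw
        simp [permWord_length] at this
        omega
  have main : ∀ (A B C A' B' C' : ℕ),
      permWord z = u ++ [A, B, C] ++ v → w' = u ++ [A', B', C'] ++ v →
      ((z ⟨u.length, by omega⟩ : ℕ) + 1 = A ∧ (z ⟨u.length + 1, by omega⟩ : ℕ) + 1 = B ∧
       (z ⟨u.length + 2, by omega⟩ : ℕ) + 1 = C) ∧
      ((z' ⟨u.length, by omega⟩ : ℕ) + 1 = A' ∧ (z' ⟨u.length + 1, by omega⟩ : ℕ) + 1 = B' ∧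
       (z' ⟨u.length + 2, by omega⟩ : ℕ) + 1 = C') ∧
      (∀ j : Fin n, (j : ℕ) ≠ u.length → (j : ℕ) ≠ u.length + 1 → (j : ℕ) ≠ u.length + 2 →
        z j = z' j) := by
    intro A B C A' B' C' hw hw'
    refine ⟨?_, ?_, ?_⟩
    · refine ⟨?_, ?_, ?_⟩
      · have h1 := permWord_getElem z u.length (by omega) (by rw [permWord_length]; omega)
        simp only [hw] at h1
        rw [get_mid0 u v A B C] at h1
        exact h1.symm
      · have h1 := permWord_getElem z (u.length + 1) (by omega) (by rw [permWord_length]; omega)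
        simp only [hw] at h1
        rw [get_mid1 u v A B C] at h1
        exact h1.symm
      · have h1 := permWord_getElem z (u.length + 2) (by omega) (by rw [permWord_length]; omega)
        simp only [hw] at h1
        rw [get_mid2 u v A B C] at h1
        exact h1.symm
    · refine ⟨?_, ?_, ?_⟩
      · have h1 := permWord_getElem z' u.length (by omega) (by rw [permWord_length]; omega)
        simp only [hz'w, hw'] at h1
        rw [get_mid0 u v A' B' C'] at h1
        exact h1.symm
      · have h1 := permWord_getElem z' (u.length + 1) (by omega) (by rw [permWord_length]; omega)
        simp only [hz'w, hw'] at h1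
        rw [get_mid1 u v A' B' C'] at h1
        exact h1.symm
      · have h1 := permWord_getElem z' (u.length + 2) (by omega) (by rw [permWord_length]; omega)
        simp only [hz'w, hw'] at h1
        rw [get_mid2 u v A' B' C'] at h1
        exact h1.symm
    · intro j hj0 hj1 hj2
      have hjn : (j : ℕ) < n := j.isLt
      have e1 := permWord_getElem z j (by omega) (by rw [permWord_length]; omega)
      have e2 := permWord_getElem z' j (by omega) (by rw [permWord_length]; omega)
      simp only [hw] at e1
      simp only [hz'w, hw'] at e2
      have e3 : (u ++ [A, B, C] ++ v)[(j : ℕ)]'(by rw [← hw, permWord_length]; omega)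
          = (u ++ [A', B', C'] ++ v)[(j : ℕ)]'(by rw [← hw', hlen]; omega) := by
        apply outside_get u [A, B, C] [A', B', C'] v rfl rfl
        omega
      apply Fin.ext
      have e4 := e1.symm.trans (e3.trans e2)
      simp only [Fin.eta] at e4
      omega
  rcases hcases with ⟨hw, hw'⟩ | ⟨hw, hw'⟩ | ⟨hw, hw'⟩ | ⟨hw, hw'⟩
  · obtain ⟨⟨gz0, gz1, gz2⟩, ⟨gy0, gy1, gy2⟩, hagree⟩ := main b a c b c a hw hw'
    refine ⟨u.length + 1, by omega, by omega, ?_, ?_⟩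
    · intro j h0 h1 h2
      exact hagree j (fun e => h0 (Fin.ext (show (j : ℕ) = u.length + 1 - 1 by omega)))
        (fun e => h1 (Fin.ext (show (j : ℕ) = u.length + 1 by omega)))
        (fun e => h2 (Fin.ext (show (j : ℕ) = u.length + 1 + 1 by omega)))
    · exact Or.inl ⟨Fin.ext (show (z' ⟨u.length, by omega⟩ : ℕ) = (z ⟨u.length, by omega⟩ : ℕ) by omega),
        Fin.ext (show (z' ⟨u.length + 1, by omega⟩ : ℕ) = (z ⟨u.length + 2, by omega⟩ : ℕ) by omega),
        Fin.ext (show (z' ⟨u.length + 2, by omega⟩ : ℕ) = (z ⟨u.length + 1, by omega⟩ : ℕ) by omega),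
        Or.inl ⟨show (z ⟨u.length + 1, by omega⟩ : ℕ) < (z ⟨u.length, by omega⟩ : ℕ) by omega,
          show (z ⟨u.length, by omega⟩ : ℕ) < (z ⟨u.length + 2, by omega⟩ : ℕ) by omega⟩⟩
  · obtain ⟨⟨gz0, gz1, gz2⟩, ⟨gy0, gy1, gy2⟩, hagree⟩ := main b c a b a c hw hw'
    refine ⟨u.length + 1, by omega, by omega, ?_, ?_⟩
    · intro j h0 h1 h2
      exact hagree j (fun e => h0 (Fin.ext (show (j : ℕ) = u.length + 1 - 1 by omega)))
        (fun e => h1 (Fin.ext (show (j : ℕ) = u.length + 1 by omega)))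
        (fun e => h2 (Fin.ext (show (j : ℕ) = u.length + 1 + 1 by omega)))
    · exact Or.inl ⟨Fin.ext (show (z' ⟨u.length, by omega⟩ : ℕ) = (z ⟨u.length, by omega⟩ : ℕ) by omega),
        Fin.ext (show (z' ⟨u.length + 1, by omega⟩ : ℕ) = (z ⟨u.length + 2, by omega⟩ : ℕ) by omega),
        Fin.ext (show (z' ⟨u.length + 2, by omega⟩ : ℕ) = (z ⟨u.length + 1, by omega⟩ : ℕ) by omega),
        Or.inr ⟨show (z ⟨u.length + 2, by omega⟩ : ℕ) < (z ⟨u.length, by omega⟩ : ℕ) by omega,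
          show (z ⟨u.length, by omega⟩ : ℕ) < (z ⟨u.length + 1, by omega⟩ : ℕ) by omega⟩⟩
  · obtain ⟨⟨gz0, gz1, gz2⟩, ⟨gy0, gy1, gy2⟩, hagree⟩ := main a c b c a b hw hw'
    refine ⟨u.length + 1, by omega, by omega, ?_, ?_⟩
    · intro j h0 h1 h2
      exact hagree j (fun e => h0 (Fin.ext (show (j : ℕ) = u.length + 1 - 1 by omega)))
        (fun e => h1 (Fin.ext (show (j : ℕ) = u.length + 1 by omega)))
        (fun e => h2 (Fin.ext (show (j : ℕ) = u.length + 1 + 1 by omega)))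
    · exact Or.inr ⟨Fin.ext (show (z' ⟨u.length + 2, by omega⟩ : ℕ) = (z ⟨u.length + 2, by omega⟩ : ℕ) by omega),
        Fin.ext (show (z' ⟨u.length, by omega⟩ : ℕ) = (z ⟨u.length + 1, by omega⟩ : ℕ) by omega),
        Fin.ext (show (z' ⟨u.length + 1, by omega⟩ : ℕ) = (z ⟨u.length, by omega⟩ : ℕ) by omega),
        Or.inl ⟨show (z ⟨u.length, by omega⟩ : ℕ) < (z ⟨u.length + 2, by omega⟩ : ℕ) by omega,
          show (z ⟨u.length + 2, by omega⟩ : ℕ) < (z ⟨u.length + 1, by omega⟩ : ℕ) by omega⟩⟩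
  · obtain ⟨⟨gz0, gz1, gz2⟩, ⟨gy0, gy1, gy2⟩, hagree⟩ := main c a b a c b hw hw'
    refine ⟨u.length + 1, by omega, by omega, ?_, ?_⟩
    · intro j h0 h1 h2
      exact hagree j (fun e => h0 (Fin.ext (show (j : ℕ) = u.length + 1 - 1 by omega)))
        (fun e => h1 (Fin.ext (show (j : ℕ) = u.length + 1 by omega)))
        (fun e => h2 (Fin.ext (show (j : ℕ) = u.length + 1 + 1 by omega)))
    · exact Or.inr ⟨Fin.ext (show (z' ⟨u.length + 2, by omega⟩ : ℕ) = (z ⟨u.length + 2, by omega⟩ : ℕ) by omega),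
        Fin.ext (show (z' ⟨u.length, by omega⟩ : ℕ) = (z ⟨u.length + 1, by omega⟩ : ℕ) by omega),
        Fin.ext (show (z' ⟨u.length + 1, by omega⟩ : ℕ) = (z ⟨u.length, by omega⟩ : ℕ) by omega),
        Or.inr ⟨show (z ⟨u.length + 1, by omega⟩ : ℕ) < (z ⟨u.length + 2, by omega⟩ : ℕ) by omega,
          show (z ⟨u.length + 2, by omega⟩ : ℕ) < (z ⟨u.length, by omega⟩ : ℕ) by omega⟩⟩

lemma list_to_perm_chain {n : ℕ} (x : Equiv.Perm (Fin n)) :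
    ∀ w', LK (permWord x) w' →
      ∃ z', permWord z' = w' ∧ Relation.ReflTransGen KnuthMove x z' := by
  intro w' h
  induction h with
  | refl => exact ⟨x, rfl, Relation.ReflTransGen.refl⟩
  | tail h1 h2 ih =>
    obtain ⟨z1, hz1, hc⟩ := ih
    rw [← hz1] at h2
    obtain ⟨z2, hz2, hm⟩ := exists_perm_of_LMove z1 _ h2
    exact ⟨z2, hz2, hc.tail hm⟩

/-- Two permutations are Knuth equivalent (related by a finite sequence of
elementary Knuth transformations) if and only if they have the same RS insertion
tableau. -/
theorem stmt_12 {n : ℕ} (x y : Equiv.Perm (Fin n)) :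
    Relation.ReflTransGen KnuthMove x y ↔ Ptab (permWord x) = Ptab (permWord y) := by
  constructor
  · intro h
    induction h with
    | refl => rfl
    | tail _ h2 ih => exact ih.trans (LMove_Ptab (KnuthMove_LMove h2) (permWord_nodup _))
  · intro h
    have hLK : LK (permWord x) (permWord y) :=
      Ptab_LK (permWord_nodup x) (permWord_nodup y) h
    obtain ⟨z', hz', hc⟩ := list_to_perm_chain x (permWord y) hLK
    rwa [permWord_inj hz'] at hc
end

section
/- In the Hecke algebra of a Coxeter system, for any expression w̲ = (s_1,…,s_n) in S the Bott–Samelson element b_{s_1}b_{s_2}⋯b_{s_n} equals the sum over all subexpressions e of w̲ of v^{defect(e)} H_{(w̲^e)•}, where (w̲^e)• is the element of W expressed by the subexpression and defect(e) is the defect of the decorated 01-sequence. -/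
open LaurentPolynomial

variable {B W : Type*} [Group W] {M : CoxeterMatrix B}

lemma subProd_nil (cs : CoxeterSystem M W) : subProd cs [] = 1 := by
  simp [subProd]

lemma subProd_cons (cs : CoxeterSystem M W) (p : B × Bool) (l : List (B × Bool)) :
    subProd cs (p :: l) = (if p.2 then cs.simple p.1 else 1) * subProd cs l := by
  rcases p with ⟨i, b⟩
  cases b <;> simp [subProd, cs.wordProd_cons]

lemma mul_bs (cs : CoxeterSystem M W)
    {H : Type*} [Ring H] [Algebra (LaurentPolynomial ℤ) H]
    (std : Module.Basis W (LaurentPolynomial ℤ) H)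
    (hmul : ∀ a c : W, cs.length (a * c) = cs.length a + cs.length c →
      std a * std c = std (a * c))
    (hquad : ∀ i : B, std (cs.simple i) * std (cs.simple i) =
      (T (-1) - T 1 : LaurentPolynomial ℤ) • std (cs.simple i) + 1)
    (w : W) (i : B) :
    std w * (std (cs.simple i) + (T 1 : LaurentPolynomial ℤ) • (1 : H)) =
      std (w * cs.simple i) +
        (T (if cs.length w < cs.length (w * cs.simple i) then 1 else -1)
          : LaurentPolynomial ℤ) • std w := by
  rcases cs.length_mul_simple w i with h | h
  · rw [if_pos (by omega)]
    rw [mul_add, hmul w (cs.simple i) (by rw [cs.length_simple]; exact h),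
      mul_smul_comm, mul_one]
  · rw [if_neg (by omega)]
    have hu : std (w * cs.simple i) * std (cs.simple i) = std w := by
      have := hmul (w * cs.simple i) (cs.simple i)
        (by rw [mul_assoc, cs.simple_mul_simple_self, mul_one, cs.length_simple]; omega)
      rwa [mul_assoc, cs.simple_mul_simple_self, mul_one] at this
    have hw : std w * std (cs.simple i) =
        (T (-1) - T 1 : LaurentPolynomial ℤ) • std w + std (w * cs.simple i) := by
      calc std w * std (cs.simple i)
          = std (w * cs.simple i) * (std (cs.simple i) * std (cs.simple i)) := by
            rw [← mul_assoc, hu]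
        _ = (T (-1) - T 1 : LaurentPolynomial ℤ) • std w + std (w * cs.simple i) := by
            rw [hquad, mul_add, mul_one, mul_smul_comm, hu]
    rw [mul_add, hw, mul_smul_comm, mul_one]
    rw [sub_smul]
    abel

lemma key (cs : CoxeterSystem M W)
    {H : Type*} [Ring H] [Algebra (LaurentPolynomial ℤ) H]
    (std : Module.Basis W (LaurentPolynomial ℤ) H)
    (hmul : ∀ a c : W, cs.length (a * c) = cs.length a + cs.length c →
      std a * std c = std (a * c))
    (hquad : ∀ i : B, std (cs.simple i) * std (cs.simple i) =
      (T (-1) - T 1 : LaurentPolynomial ℤ) • std (cs.simple i) + 1)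
    (ω : List B) (w : W) :
    std w * (ω.map (fun i => std (cs.simple i) + (T 1 : LaurentPolynomial ℤ) • (1 : H))).prod =
      ∑ f : Fin ω.length → Bool,
        (T (defectAux cs w (ω.zip (List.ofFn f))) : LaurentPolynomial ℤ) •
          std (w * subProd cs (ω.zip (List.ofFn f))) := by
  induction ω generalizing w with
  | nil =>
    haveI : IsEmpty (Fin (List.length ([] : List B))) := Fin.isEmpty
    rw [Fintype.sum_unique]
    simp [defectAux, subProd]
  | cons i ω ih =>
    have reindex :
        (∑ f : Fin (i :: ω).length → Bool,
          (T (defectAux cs w ((i :: ω).zip (List.ofFn f))) : LaurentPolynomial ℤ) •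
            std (w * subProd cs ((i :: ω).zip (List.ofFn f)))) =
        ∑ p : Bool × (Fin ω.length → Bool),
          (T (defectAux cs w ((i :: ω).zip (List.ofFn (Fin.cons p.1 p.2))))
            : LaurentPolynomial ℤ) •
            std (w * subProd cs ((i :: ω).zip (List.ofFn (Fin.cons p.1 p.2)))) := by
      exact (Fintype.sum_equiv (Fin.consEquiv (fun _ : Fin (ω.length + 1) => Bool))
        _ _ (fun p => rfl)).symm
    have hofFn : ∀ (b : Bool) (g : Fin ω.length → Bool),
        List.ofFn (Fin.cons b g : Fin (ω.length + 1) → Bool) = b :: List.ofFn g := by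
      intro b g
      rw [List.ofFn_succ]
      simp
    rw [reindex, Fintype.sum_prod_type, Fintype.sum_bool]
    have hzip : ∀ (b : Bool) (g : Fin ω.length → Bool),
        (i :: ω).zip (List.ofFn (Fin.cons b g : Fin (ω.length + 1) → Bool)) =
          (i, b) :: ω.zip (List.ofFn g) := by
      intro b g; rw [hofFn]; rfl
    simp only [hzip]
    have htrue : (∑ g : Fin ω.length → Bool,
        (T (defectAux cs w ((i, true) :: ω.zip (List.ofFn g))) : LaurentPolynomial ℤ) •
          std (w * subProd cs ((i, true) :: ω.zip (List.ofFn g)))) =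
        std (w * cs.simple i) *
          (ω.map (fun j => std (cs.simple j) + (T 1 : LaurentPolynomial ℤ) • (1 : H))).prod := by
      rw [ih (w * cs.simple i)]
      refine Finset.sum_congr rfl fun g _ => ?_
      simp [defectAux, subProd_cons, mul_assoc]
    have hfalse : (∑ g : Fin ω.length → Bool,
        (T (defectAux cs w ((i, false) :: ω.zip (List.ofFn g))) : LaurentPolynomial ℤ) •
          std (w * subProd cs ((i, false) :: ω.zip (List.ofFn g)))) =
        (T (if cs.length w < cs.length (w * cs.simple i) then 1 else -1)
          : LaurentPolynomial ℤ) •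
        (std w *
          (ω.map (fun j => std (cs.simple j) + (T 1 : LaurentPolynomial ℤ) • (1 : H))).prod) := by
      rw [ih w, Finset.smul_sum]
      refine Finset.sum_congr rfl fun g _ => ?_
      simp only [defectAux, subProd_cons, if_false, Bool.false_eq_true, one_mul,
        smul_smul, ← T_add]
    rw [htrue, hfalse, List.map_cons, List.prod_cons, ← mul_assoc,
      mul_bs cs std hmul hquad w i, add_mul, smul_mul_assoc]

/-- For any expression `ω = (s₁, …, sₙ)` the Bott–Samelson element
`b_{s₁} ⋯ b_{sₙ}` (with `b_s = H_s + v`) equals `Σ_e v^{defect(e)} H_{(ω^e)•}`, the sum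
running over all subexpressions (01-sequences) `e` of `ω`. -/
theorem stmt_19 (cs : CoxeterSystem M W)
    {H : Type*} [Ring H] [Algebra (LaurentPolynomial ℤ) H]
    (std : Module.Basis W (LaurentPolynomial ℤ) H)
    (hone : std 1 = 1)
    (hmul : ∀ a c : W, cs.length (a * c) = cs.length a + cs.length c →
      std a * std c = std (a * c))
    (hquad : ∀ i : B, std (cs.simple i) * std (cs.simple i) =
      (T (-1) - T 1 : LaurentPolynomial ℤ) • std (cs.simple i) + 1)
    (ω : List B) :
    (ω.map (fun i => std (cs.simple i) + (T 1 : LaurentPolynomial ℤ) • (1 : H))).prod =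
      ∑ f : Fin ω.length → Bool,
        (T (defect cs ω (List.ofFn f)) : LaurentPolynomial ℤ) •
          std (subProd cs (ω.zip (List.ofFn f))) := by
  have := key cs std hmul hquad ω 1
  rw [hone, one_mul] at this
  rw [this]
  simp [defect]
end
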